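/- arXiv:1012.2643 — 9 statements merged into one kernel-verified Lean document; each statement's English description precedes it below -/
import Mathlib

section
/- Let G be an undirected graph on {1,…,m} with edge set E. If Σ₁ and Σ₂ are positive definite real m×m matrices such that (Σ₁)_{ij} = (Σ₂)_{ij} for all (i,j) ∈ E (including all diagonal entries), and both inverses satisfy (Σ₁⁻¹)_{ij} = 0 and (Σ₂⁻¹)_{ij} = 0 for every pair i ≠ j with (i,j) ∉ E, then Σ₁ = Σ₂. (Uniqueness part of Dempster's theorem: the MLE is the unique positive definite completion whose inverse vanishes on non-edges.) -/
open Matrix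
open scoped MatrixOrder

lemma my_trace_zero_of_posDef_posSemidef {n : Type*} [Fintype n] [DecidableEq n]
    {A B : Matrix n n ℝ} (hA : A.PosDef) (hB : B.PosSemidef)
    (h : (A * B).trace = 0) : B = 0 := by
  have hs2 : CFC.sqrt B * CFC.sqrt B = B := CFC.sqrt_mul_sqrt_self B hB.nonneg
  set s := CFC.sqrt B with hsdef
  have hsH : sᴴ = s := (CFC.sqrt_nonneg B).posSemidef.isHermitian
  have htr : (s * A * s).trace = 0 := by
    have : (s * A * s).trace = (A * B).trace := by
      rw [← hs2, ← Matrix.trace_mul_cycle, mul_assoc]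
    rw [this, h]
  have key : ∀ i, (s * A * s) i i = star (fun j => s j i) ⬝ᵥ A *ᵥ (fun j => s j i) := by
    intro i
    have : s * A * s = sᴴ * (A * s) := by rw [hsH, mul_assoc]
    rw [this]
    simp only [Matrix.mul_apply, Matrix.conjTranspose_apply, dotProduct, Matrix.mulVec,
      dotProduct, Pi.star_apply]
  have hnn : ∀ i, 0 ≤ (s * A * s) i i := fun i => by
    rw [key i]; exact hA.posSemidef.dotProduct_mulVec_nonneg _
  have hdiag0 : ∀ i, (s * A * s) i i = 0 := by
    intro i
    have := (Finset.sum_eq_zero_iff_of_nonneg (fun i _ => hnn i)).mp htr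
    exact this i (Finset.mem_univ i)
  have hcol : ∀ i, (fun j => s j i) = 0 := by
    intro i
    by_contra hx
    have := hA.dotProduct_mulVec_pos hx
    rw [← key i, hdiag0 i] at this
    exact lt_irrefl _ this
  have hs0 : s = 0 := by
    ext j i
    have := congrFun (hcol i) j
    simpa using this
  rw [← hs2, hs0, mul_zero]

theorem dempster_uniqueness {m : ℕ} (G : SimpleGraph (Fin m))
    (Sigma1 Sigma2 : Matrix (Fin m) (Fin m) ℝ)
    (h1 : Sigma1.PosDef) (h2 : Sigma2.PosDef)
    (hdiag : ∀ i : Fin m, Sigma1 i i = Sigma2 i i)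
    (hedge : ∀ i j : Fin m, G.Adj i j → Sigma1 i j = Sigma2 i j)
    (hz1 : ∀ i j : Fin m, i ≠ j → ¬ G.Adj i j → Sigma1⁻¹ i j = 0)
    (hz2 : ∀ i j : Fin m, i ≠ j → ¬ G.Adj i j → Sigma2⁻¹ i j = 0) :
    Sigma1 = Sigma2 := by
  set D := Sigma1 - Sigma2 with hDdef
  have hDH : Dᴴ = D := (h1.isHermitian.sub h2.isHermitian)
  have hK1 := h1.inv
  have hK2 := h2.inv
  -- key trace identities
  have tr_zero : ∀ (K : Matrix (Fin m) (Fin m) ℝ),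
      (∀ i j : Fin m, i ≠ j → ¬ G.Adj i j → K i j = 0) → (K * D).trace = 0 := by
    intro K hz
    rw [Matrix.trace]
    apply Finset.sum_eq_zero
    intro i _
    rw [Matrix.diag_apply, Matrix.mul_apply]
    apply Finset.sum_eq_zero
    intro j _
    rcases eq_or_ne i j with rfl | hij
    · simp [hDdef, Matrix.sub_apply, hdiag i]
    · by_cases hadj : G.Adj i j
      · have : Sigma1 j i = Sigma2 j i := hedge j i hadj.symm
        simp [hDdef, Matrix.sub_apply, this]
      · rw [hz i j hij hadj, zero_mul]
  have tr1 : (Sigma1⁻¹ * D).trace = 0 := tr_zero _ hz1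
  have tr2 : (Sigma2⁻¹ * D).trace = 0 := tr_zero _ hz2
  have hd1 : IsUnit Sigma1.det := isUnit_iff_ne_zero.mpr h1.det_pos.ne'
  have hd2 : IsUnit Sigma2.det := isUnit_iff_ne_zero.mpr h2.det_pos.ne'
  have hmid : Sigma1⁻¹ * D * Sigma2⁻¹ = Sigma2⁻¹ - Sigma1⁻¹ := by
    rw [hDdef, mul_sub, sub_mul]
    rw [Matrix.nonsing_inv_mul _ hd1, Matrix.one_mul, mul_assoc,
      Matrix.mul_nonsing_inv _ hd2, Matrix.mul_one]
  have hB : (D * Sigma2⁻¹ * D).PosSemidef := by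
    have := hK2.posSemidef.conjTranspose_mul_mul_same D
    rwa [hDH] at this
  have htr : (Sigma1⁻¹ * (D * Sigma2⁻¹ * D)).trace = 0 := by
    have : Sigma1⁻¹ * (D * Sigma2⁻¹ * D) = (Sigma2⁻¹ - Sigma1⁻¹) * D := by
      rw [← hmid]; simp only [Matrix.mul_assoc]
    rw [this, Matrix.sub_mul, Matrix.trace_sub, tr1, tr2, sub_zero]
  have hB0 : D * Sigma2⁻¹ * D = 0 := my_trace_zero_of_posDef_posSemidef hK1 hB htr
  -- deduce D = 0
  have hvec : ∀ x : Fin m → ℝ, D *ᵥ x = 0 := by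
    intro x
    by_contra hx
    have hpos := hK2.dotProduct_mulVec_pos hx
    have : star (D *ᵥ x) ⬝ᵥ Sigma2⁻¹ *ᵥ (D *ᵥ x) = 0 := by
      have h0 : star x ⬝ᵥ (D * Sigma2⁻¹ * D) *ᵥ x = 0 := by rw [hB0]; simp
      calc star (D *ᵥ x) ⬝ᵥ Sigma2⁻¹ *ᵥ (D *ᵥ x)
          = star x ⬝ᵥ (D * Sigma2⁻¹ * D) *ᵥ x := by
            simp only [← Matrix.mulVec_mulVec, Matrix.star_mulVec, hDH,
              Matrix.dotProduct_mulVec, Matrix.vecMul_vecMul]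
        _ = 0 := h0
    rw [this] at hpos
    exact lt_irrefl _ hpos
  have hD0 : D = 0 := by
    ext i j
    have := congrFun (hvec (Pi.single j 1)) i
    simpa [Matrix.mulVec_single] using this
  have := sub_eq_zero.mp (by rw [← hDdef]; exact hD0)
  exact this
end

section
/- Let G be an undirected graph on {1,…,m} with edge set E and let S be a real symmetric m×m matrix. If the G-partial matrix S_G admits a positive definite completion, then there exists a positive definite matrix Σ̂ with Σ̂_{ij} = S_{ij} for all (i,j) ∈ E and (Σ̂⁻¹)_{ij} = 0 for all i ≠ j with (i,j) ∉ E. (Existence part of Dempster's theorem: when the fiber of positive definite completions is nonempty, it meets the set of covariance matrices of the Gaussian graphical model on G.) -/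
/-!
Existence part of Dempster's theorem: if the `G`-partial matrix `S_G` admits a
positive definite completion, then it admits a positive definite completion whose
inverse vanishes at every non-edge `(i,j)` with `i ≠ j`.
-/

open Matrix
variable {m : ℕ}



-- star is trivial on real vectors
example (x : Fin m → ℝ) : star x = x := star_trivial x

lemma sq_le_dot (x : Fin m → ℝ) (i : Fin m) : x i * x i ≤ x ⬝ᵥ x :=
  Finset.single_le_sum (fun k _ => mul_self_nonneg (x k)) (Finset.mem_univ i)

lemma absmul_le_dot (x : Fin m → ℝ) (i j : Fin m) : |x i| * |x j| ≤ x ⬝ᵥ x := by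
  rcases le_total |x i| |x j| with h | h
  · calc |x i| * |x j| ≤ |x j| * |x j| := by
          exact mul_le_mul_of_nonneg_right h (abs_nonneg _)
      _ = x j * x j := abs_mul_abs_self _
      _ ≤ x ⬝ᵥ x := sq_le_dot x j
  · calc |x i| * |x j| ≤ |x i| * |x i| := by
          exact mul_le_mul_of_nonneg_left h (abs_nonneg _)
      _ = x i * x i := abs_mul_abs_self _
      _ ≤ x ⬝ᵥ x := sq_le_dot x i

lemma quad_abs_le (C : Matrix (Fin m) (Fin m) ℝ) (x : Fin m → ℝ) :
    |x ⬝ᵥ C *ᵥ x| ≤ (∑ i, ∑ j, |C i j|) * (x ⬝ᵥ x) := by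
  have h1 : x ⬝ᵥ C *ᵥ x = ∑ i, ∑ j, x i * (C i j * x j) := by
    simp [dotProduct, mulVec, Finset.mul_sum]
  rw [h1, Finset.sum_mul]
  refine (Finset.abs_sum_le_sum_abs _ _).trans (Finset.sum_le_sum fun i _ => ?_)
  rw [Finset.sum_mul]
  refine (Finset.abs_sum_le_sum_abs _ _).trans (Finset.sum_le_sum fun j _ => ?_)
  have : |x i * (C i j * x j)| = |C i j| * (|x i| * |x j|) := by
    rw [abs_mul, abs_mul]; ring
  rw [this]
  exact mul_le_mul_of_nonneg_left (absmul_le_dot x i j) (abs_nonneg _)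

lemma dot_self_pos {x : Fin m → ℝ} (hx : x ≠ 0) : 0 < x ⬝ᵥ x := by
  have := Matrix.dotProduct_star_self_pos_iff (v := x)
  rw [star_trivial] at this
  exact this.2 hx

lemma cont_quad (A : Matrix (Fin m) (Fin m) ℝ) : Continuous fun x : Fin m → ℝ => x ⬝ᵥ A *ᵥ x := by
  have : (fun x : Fin m → ℝ => x ⬝ᵥ A *ᵥ x) =
      fun x => ∑ i, x i * ∑ j, A i j * x j := by
    funext x; simp [dotProduct, mulVec]
  rw [this]
  exact continuous_finset_sum _ fun i _ =>
    (continuous_apply i).mul (continuous_finset_sum _ fun j _ =>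
      continuous_const.mul (continuous_apply j))

lemma exists_rayleigh {A : Matrix (Fin m) (Fin m) ℝ} (hA : A.PosDef) :
    ∃ ε > 0, ∀ x : Fin m → ℝ, ε * (x ⬝ᵥ x) ≤ x ⬝ᵥ A *ᵥ x := by
  have hq : ∀ x : Fin m → ℝ, x ≠ 0 → 0 < x ⬝ᵥ A *ᵥ x := by
    intro x hx
    have := hA.dotProduct_mulVec_pos hx
    rwa [star_trivial] at this
  by_cases hS : ∃ x : Fin m → ℝ, x ⬝ᵥ x = 1
  · -- sphere compact, min attained
    set Sph : Set (Fin m → ℝ) := {x | x ⬝ᵥ x = 1} with hSph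
    have hdotc : Continuous fun x : Fin m → ℝ => x ⬝ᵥ x := by
      exact continuous_finset_sum _ fun i _ => (continuous_apply i).mul (continuous_apply i)
    have hclosed : IsClosed Sph := isClosed_eq hdotc continuous_const
    have hsub : Sph ⊆ Set.univ.pi fun _ : Fin m => Set.Icc (-1 : ℝ) 1 := by
      intro x hx i _
      have h1 : x i * x i ≤ 1 := hx ▸ sq_le_dot x i
      constructor <;> nlinarith
    have hcpt : IsCompact Sph :=
      (isCompact_univ_pi fun _ => isCompact_Icc).of_isClosed_subset hclosed hsub
    obtain ⟨x₀, hx₀, hmin⟩ := hcpt.exists_isMinOn hS ((cont_quad A).continuousOn)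
    have hx₀ne : x₀ ≠ 0 := by
      intro h; rw [hSph] at hx₀; simp [h] at hx₀
    refine ⟨x₀ ⬝ᵥ A *ᵥ x₀, hq x₀ hx₀ne, fun x => ?_⟩
    by_cases hx : x = 0
    · simp [hx]
    · have hxx : 0 < x ⬝ᵥ x := dot_self_pos hx
      set c := Real.sqrt (x ⬝ᵥ x) with hc
      have hcpos : 0 < c := Real.sqrt_pos.2 hxx
      have hc2 : c * c = x ⬝ᵥ x := Real.mul_self_sqrt hxx.le
      set y := c⁻¹ • x with hy
      have hyS : y ∈ Sph := by
        show y ⬝ᵥ y = 1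
        rw [hy, smul_dotProduct, dotProduct_smul, smul_eq_mul, smul_eq_mul]
        field_simp
        rw [sq]
        exact hc2.symm
      have hval : x ⬝ᵥ A *ᵥ x = (c * c) * (y ⬝ᵥ A *ᵥ y) := by
        rw [hy, smul_dotProduct, mulVec_smul, dotProduct_smul, smul_eq_mul, smul_eq_mul]
        field_simp
      have := hmin hyS
      simp only [Set.mem_setOf_eq] at this
      calc (x₀ ⬝ᵥ A *ᵥ x₀) * (x ⬝ᵥ x) = (x₀ ⬝ᵥ A *ᵥ x₀) * (c * c) := by rw [hc2]
        _ ≤ (y ⬝ᵥ A *ᵥ y) * (c * c) := by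
            exact mul_le_mul_of_nonneg_right this (by positivity)
        _ = x ⬝ᵥ A *ᵥ x := by rw [hval]; ring
  · refine ⟨1, one_pos, fun x => ?_⟩
    by_cases hx : x = 0
    · simp [hx]
    · exact absurd ⟨_, (by
        have hxx : 0 < x ⬝ᵥ x := dot_self_pos hx
        have hc2 : Real.sqrt (x ⬝ᵥ x) * Real.sqrt (x ⬝ᵥ x) = x ⬝ᵥ x := Real.mul_self_sqrt hxx.le
        show ((Real.sqrt (x ⬝ᵥ x))⁻¹ • x) ⬝ᵥ ((Real.sqrt (x ⬝ᵥ x))⁻¹ • x) = 1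
        rw [smul_dotProduct, dotProduct_smul, smul_eq_mul, smul_eq_mul]
        have hcpos : 0 < Real.sqrt (x ⬝ᵥ x) := Real.sqrt_pos.2 hxx
        field_simp
        rw [sq]; exact hc2.symm)⟩ hS

lemma herm_smul {H : Matrix (Fin m) (Fin m) ℝ} (hH : H.IsHermitian) (t : ℝ) :
    (t • H).IsHermitian := by
  unfold Matrix.IsHermitian at *
  rw [conjTranspose_smul, hH, star_trivial]

lemma posDef_add_smul {A H : Matrix (Fin m) (Fin m) ℝ} (hA : A.PosDef) (hH : H.IsHermitian) :
    ∃ δ > 0, ∀ t : ℝ, |t| < δ → (A + t • H).PosDef := by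
  obtain ⟨ε, hε, hray⟩ := exists_rayleigh hA
  set CH := ∑ i, ∑ j, |H i j| with hCH
  have hCH0 : 0 ≤ CH :=
    Finset.sum_nonneg fun i _ => Finset.sum_nonneg fun j _ => abs_nonneg _
  refine ⟨ε / (CH + 1), by positivity, fun t ht => posDef_iff_dotProduct_mulVec.mpr ⟨hA.1.add (herm_smul hH t), fun x hx => ?_⟩⟩
  rw [star_trivial, add_mulVec, dotProduct_add, smul_mulVec, dotProduct_smul, smul_eq_mul]
  have hs : 0 < x ⬝ᵥ x := dot_self_pos hx
  have hp : ε * (x ⬝ᵥ x) ≤ x ⬝ᵥ A *ᵥ x := hray x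
  have hqb : |x ⬝ᵥ H *ᵥ x| ≤ CH * (x ⬝ᵥ x) := quad_abs_le H x
  have h1 : -(|t| * |x ⬝ᵥ H *ᵥ x|) ≤ t * (x ⬝ᵥ H *ᵥ x) := by
    rw [← abs_mul]; exact neg_abs_le _
  have h3 : |t| * (CH + 1) < ε := by
    have := mul_lt_mul_of_pos_right ht (show (0:ℝ) < CH + 1 by positivity)
    rwa [div_mul_cancel₀] at this
    positivity
  nlinarith [mul_le_mul_of_nonneg_left hqb (abs_nonneg t),
    mul_lt_mul_of_pos_right h3 hs, abs_nonneg t, abs_nonneg (x ⬝ᵥ H *ᵥ x)]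

lemma posDef_of_psd_det_pos {A : Matrix (Fin m) (Fin m) ℝ} (hP : A.PosSemidef)
    (hd : 0 < A.det) : A.PosDef := by
  refine posDef_iff_dotProduct_mulVec.mpr ⟨hP.1, fun x hx => lt_of_le_of_ne (hP.dotProduct_mulVec_nonneg x) ?_⟩
  intro h0
  apply hx
  have hz : A *ᵥ x = 0 := (hP.dotProduct_mulVec_zero_iff x).1 h0.symm
  have hu : IsUnit A := (Matrix.isUnit_iff_isUnit_det A).2 hd.ne'.isUnit
  have hinj := Matrix.mulVec_injective_iff_isUnit.2 hu
  exact hinj (by simpa using hz)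

lemma trace_mul_std (A : Matrix (Fin m) (Fin m) ℝ) (i j : Fin m) :
    (A * single i j (1:ℝ)).trace = A j i := by
  rw [Matrix.trace]
  rw [Finset.sum_eq_single j]
  · simp [Matrix.diag]
  · intro b _ hb
    simp only [Matrix.diag]
    rw [Matrix.mul_single_apply_of_ne (hbj := hb)]
  · simp

lemma box_compact (B : ℝ) :
    IsCompact {A : Matrix (Fin m) (Fin m) ℝ | ∀ i j, |A i j| ≤ B} := by
  have h1 : IsCompact (Set.univ.pi fun _ : Fin m =>
      Set.univ.pi fun _ : Fin m => Set.Icc (-B : ℝ) B) :=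
    isCompact_univ_pi fun _ => isCompact_univ_pi fun _ => isCompact_Icc
  have h2 : {A : Matrix (Fin m) (Fin m) ℝ | ∀ i j, |A i j| ≤ B} =
      Set.univ.pi fun _ : Fin m => Set.univ.pi fun _ : Fin m => Set.Icc (-B : ℝ) B := by
    ext A
    constructor
    · intro h i _
      intro j _
      exact Set.mem_Icc.mpr (abs_le.mp (h i j))
    · intro h i j
      exact abs_le.mpr (Set.mem_Icc.mp (h i (Set.mem_univ i) j (Set.mem_univ j)))
  rw [h2]
  exact h1

lemma cont_entry (i j : Fin m) : Continuous fun A : Matrix (Fin m) (Fin m) ℝ => A i j :=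
  (continuous_apply j).comp (continuous_apply i)

lemma cont_quadM (x : Fin m → ℝ) :
    Continuous fun A : Matrix (Fin m) (Fin m) ℝ => x ⬝ᵥ A *ᵥ x := by
  have : (fun A : Matrix (Fin m) (Fin m) ℝ => x ⬝ᵥ A *ᵥ x) =
      fun A => ∑ i, x i * ∑ j, A i j * x j := by
    funext A; simp [dotProduct, mulVec]
  rw [this]
  exact continuous_finset_sum _ fun i _ =>
    continuous_const.mul (continuous_finset_sum _ fun j _ =>
      (cont_entry i j).mul continuous_const)

lemma psd_closed : IsClosed {A : Matrix (Fin m) (Fin m) ℝ | A.PosSemidef} := by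
  have : {A : Matrix (Fin m) (Fin m) ℝ | A.PosSemidef} =
      (⋂ i, ⋂ j, {A : Matrix (Fin m) (Fin m) ℝ | A j i = A i j}) ∩
      ⋂ x : Fin m → ℝ, {A | 0 ≤ x ⬝ᵥ A *ᵥ x} := by
    ext A
    simp only [Set.mem_inter_iff, Set.mem_iInter, Set.mem_setOf_eq]
    constructor
    · intro h
      refine ⟨fun i j => ?_, fun x => ?_⟩
      · have := h.1.apply j i
        rw [star_trivial] at this
        exact this.symm
      · have := h.dotProduct_mulVec_nonneg x
        rwa [star_trivial] at this
    · intro h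
      refine posSemidef_iff_dotProduct_mulVec.mpr ⟨Matrix.IsHermitian.ext fun i j => ?_, fun x => ?_⟩
      · rw [star_trivial]; exact h.1 i j
      · rw [star_trivial]; exact h.2 x
  rw [this]
  exact (isClosed_iInter fun i => isClosed_iInter fun j =>
      isClosed_eq (cont_entry j i) (cont_entry i j)).inter
    (isClosed_iInter fun x => isClosed_le continuous_const (cont_quadM x))

lemma single_quad (A : Matrix (Fin m) (Fin m) ℝ) (i j : Fin m) (a b : ℝ) :
    Pi.single i a ⬝ᵥ A *ᵥ Pi.single j b = a * (A i j * b) := by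
  rw [single_dotProduct]
  simp [mulVec, dotProduct_single]

lemma quad_expand (A : Matrix (Fin m) (Fin m) ℝ) (x y : Fin m → ℝ) :
    (x + y) ⬝ᵥ A *ᵥ (x + y) =
      x ⬝ᵥ A *ᵥ x + x ⬝ᵥ A *ᵥ y + y ⬝ᵥ A *ᵥ x + y ⬝ᵥ A *ᵥ y := by
  rw [Matrix.mulVec_add, add_dotProduct, dotProduct_add, dotProduct_add]
  ring

lemma entry_bound {A : Matrix (Fin m) (Fin m) ℝ} (hP : A.PosSemidef) (i j : Fin m) :
    |A i j| ≤ ∑ k, A k k := by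
  have hq : ∀ (a b : ℝ), 0 ≤ a * (A i i * a) + a * (A i j * b) + b * (A j i * a)
      + b * (A j j * b) := by
    intro a b
    have := hP.dotProduct_mulVec_nonneg (Pi.single i a + Pi.single j b)
    rw [star_trivial, quad_expand, single_quad, single_quad, single_quad, single_quad] at this
    exact this
  have hsym : A j i = A i j := by
    have := hP.1.apply i j
    rwa [star_trivial] at this
  have hdiag : ∀ k, 0 ≤ A k k := by
    intro k
    have := hP.dotProduct_mulVec_nonneg (Pi.single k 1)
    rw [star_trivial, single_quad] at this
    linarith
  have hle : ∀ k, A k k ≤ ∑ l, A l l := fun k =>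
    Finset.single_le_sum (fun l _ => hdiag l) (Finset.mem_univ k)
  have h1 := hq 1 1
  have h2 := hq 1 (-1)
  rw [hsym] at h1 h2
  rw [abs_le]
  constructor <;> nlinarith [hle i, hle j, hdiag i, hdiag j]

theorem dempster_existence {m : ℕ} (G : SimpleGraph (Fin m))
    (S : Matrix (Fin m) (Fin m) ℝ) (hS : S.IsSymm)
    (hcompl : ∃ Sigma : Matrix (Fin m) (Fin m) ℝ, Sigma.PosDef ∧
      (∀ i : Fin m, Sigma i i = S i i) ∧
      (∀ i j : Fin m, G.Adj i j → Sigma i j = S i j)) :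
    ∃ SigmaHat : Matrix (Fin m) (Fin m) ℝ, SigmaHat.PosDef ∧
      (∀ i : Fin m, SigmaHat i i = S i i) ∧
      (∀ i j : Fin m, G.Adj i j → SigmaHat i j = S i j) ∧
      (∀ i j : Fin m, i ≠ j → ¬ G.Adj i j → SigmaHat⁻¹ i j = 0) := by
  classical
  obtain ⟨T, hT, hTd, hTe⟩ := hcompl
  have hd₀ : 0 < T.det := hT.det_pos
  set B : ℝ := ∑ k, S k k with hB
  set K : Set (Matrix (Fin m) (Fin m) ℝ) :=
    {A | A.PosSemidef ∧ (∀ i, A i i = S i i) ∧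
      (∀ i j, G.Adj i j → A i j = S i j) ∧ T.det ≤ A.det} with hK
  have hTK : T ∈ K := ⟨hT.posSemidef, hTd, hTe, le_refl _⟩
  have hKsub : K ⊆ {A | ∀ i j, |A i j| ≤ B} := by
    intro A hA i j
    calc |A i j| ≤ ∑ k, A k k := entry_bound hA.1 i j
      _ = B := Finset.sum_congr rfl fun k _ => hA.2.1 k
  have hKclosed : IsClosed K := by
    have hKeq : K = {A : Matrix (Fin m) (Fin m) ℝ | A.PosSemidef} ∩
        ((⋂ i, {A : Matrix (Fin m) (Fin m) ℝ | A i i = S i i}) ∩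
        ((⋂ i, ⋂ j, {A : Matrix (Fin m) (Fin m) ℝ | G.Adj i j → A i j = S i j}) ∩
          {A : Matrix (Fin m) (Fin m) ℝ | T.det ≤ A.det})) := by
      ext A
      simp only [hK, Set.mem_inter_iff, Set.mem_iInter, Set.mem_setOf_eq]
    rw [hKeq]
    refine psd_closed.inter ?_
    refine (isClosed_iInter fun i => isClosed_eq (cont_entry i i) continuous_const).inter ?_
    refine (isClosed_iInter fun i => isClosed_iInter fun j => ?_).inter
      (isClosed_le continuous_const continuous_id.matrix_det)
    by_cases hadj : G.Adj i j
    · have : {A : Matrix (Fin m) (Fin m) ℝ | G.Adj i j → A i j = S i j} =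
          {A : Matrix (Fin m) (Fin m) ℝ | A i j = S i j} := by
        ext A; simp [hadj]
      rw [this]
      exact isClosed_eq (cont_entry i j) continuous_const
    · have : {A : Matrix (Fin m) (Fin m) ℝ | G.Adj i j → A i j = S i j} = Set.univ := by
        ext A; simp [hadj]
      rw [this]
      exact isClosed_univ
  have hKcpt : IsCompact K := (box_compact B).of_isClosed_subset hKclosed hKsub
  obtain ⟨Sh, hmem, hmax⟩ := hKcpt.exists_isMaxOn ⟨T, hTK⟩
    (Continuous.continuousOn (Continuous.matrix_det continuous_id))
  have hPD : Sh.PosDef := posDef_of_psd_det_pos hmem.1 (lt_of_lt_of_le hd₀ hmem.2.2.2)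
  refine ⟨Sh, hPD, hmem.2.1, hmem.2.2.1, ?_⟩
  intro i j hij hnadj
  by_contra hc0
  set H : Matrix (Fin m) (Fin m) ℝ := Matrix.single i j (1:ℝ) + Matrix.single j i 1 with hH
  have hHherm : H.IsHermitian := by
    refine Matrix.IsHermitian.ext fun a b => ?_
    rw [star_trivial, hH]
    simp only [Matrix.add_apply, Matrix.single, Matrix.of_apply]
    rw [add_comm]
    exact congrArg₂ (· + ·) (if_congr and_comm rfl rfl) (if_congr and_comm rfl rfl)
  have hHdiag : ∀ k, H k k = 0 := by
    intro k
    rw [hH]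
    simp only [Matrix.add_apply]
    rw [Matrix.single_apply_of_ne, Matrix.single_apply_of_ne, add_zero]
    · rintro ⟨rfl, rfl⟩; exact hij rfl
    · rintro ⟨rfl, rfl⟩; exact hij rfl
  have hHedge : ∀ a b, G.Adj a b → H a b = 0 := by
    intro a b hab
    rw [hH]
    simp only [Matrix.add_apply]
    rw [Matrix.single_apply_of_ne, Matrix.single_apply_of_ne, add_zero]
    · rintro ⟨rfl, rfl⟩; exact hnadj hab.symm
    · rintro ⟨rfl, rfl⟩; exact hnadj hab
  obtain ⟨δ, hδ, hδPD⟩ := posDef_add_smul hPD hHherm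
  have hdetle : ∀ t : ℝ, |t| < δ → (Sh + t • H).det ≤ Sh.det := by
    intro t ht
    by_cases hcase : T.det ≤ (Sh + t • H).det
    · have hmemK : (Sh + t • H) ∈ K := by
        refine ⟨(hδPD t ht).posSemidef, ?_, ?_, hcase⟩
        · intro k
          simp [Matrix.add_apply, Matrix.smul_apply, hHdiag k, hmem.2.1 k]
        · intro a b hab
          simp [Matrix.add_apply, Matrix.smul_apply, hHedge a b hab, hmem.2.2.1 a b hab]
      exact hmax hmemK
    · push_neg at hcase
      exact hcase.le.trans hmem.2.2.2
  have hdet : Sh.det ≠ 0 := hPD.det_pos.ne'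
  set Bm : Matrix (Fin m) (Fin m) ℝ := Sh⁻¹ * H with hBm
  have hfact : ∀ t : ℝ, Sh + t • H = Sh * (1 + t • Bm) := by
    intro t
    rw [hBm, Matrix.mul_add, Matrix.mul_one, Matrix.mul_smul, ← Matrix.mul_assoc,
      Matrix.mul_nonsing_inv _ hdet.isUnit, Matrix.one_mul]
  set g : ℝ → ℝ := fun t =>
    Polynomial.eval t ((Matrix.det (1 + (Polynomial.X : Polynomial ℝ) • Bm.map Polynomial.C)).divX.divX)
    with hg
  have hdet_exp : ∀ t : ℝ, (Sh + t • H).det =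
      Sh.det * (1 + Bm.trace * t + g t * t ^ 2) := by
    intro t
    rw [hfact, Matrix.det_mul, Matrix.det_one_add_smul t Bm]
  have hsymminv : Sh⁻¹ j i = Sh⁻¹ i j := by
    have h := (hPD.inv).1.apply i j
    rwa [star_trivial] at h
  have htr : Bm.trace = 2 * Sh⁻¹ i j := by
    rw [hBm, hH, Matrix.mul_add, Matrix.trace_add, trace_mul_std, trace_mul_std, hsymminv]
    ring
  have hcne : Bm.trace ≠ 0 := by
    rw [htr]
    exact mul_ne_zero two_ne_zero hc0
  have hgc : ContinuousAt (fun t : ℝ => g t * t) 0 := by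
    exact ((Polynomial.continuous _).mul continuous_id).continuousAt
  obtain ⟨η, hη, hηball⟩ := Metric.continuousAt_iff.1 hgc |Bm.trace| (abs_pos.2 hcne)
  set s : ℝ := min δ η / 2 with hsdef
  have hminpos : 0 < min δ η := lt_min hδ hη
  have hs : 0 < s := by positivity
  have hsδ : s < δ := by
    have h1 : s < min δ η := by rw [hsdef]; linarith
    exact h1.trans_le (min_le_left _ _)
  have hsη : s < η := by
    have h1 : s < min δ η := by rw [hsdef]; linarith
    exact h1.trans_le (min_le_right _ _)
  set t : ℝ := if 0 < Bm.trace then s else -s with htdef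
  have hts : |t| = s := by
    rw [htdef]
    split
    · exact abs_of_pos hs
    · rw [abs_neg]; exact abs_of_pos hs
  have htδ : |t| < δ := hts ▸ hsδ
  have htη : |t| < η := hts ▸ hsη
  have hφ : |g t * t| < |Bm.trace| := by
    have hd1 : dist t 0 < η := by rwa [Real.dist_eq, sub_zero]
    have := hηball hd1
    rw [Real.dist_eq] at this
    simpa using this
  have htc : t * Bm.trace = s * |Bm.trace| := by
    rw [htdef]
    split
    · next h => rw [abs_of_pos h]
    · next h =>
        have hneg : Bm.trace < 0 := lt_of_le_of_ne (not_lt.1 h) hcne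
        rw [abs_of_neg hneg]; ring
  have hquad : 0 < Bm.trace * t + g t * t ^ 2 := by
    have h1 : -(|g t * t| * |t|) ≤ g t * t * t := by
      rw [← abs_mul]; exact neg_abs_le _
    have hpow : t ^ 2 = t * t := sq t
    nlinarith [h1, hφ, hs, htc, hts, abs_nonneg (g t * t)]
  have hle := hdetle t htδ
  rw [hdet_exp t] at hle
  nlinarith [hPD.det_pos, hquad, hle]
end

section
/- Let G be an undirected graph on {1,…,m} with edge set E, let S be a real symmetric positive semidefinite m×m matrix, and let 𝒦_G = {K positive definite : K_{ij} = 0 for all i ≠ j with (i,j) ∉ E}. Then the log-likelihood function ℓ(K) = log det K − trace(K S) attains its supremum over 𝒦_G if and only if the G-partial matrix S_G has a positive definite completion; moreover, any maximizer K̂ satisfies (K̂⁻¹)_{ij} = S_{ij} for all (i,j) ∈ E. -/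
/-!
The log-likelihood `K ↦ log det K − trace (K S)` attains its supremum over the cone
`𝒦_G` of concentration matrices of the Gaussian graphical model on `G` if and only if
the `G`-partial matrix `S_G` has a positive definite completion; moreover any maximizer
`K̂` satisfies `(K̂⁻¹)_{ij} = S_{ij}` for all `(i,j) ∈ E` (including the diagonal).
-/

/-- The cone of concentration matrices of the Gaussian graphical model on `G`:
positive definite matrices vanishing at all non-edges `i ≠ j`. -/
def concentrationCone {m : ℕ} (G : SimpleGraph (Fin m)) :
    Set (Matrix (Fin m) (Fin m) ℝ) :=
  {K | K.PosDef ∧ ∀ i j : Fin m, i ≠ j → ¬ G.Adj i j → K i j = 0}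

/-- The log-likelihood (up to constants) of a concentration matrix `K` given the
sample covariance matrix `S`. -/
noncomputable def logLik {m : ℕ} (S K : Matrix (Fin m) (Fin m) ℝ) : ℝ :=
  Real.log K.det - (K * S).trace

open Matrix Finset Filter

namespace GGM

variable {m : ℕ}

variable {m : ℕ}

lemma traceMul (A B : Matrix (Fin m) (Fin m) ℝ) :
    (A * B).trace = ∑ i, ∑ j, A i j * B j i := by
  simp [Matrix.trace, Matrix.mul_apply, Matrix.diag]

lemma det_updateRow_eq (M B : Matrix (Fin m) (Fin m) ℝ) (i : Fin m) :
    (M.updateRow i (B i)).det = ∑ k, B i k * M.adjugate k i := by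
  have h1 : ∀ v : Fin m → ℝ, (M.updateRow i v).det = Mᵀ.cramer v i := by
    intro v
    rw [Matrix.cramer_apply, Matrix.updateCol_transpose, Matrix.det_transpose]
  have h2 : B i = ∑ k, B i k • (Pi.single k (1:ℝ) : Fin m → ℝ) := by
    funext a
    simp [Pi.single_apply, Finset.sum_apply]
  have h3 : ∀ k, Mᵀ.cramer (Pi.single k 1) i = M.adjugate k i := by
    intro k; rw [Matrix.adjugate_def]; rfl
  rw [h1, h2]
  simp only [map_sum, LinearMap.map_smul, Finset.sum_apply, Pi.smul_apply, smul_eq_mul]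
  refine Finset.sum_congr rfl fun k _ => ?_
  rw [h3]
  congr 1
  simp [Pi.single_apply]


variable {m : ℕ}

lemma prod_updateRow (M B : Matrix (Fin m) (Fin m) ℝ) (σ : Equiv.Perm (Fin m)) (i : Fin m) :
    (∏ j, (M.updateRow (σ i) (B (σ i))) (σ j) j) =
      B (σ i) i * ∏ j ∈ univ.erase i, M (σ j) j := by
  rw [← Finset.mul_prod_erase univ _ (Finset.mem_univ i)]
  congr 1
  · rw [Matrix.updateRow_apply, if_pos rfl]
  · refine Finset.prod_congr rfl fun j hj => ?_
    rw [Matrix.updateRow_apply, if_neg]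
    exact fun h => (Finset.mem_erase.mp hj).1 (σ.injective h)

lemma sum_det_updateRow (M B : Matrix (Fin m) (Fin m) ℝ) :
    ∑ p, (M.updateRow p (B p)).det =
      ∑ σ : Equiv.Perm (Fin m), (Equiv.Perm.sign σ : ℝ) *
        ∑ i, (∏ j ∈ univ.erase i, M (σ j) j) * B (σ i) i := by
  simp only [Matrix.det_apply']
  rw [Finset.sum_comm]
  refine Finset.sum_congr rfl fun σ _ => ?_
  rw [Finset.mul_sum, ← Equiv.sum_comp σ (fun p => (Equiv.Perm.sign σ : ℝ) * ∏ j, (M.updateRow p (B p)) (σ j) j)]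
  refine Finset.sum_congr rfl fun i _ => ?_
  rw [prod_updateRow]
  ring

lemma sum_det_updateRow_eq_trace (M B : Matrix (Fin m) (Fin m) ℝ) :
    ∑ p, (M.updateRow p (B p)).det = (M.adjugate * B).trace := by
  simp only [det_updateRow_eq]
  rw [traceMul, Finset.sum_comm]
  exact Finset.sum_congr rfl fun k _ => Finset.sum_congr rfl fun p _ => mul_comm _ _

lemma hasDerivAt_det (M B : Matrix (Fin m) (Fin m) ℝ) :
    HasDerivAt (fun t : ℝ => (M + t • B).det) ((M.adjugate * B).trace) 0 := by
  have key : ∀ t : ℝ, (M + t • B).det =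
      ∑ σ : Equiv.Perm (Fin m), (Equiv.Perm.sign σ : ℝ) *
        ∏ i, (M (σ i) i + t * B (σ i) i) := by
    intro t
    rw [Matrix.det_apply']
    refine Finset.sum_congr rfl fun σ _ => ?_
    simp [Matrix.add_apply, Matrix.smul_apply, smul_eq_mul]
  have hD : HasDerivAt (fun t : ℝ => ∑ σ : Equiv.Perm (Fin m), (Equiv.Perm.sign σ : ℝ) *
        ∏ i, (M (σ i) i + t * B (σ i) i))
      (∑ σ : Equiv.Perm (Fin m), (Equiv.Perm.sign σ : ℝ) *
        ∑ i, (∏ j ∈ univ.erase i, M (σ j) j) * B (σ i) i) 0 := by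
    refine HasDerivAt.fun_sum fun σ _ => ?_
    have hp : HasDerivAt (fun t : ℝ => ∏ i, (M (σ i) i + t * B (σ i) i))
        (∑ i, (∏ j ∈ univ.erase i, (M (σ j) j + 0 * B (σ j) j)) • B (σ i) i) 0 := by
      refine HasDerivAt.fun_finsetProd fun i _ => ?_
      simpa using (hasDerivAt_mul_const (B (σ i) i)).const_add (M (σ i) i)
    simp only [zero_mul, add_zero, smul_eq_mul] at hp
    exact hp.const_mul _
  have hfun : (fun t : ℝ => (M + t • B).det) = _ := funext key
  rw [hfun, ← sum_det_updateRow_eq_trace, sum_det_updateRow]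
  exact hD


variable {m : ℕ}

lemma star_vec (x : Fin m → ℝ) : star x = x := by
  funext k; simp

lemma dot_self_eq (x : Fin m → ℝ) : x ⬝ᵥ x = ∑ k, x k * x k := rfl

lemma dot_self_nonneg (x : Fin m → ℝ) : 0 ≤ ∑ k, x k * x k :=
  Finset.sum_nonneg fun k _ => mul_self_nonneg _

lemma dot_self_pos {x : Fin m → ℝ} (hx : x ≠ 0) : 0 < ∑ k, x k * x k := by
  rcases Function.ne_iff.mp hx with ⟨k, hk⟩
  have : (0:ℝ) < x k * x k := mul_self_pos.mpr hk
  exact Finset.sum_pos' (fun k _ => mul_self_nonneg _) ⟨k, Finset.mem_univ k, this⟩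

lemma quad_abs_le (B : Matrix (Fin m) (Fin m) ℝ) (x : Fin m → ℝ) :
    |x ⬝ᵥ B.mulVec x| ≤ (∑ a, ∑ b, |B a b|) * ∑ k, x k * x k := by
  have hx2 : ∀ a b, |x a| * |x b| ≤ ∑ k, x k * x k := by
    intro a b
    have h1 : 2 * (|x a| * |x b|) ≤ |x a| * |x a| + |x b| * |x b| := by nlinarith [sq_nonneg (|x a| - |x b|)]
    have h2 : |x a| * |x a| ≤ ∑ k, x k * x k := by
      have := Finset.single_le_sum (f := fun k => x k * x k) (fun k _ => mul_self_nonneg _) (Finset.mem_univ a)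
      simpa [abs_mul_abs_self] using this
    have h3 : |x b| * |x b| ≤ ∑ k, x k * x k := by
      have := Finset.single_le_sum (f := fun k => x k * x k) (fun k _ => mul_self_nonneg _) (Finset.mem_univ b)
      simpa [abs_mul_abs_self] using this
    linarith
  have hexp : x ⬝ᵥ B.mulVec x = ∑ a, ∑ b, x a * (B a b * x b) := by
    simp [dotProduct, Matrix.mulVec, Finset.mul_sum]
  rw [hexp, Finset.sum_mul]
  refine (Finset.abs_sum_le_sum_abs _ _).trans (Finset.sum_le_sum fun a _ => ?_)
  rw [Finset.sum_mul]
  refine (Finset.abs_sum_le_sum_abs _ _).trans (Finset.sum_le_sum fun b _ => ?_)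
  rw [abs_mul, abs_mul]
  calc |x a| * (|B a b| * |x b|) = |B a b| * (|x a| * |x b|) := by ring
  _ ≤ |B a b| * ∑ k, x k * x k := by
      exact mul_le_mul_of_nonneg_left (hx2 a b) (abs_nonneg _)

lemma exists_sub_smul_one_posSemidef {M : Matrix (Fin m) (Fin m) ℝ} (hM : M.PosDef) :
    ∃ a : ℝ, 0 < a ∧ (M - a • 1).PosSemidef := by
  cases isEmpty_or_nonempty (Fin m) with
  | inl h =>
    refine ⟨1, one_pos, Subsingleton.elim _ _, fun x => ?_⟩
    simp [Finsupp.sum, Finset.eq_empty_of_isEmpty x.support]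
  | inr h =>
    classical
    set hH := hM.1 with hHdef
    set a := Finset.univ.inf' Finset.univ_nonempty hH.eigenvalues with ha_def
    have ha : 0 < a := by
      rw [ha_def, Finset.lt_inf'_iff]
      exact fun i _ => hM.eigenvalues_pos i
    set U : Matrix (Fin m) (Fin m) ℝ := (hH.eigenvectorUnitary : Matrix (Fin m) (Fin m) ℝ) with hU_def
    have hUU : U * star U = 1 := Matrix.mem_unitaryGroup_iff.mp hH.eigenvectorUnitary.2
    have hspec : M = U * Matrix.diagonal hH.eigenvalues * star U := by
      have := hH.spectral_theorem
      simpa [RCLike.ofReal_real_eq_id] using this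
    have key : M - a • 1 = U * Matrix.diagonal (fun k => hH.eigenvalues k - a) * star U := by
      have h1 : U * (a • (1 : Matrix (Fin m) (Fin m) ℝ)) * star U = a • (1 : Matrix (Fin m) (Fin m) ℝ) := by
        rw [Matrix.mul_smul, Matrix.smul_mul, Matrix.mul_one, hUU]
      have h2 : Matrix.diagonal (fun k => hH.eigenvalues k - a)
          = Matrix.diagonal hH.eigenvalues - a • (1 : Matrix (Fin m) (Fin m) ℝ) := by
        ext i j
        by_cases hij : i = j
        · subst hij
          simp [Matrix.diagonal_apply_eq, Matrix.sub_apply, Matrix.smul_apply, Matrix.one_apply_eq]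
        · simp [Matrix.diagonal_apply_ne _ hij, Matrix.sub_apply, Matrix.smul_apply,
            Matrix.one_apply_ne hij]
      rw [h2, Matrix.mul_sub, Matrix.sub_mul, h1, ← hspec]
    have hdiag : (Matrix.diagonal (fun k => hH.eigenvalues k - a)).PosSemidef := by
      rw [Matrix.posSemidef_diagonal_iff]
      intro i
      have : a ≤ hH.eigenvalues i := Finset.inf'_le _ (Finset.mem_univ i)
      linarith
    have hfin := hdiag.mul_mul_conjTranspose_same U
    refine ⟨a, ha, ?_⟩
    rw [key]
    simpa [Matrix.star_eq_conjTranspose] using hfin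

lemma quad_lower {M : Matrix (Fin m) (Fin m) ℝ} (hM : M.PosDef) :
    ∃ a : ℝ, 0 < a ∧ ∀ x : Fin m → ℝ, a * (∑ k, x k * x k) ≤ x ⬝ᵥ M.mulVec x := by
  obtain ⟨a, ha, hpsd⟩ := exists_sub_smul_one_posSemidef hM
  refine ⟨a, ha, fun x => ?_⟩
  have := hpsd.dotProduct_mulVec_nonneg x
  rw [star_vec] at this
  have hexp : x ⬝ᵥ (M - a • 1).mulVec x = x ⬝ᵥ M.mulVec x - a * ∑ k, x k * x k := by
    rw [Matrix.sub_mulVec, dotProduct_sub]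
    congr 1
    rw [Matrix.smul_mulVec, Matrix.one_mulVec, dotProduct_smul, smul_eq_mul,
      dot_self_eq]
  rw [hexp] at this
  linarith

lemma posDef_perturb {M B : Matrix (Fin m) (Fin m) ℝ} (hM : M.PosDef) (hB : B.IsHermitian) :
    ∃ ε : ℝ, 0 < ε ∧ ∀ t : ℝ, |t| < ε → (M + t • B).PosDef := by
  obtain ⟨a, ha, hq⟩ := quad_lower hM
  set c : ℝ := (∑ p, ∑ q, |B p q|) + 1 with hc_def
  have hc : 0 < c := by
    have : (0:ℝ) ≤ ∑ p, ∑ q, |B p q| :=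
      Finset.sum_nonneg fun p _ => Finset.sum_nonneg fun q _ => abs_nonneg _
    linarith
  refine ⟨a / c, div_pos ha hc, fun t ht => ?_⟩
  refine Matrix.PosDef.of_dotProduct_mulVec_pos ?_ ?_
  · have hBt : (t • B).IsHermitian := by
      show (t • B)ᴴ = t • B
      rw [Matrix.conjTranspose_smul, hB.eq]
      norm_num
    exact hM.1.add hBt
  · intro x hx
    rw [star_vec, Matrix.add_mulVec, dotProduct_add, Matrix.smul_mulVec,
      dotProduct_smul, smul_eq_mul]
    have h1 : a * (∑ k, x k * x k) ≤ x ⬝ᵥ M.mulVec x := hq x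
    have h2 : |t * (x ⬝ᵥ B.mulVec x)| ≤ |t| * ((∑ p, ∑ q, |B p q|) * ∑ k, x k * x k) := by
      rw [abs_mul]
      exact mul_le_mul_of_nonneg_left (quad_abs_le B x) (abs_nonneg _)
    have hxx : 0 < ∑ k, x k * x k := dot_self_pos hx
    have h3 : |t| * ((∑ p, ∑ q, |B p q|) * ∑ k, x k * x k) < a * (∑ k, x k * x k) := by
      have hbound : |t| * c < a := by
        rw [lt_div_iff₀ hc] at ht
        exact ht
      have hsum : (∑ p, ∑ q, |B p q|) ≤ c := by
        rw [hc_def]; linarith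
      nlinarith [mul_lt_mul_of_pos_right hbound hxx,
        mul_le_mul_of_nonneg_right hsum (mul_nonneg (abs_nonneg t) hxx.le)]
    obtain ⟨hl, hr⟩ := abs_lt.mp (lt_of_le_of_lt h2 h3)
    linarith


variable {m : ℕ}

lemma hasDerivAt_logLik (S M B : Matrix (Fin m) (Fin m) ℝ) (hdet : M.det ≠ 0) :
    HasDerivAt (fun t : ℝ => logLik S (M + t • B))
      ((M⁻¹ * B).trace - (B * S).trace) 0 := by
  have hlog : HasDerivAt (fun t : ℝ => Real.log ((M + t • B).det))
      ((M.adjugate * B).trace / M.det) 0 := by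
    have h0 : M + (0:ℝ) • B = M := by simp
    have := (hasDerivAt_det M B).log (by rw [h0]; exact hdet)
    rwa [h0] at this
  have hval : (M.adjugate * B).trace / M.det = (M⁻¹ * B).trace := by
    rw [Matrix.inv_def, Ring.inverse_eq_inv', Matrix.smul_mul, Matrix.trace_smul,
      smul_eq_mul, div_eq_inv_mul]
  have htr : HasDerivAt (fun t : ℝ => ((M + t • B) * S).trace)
      ((B * S).trace) 0 := by
    have hfun : (fun t : ℝ => ((M + t • B) * S).trace)
        = fun t : ℝ => (M * S).trace + t * (B * S).trace := by
      funext t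
      rw [Matrix.add_mul, Matrix.smul_mul, Matrix.trace_add, Matrix.trace_smul, smul_eq_mul]
    rw [hfun]
    simpa using (hasDerivAt_mul_const ((B * S).trace)).const_add ((M * S).trace)
  have := (hlog.sub htr)
  rw [hval] at this
  exact this

/-- the symmetric pair basis matrix -/
def pairMat (i j : Fin m) : Matrix (Fin m) (Fin m) ℝ :=
  Matrix.of fun a b =>
    (if a = i ∧ b = j then (1:ℝ) else 0) + (if b = i ∧ a = j then (1:ℝ) else 0)

lemma pairMat_isHermitian (i j : Fin m) : (pairMat i j).IsHermitian := by
  show (pairMat i j)ᴴ = pairMat i j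
  ext a b
  simp only [Matrix.conjTranspose_apply, pairMat, Matrix.of_apply, star_trivial]
  exact add_comm _ _

lemma trace_mul_pairMat (X : Matrix (Fin m) (Fin m) ℝ) (i j : Fin m) :
    (X * pairMat i j).trace = X j i + X i j := by
  rw [traceMul]
  simp only [pairMat, Matrix.of_apply, mul_add, Finset.sum_add_distrib, ite_and,
    mul_ite, mul_one, mul_zero]
  congr 1
  · rw [Finset.sum_comm]
    simp [Finset.sum_ite_eq', Finset.sum_ite_eq]
  · simp [Finset.sum_ite_eq', Finset.sum_ite_eq]

lemma pairMat_mul_trace (X : Matrix (Fin m) (Fin m) ℝ) (i j : Fin m) :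
    (pairMat i j * X).trace = X j i + X i j := by
  rw [traceMul]
  simp only [pairMat, Matrix.of_apply, add_mul, Finset.sum_add_distrib, ite_and,
    ite_mul, one_mul, zero_mul]
  congr 1
  · simp [Finset.sum_ite_eq', Finset.sum_ite_eq]
  · rw [Finset.sum_comm]
    simp [Finset.sum_ite_eq', Finset.sum_ite_eq]

lemma stationarity {G : SimpleGraph (Fin m)}
    {S : Matrix (Fin m) (Fin m) ℝ} (hS : S.PosSemidef)
    {Khat : Matrix (Fin m) (Fin m) ℝ} (hK : Khat ∈ concentrationCone G)
    (hmax : ∀ K ∈ concentrationCone G, logLik S K ≤ logLik S Khat)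
    (i j : Fin m) (hij : i = j ∨ G.Adj i j) : Khat⁻¹ i j = S i j := by
  obtain ⟨hKpd, hKsupp⟩ := hK
  set B := pairMat i j with hB_def
  have hBherm := pairMat_isHermitian i j
  have hBsupp : ∀ a b : Fin m, a ≠ b → ¬ G.Adj a b → B a b = 0 := by
    intro a b hab hnadj
    show (if a = i ∧ b = j then (1:ℝ) else 0) + (if b = i ∧ a = j then (1:ℝ) else 0) = 0
    rcases hij with h | h
    · subst h
      rw [if_neg (fun hc => hab (hc.1.trans hc.2.symm)),
        if_neg (fun hc : b = i ∧ a = i => hab (hc.2.trans hc.1.symm)), add_zero]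
    · rw [if_neg (fun hc : a = i ∧ b = j => hnadj (by rw [hc.1, hc.2]; exact h)),
        if_neg (fun hc : b = i ∧ a = j => hnadj (by rw [hc.1, hc.2]; exact h.symm)), add_zero]
  obtain ⟨ε, hε, hεmem⟩ := posDef_perturb hKpd hBherm
  have hmem : ∀ t : ℝ, |t| < ε → Khat + t • B ∈ concentrationCone G := by
    intro t ht
    refine ⟨hεmem t ht, fun a b hab hnadj => ?_⟩
    have h1 := hKsupp a b hab hnadj
    have h2 := hBsupp a b hab hnadj
    simp [Matrix.add_apply, Matrix.smul_apply, h1, h2]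
  have hloc : IsLocalMax (fun t : ℝ => logLik S (Khat + t • B)) 0 := by
    have hev : ∀ᶠ t in nhds (0:ℝ), |t| < ε := by
      have hball := Metric.ball_mem_nhds (0:ℝ) hε
      refine Filter.eventually_of_mem hball fun t ht => ?_
      simpa [Metric.mem_ball, Real.dist_eq] using ht
    refine hev.mono fun t ht => ?_
    have := hmax _ (hmem t ht)
    simpa using this
  have hder := hasDerivAt_logLik S Khat B hKpd.det_pos.ne'
  have hzero := hloc.hasDerivAt_eq_zero hder
  have htr1 : (Khat⁻¹ * B).trace = Khat⁻¹ j i + Khat⁻¹ i j := trace_mul_pairMat _ i j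
  have htr2 : (B * S).trace = S j i + S i j := pairMat_mul_trace _ i j
  rw [htr1, htr2] at hzero
  have hKinvherm : Khat⁻¹.IsHermitian := hKpd.1.inv
  have e1 : Khat⁻¹ j i = Khat⁻¹ i j := by
    have := hKinvherm.apply i j
    simpa using this
  have e2 : S j i = S i j := by
    have := hS.1.apply i j
    simpa using this
  rw [e1, e2] at hzero
  linarith


variable {m : ℕ}

lemma psd_diag_nonneg {K : Matrix (Fin m) (Fin m) ℝ} (h : K.PosSemidef) (i : Fin m) :
    0 ≤ K i i := by
  have := h.dotProduct_mulVec_nonneg (Pi.single i 1)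
  rw [star_vec] at this
  simpa [Matrix.mulVec_single, single_dotProduct] using this

lemma psd_trace_nonneg {K : Matrix (Fin m) (Fin m) ℝ} (h : K.PosSemidef) : 0 ≤ K.trace :=
  Finset.sum_nonneg fun i _ => psd_diag_nonneg h i

lemma quad_single_single (K : Matrix (Fin m) (Fin m) ℝ) (i j : Fin m) :
    (Pi.single i (1:ℝ)) ⬝ᵥ K.mulVec (Pi.single j 1) = K i j := by
  simp [Matrix.mulVec_single, single_dotProduct]

lemma psd_diag_le_trace {K : Matrix (Fin m) (Fin m) ℝ} (h : K.PosSemidef) (i : Fin m) :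
    K i i ≤ K.trace :=
  Finset.single_le_sum (f := fun i => K i i) (fun k _ => psd_diag_nonneg h k) (Finset.mem_univ i)

lemma psd_entry_le_trace {K : Matrix (Fin m) (Fin m) ℝ} (h : K.PosSemidef) (i j : Fin m) :
    |K i j| ≤ K.trace := by
  rcases eq_or_ne i j with rfl | hij
  · rw [abs_of_nonneg (psd_diag_nonneg h i)]
    exact psd_diag_le_trace h i
  · have hsym : K j i = K i j := by simpa using h.1.apply i j
    have hplus := h.dotProduct_mulVec_nonneg (Pi.single i 1 + Pi.single j 1)
    have hminus := h.dotProduct_mulVec_nonneg (Pi.single i 1 - Pi.single j 1)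
    rw [star_vec] at hplus hminus
    have eplus : (Pi.single i (1:ℝ) + Pi.single j 1) ⬝ᵥ
        K.mulVec (Pi.single i 1 + Pi.single j 1) = K i i + K i j + (K j i + K j j) := by
      rw [Matrix.mulVec_add, dotProduct_add, add_dotProduct, add_dotProduct]
      simp [quad_single_single]
      ring
    have eminus : (Pi.single i (1:ℝ) - Pi.single j 1) ⬝ᵥ
        K.mulVec (Pi.single i 1 - Pi.single j 1) = K i i - K i j - (K j i - K j j) := by
      rw [Matrix.mulVec_sub, dotProduct_sub, sub_dotProduct, sub_dotProduct]
      simp [quad_single_single]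
      ring
    rw [eplus] at hplus
    rw [eminus] at hminus
    have h1 : K i i ≤ K.trace := psd_diag_le_trace h i
    have h2 : K j j ≤ K.trace := psd_diag_le_trace h j
    have h3 : 0 ≤ K i i := psd_diag_nonneg h i
    have h4 : 0 ≤ K j j := psd_diag_nonneg h j
    rw [abs_le]
    constructor <;> nlinarith [hplus, hminus]

lemma trace_psd_mul_nonneg {P Q : Matrix (Fin m) (Fin m) ℝ} (hP : P.PosSemidef)
    (hQ : Q.PosSemidef) : 0 ≤ (P * Q).trace := by
  obtain ⟨B, rfl⟩ : ∃ B : Matrix (Fin m) (Fin m) ℝ, P = Bᴴ * B := by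
    open scoped MatrixOrder in exact CStarAlgebra.nonneg_iff_eq_star_mul_self.mp hP.nonneg
  have h1 : (Bᴴ * B * Q).trace = (B * Q * Bᴴ).trace := by
    rw [Matrix.mul_assoc, Matrix.trace_mul_comm, Matrix.mul_assoc]
  rw [h1]
  exact psd_trace_nonneg (hQ.mul_mul_conjTranspose_same B)

lemma trace_mul_lower {Sg K : Matrix (Fin m) (Fin m) ℝ} {a : ℝ}
    (hpsd : (Sg - a • 1).PosSemidef) (hK : K.PosSemidef) :
    a * K.trace ≤ (K * Sg).trace := by
  have h0 : 0 ≤ (K * (Sg - a • (1:Matrix (Fin m) (Fin m) ℝ))).trace :=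
    trace_psd_mul_nonneg hK hpsd
  have hexp : (K * (Sg - a • (1:Matrix (Fin m) (Fin m) ℝ))).trace
      = (K * Sg).trace - a * K.trace := by
    rw [Matrix.mul_sub, Matrix.trace_sub]
    congr 1
    rw [Matrix.mul_smul, Matrix.mul_one, Matrix.trace_smul, smul_eq_mul]
  rw [hexp] at h0
  linarith

lemma trace_eq_sum_eigenvalues {K : Matrix (Fin m) (Fin m) ℝ} (hH : K.IsHermitian) :
    K.trace = ∑ i, hH.eigenvalues i := by
  have hspec : K = (hH.eigenvectorUnitary : Matrix (Fin m) (Fin m) ℝ)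
      * Matrix.diagonal hH.eigenvalues
      * star (hH.eigenvectorUnitary : Matrix (Fin m) (Fin m) ℝ) := by
    simpa [RCLike.ofReal_real_eq_id] using hH.spectral_theorem
  have hU : star (hH.eigenvectorUnitary : Matrix (Fin m) (Fin m) ℝ)
      * (hH.eigenvectorUnitary : Matrix (Fin m) (Fin m) ℝ) = 1 :=
    Matrix.mem_unitaryGroup_iff'.mp hH.eigenvectorUnitary.2
  calc K.trace = ((hH.eigenvectorUnitary : Matrix (Fin m) (Fin m) ℝ)
      * Matrix.diagonal hH.eigenvalues
      * star (hH.eigenvectorUnitary : Matrix (Fin m) (Fin m) ℝ)).trace := by rw [← hspec]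
  _ = (star (hH.eigenvectorUnitary : Matrix (Fin m) (Fin m) ℝ)
      * (hH.eigenvectorUnitary : Matrix (Fin m) (Fin m) ℝ)
      * Matrix.diagonal hH.eigenvalues).trace := by rw [Matrix.trace_mul_cycle]
  _ = (Matrix.diagonal hH.eigenvalues).trace := by rw [hU, Matrix.one_mul]
  _ = ∑ i, hH.eigenvalues i := by simp [Matrix.trace_diagonal]

lemma det_eq_prod_eigenvalues' {K : Matrix (Fin m) (Fin m) ℝ} (hH : K.IsHermitian) :
    K.det = ∏ i, hH.eigenvalues i := by
  simpa [RCLike.ofReal_real_eq_id] using hH.det_eq_prod_eigenvalues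

lemma det_le_trace_pow {K : Matrix (Fin m) (Fin m) ℝ} (hK : K.PosDef) :
    K.det ≤ K.trace ^ m := by
  rw [det_eq_prod_eigenvalues' hK.1, trace_eq_sum_eigenvalues hK.1]
  have hle : ∀ i : Fin m, hK.1.eigenvalues i ≤ ∑ k, hK.1.eigenvalues k := fun i =>
    Finset.single_le_sum (fun k _ => (hK.eigenvalues_pos k).le) (Finset.mem_univ i)
  calc ∏ i, hK.1.eigenvalues i ≤ ∏ _i : Fin m, ∑ k, hK.1.eigenvalues k :=
        Finset.prod_le_prod (fun i _ => (hK.eigenvalues_pos i).le) (fun i _ => hle i)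
  _ = (∑ k, hK.1.eigenvalues k) ^ m := by
      rw [Finset.prod_const, Finset.card_univ, Fintype.card_fin]

lemma pd_trace_pos [Nonempty (Fin m)] {K : Matrix (Fin m) (Fin m) ℝ} (hK : K.PosDef) :
    0 < K.trace := by
  rw [trace_eq_sum_eigenvalues hK.1]
  exact Finset.sum_pos (fun i _ => hK.eigenvalues_pos i) Finset.univ_nonempty

lemma posdef_of_psd_det {A : Matrix (Fin m) (Fin m) ℝ} (h : A.PosSemidef)
    (hdet : A.det ≠ 0) : A.PosDef := by
  refine Matrix.PosDef.of_dotProduct_mulVec_pos h.1 fun x hx => ?_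
  have hinj : Function.Injective A.mulVec :=
    Matrix.mulVec_injective_iff_isUnit.mpr ((Matrix.isUnit_iff_isUnit_det A).mpr hdet.isUnit)
  have hAx : A.mulVec x ≠ 0 := by
    intro h0
    apply hx
    have := hinj (h0.trans (Matrix.mulVec_zero A).symm)
    exact this
  have hne : star x ⬝ᵥ A *ᵥ x ≠ 0 := fun h0 => hAx ((h.dotProduct_mulVec_zero_iff x).mp h0)
  exact lt_of_le_of_ne (h.dotProduct_mulVec_nonneg x) (Ne.symm hne)

lemma continuous_det : Continuous fun K : Matrix (Fin m) (Fin m) ℝ => K.det := by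
  have : (fun K : Matrix (Fin m) (Fin m) ℝ => K.det)
      = fun K => ∑ σ : Equiv.Perm (Fin m), (Equiv.Perm.sign σ : ℝ) * ∏ i, K (σ i) i :=
    funext fun K => Matrix.det_apply' K
  rw [this]
  refine continuous_finset_sum _ fun σ _ => Continuous.mul continuous_const ?_
  exact continuous_finset_prod _ fun i _ => (continuous_apply i).comp (continuous_apply (σ i))

lemma continuous_traceMul (S : Matrix (Fin m) (Fin m) ℝ) :
    Continuous fun K : Matrix (Fin m) (Fin m) ℝ => (K * S).trace := by
  have : (fun K : Matrix (Fin m) (Fin m) ℝ => (K * S).trace)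
      = fun K => ∑ i, ∑ j, K i j * S j i := funext fun K => traceMul K S
  rw [this]
  refine continuous_finset_sum _ fun i _ => continuous_finset_sum _ fun j _ => ?_
  exact Continuous.mul ((continuous_apply j).comp (continuous_apply i)) continuous_const

lemma continuous_quad (x : Fin m → ℝ) :
    Continuous fun M : Matrix (Fin m) (Fin m) ℝ => x ⬝ᵥ M.mulVec x := by
  have : (fun M : Matrix (Fin m) (Fin m) ℝ => x ⬝ᵥ M.mulVec x)
      = fun M => ∑ a, ∑ b, x a * (M a b * x b) := by
    funext M
    simp [dotProduct, Matrix.mulVec, Finset.mul_sum]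
  rw [this]
  refine continuous_finset_sum _ fun a _ => continuous_finset_sum _ fun b _ => ?_
  exact Continuous.mul continuous_const
    (Continuous.mul ((continuous_apply b).comp (continuous_apply a)) continuous_const)


variable {m : ℕ}

lemma one_mem_cone (G : SimpleGraph (Fin m)) : (1 : Matrix (Fin m) (Fin m) ℝ) ∈ concentrationCone G :=
  ⟨Matrix.PosDef.one, fun i j hij _ => Matrix.one_apply_ne hij⟩

lemma logLik_eq_of_mem {G : SimpleGraph (Fin m)} {S Sg : Matrix (Fin m) (Fin m) ℝ}
    (hdiag : ∀ i, Sg i i = S i i) (hadj : ∀ i j, G.Adj i j → Sg i j = S i j)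
    {K : Matrix (Fin m) (Fin m) ℝ} (hK : K ∈ concentrationCone G) :
    logLik S K = logLik Sg K := by
  unfold logLik
  congr 1
  rw [traceMul, traceMul]
  refine Finset.sum_congr rfl fun i _ => Finset.sum_congr rfl fun j _ => ?_
  rcases eq_or_ne j i with rfl | hne
  · rw [hdiag]
  · by_cases hadj' : G.Adj j i
    · rw [hadj j i hadj']
    · rw [hK.2 i j (fun h => hne h.symm) (fun h => hadj' h.symm)]
      ring

lemma exists_max {G : SimpleGraph (Fin m)} {S : Matrix (Fin m) (Fin m) ℝ}
    (hS : S.PosSemidef) (Sg : Matrix (Fin m) (Fin m) ℝ) (hSg : Sg.PosDef)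
    (hdiag : ∀ i, Sg i i = S i i) (hadj : ∀ i j, G.Adj i j → Sg i j = S i j) :
    ∃ Khat ∈ concentrationCone G, ∀ K ∈ concentrationCone G, logLik S K ≤ logLik S Khat := by
  cases isEmpty_or_nonempty (Fin m) with
  | inl hempty =>
    refine ⟨1, one_mem_cone G, fun K _ => ?_⟩
    have : K = 1 := by ext i j; exact absurd i.2 (by simp [hempty.false i])
    rw [this]
  | inr hne =>
    classical
    obtain ⟨a, ha, hSga⟩ := exists_sub_smul_one_posSemidef hSg
    set c₀ : ℝ := logLik Sg 1 with hc0
    set T : Set (Matrix (Fin m) (Fin m) ℝ) :=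
      {K | K ∈ concentrationCone G ∧ c₀ ≤ logLik Sg K} with hT
    -- trace bound on T
    set R : ℝ := (2 * m + |c₀| + 1) / a with hR
    have hR0 : 0 ≤ R := div_nonneg (by positivity) ha.le
    set C : ℝ := (1 + R) ^ 2 with hC
    have htrace_bound : ∀ K ∈ T, K.trace ≤ C := by
      rintro K ⟨⟨hKpd, _⟩, hKF⟩
      have htpos : 0 < K.trace := pd_trace_pos hKpd
      set u : ℝ := Real.sqrt K.trace with hu
      have hupos : 0 < u := Real.sqrt_pos.mpr htpos
      have hu2 : u ^ 2 = K.trace := Real.sq_sqrt htpos.le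
      have hlogdet : Real.log K.det ≤ m * Real.log K.trace := by
        have h1 : Real.log K.det ≤ Real.log (K.trace ^ m) :=
          Real.log_le_log hKpd.det_pos (det_le_trace_pow hKpd)
        rwa [Real.log_pow] at h1
      have hlogu : Real.log K.trace ≤ 2 * u := by
        have h1 : Real.log K.trace = 2 * Real.log u := by
          rw [← hu2, Real.log_pow]; push_cast; ring
        have h2 : Real.log u ≤ u - 1 := Real.log_le_sub_one_of_pos hupos
        rw [h1]; linarith
      have hqlow : a * K.trace ≤ (K * Sg).trace := trace_mul_lower hSga hKpd.posSemidef
      have hchain : c₀ ≤ m * (2 * u) - a * u ^ 2 := by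
        have h1 : c₀ ≤ Real.log K.det - (K * Sg).trace := hKF
        have h3 : (m : ℝ) * Real.log K.trace ≤ m * (2 * u) :=
          mul_le_mul_of_nonneg_left hlogu (Nat.cast_nonneg m)
        have h4 : a * K.trace = a * u ^ 2 := by rw [hu2]
        linarith [hlogdet, hqlow]
      have huR : u ≤ 1 + R := by
        rcases le_total u 1 with h | h
        · linarith
        · have habs : -|c₀| ≤ c₀ := neg_abs_le c₀
          have h1 : a * u ^ 2 ≤ (2 * m + |c₀|) * u := by
            nlinarith [mul_nonneg (abs_nonneg c₀) (by linarith : (0:ℝ) ≤ u - 1)]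
          have h2 : a * u ≤ 2 * m + |c₀| := by nlinarith
          have h3 : u ≤ (2 * m + |c₀|) / a := by
            rw [le_div_iff₀ ha]
            linarith
          have h4 : (2 * (m:ℝ) + |c₀|) / a ≤ R := by
            rw [hR]
            exact (div_le_div_iff_of_pos_right ha).mpr (by linarith)
          linarith
      calc K.trace = u ^ 2 := hu2.symm
      _ ≤ (1 + R) ^ 2 := by nlinarith
      _ = C := rfl
    have hentry : ∀ K ∈ T, ∀ i j, K i j ∈ Set.Icc (-C) C := by
      intro K hKT i j
      have h1 : |K i j| ≤ K.trace := psd_entry_le_trace hKT.1.1.posSemidef i j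
      have h2 := htrace_bound K hKT
      rw [Set.mem_Icc]
      constructor <;> [linarith [neg_abs_le (K i j)]; linarith [le_abs_self (K i j)]]
    -- compactness
    set Q : Set (Matrix (Fin m) (Fin m) ℝ) :=
      Set.pi Set.univ (fun _ : Fin m => Set.pi Set.univ (fun _ : Fin m => Set.Icc (-C) C))
      with hQdef
    have hQcompact : IsCompact Q :=
      isCompact_univ_pi fun _ => isCompact_univ_pi fun _ => isCompact_Icc
    have hTsub : T ⊆ Q := by
      intro K hKT
      intro i _
      intro j _
      exact hentry K hKT i j
    have hTseq : IsSeqClosed T := by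
      intro K L hKn hlim
      have hent : ∀ i j, Tendsto (fun n => K n i j) atTop (nhds (L i j)) := by
        intro i j
        exact (((continuous_apply j).comp (continuous_apply i)).tendsto L).comp hlim
      have hdet : Tendsto (fun n => (K n).det) atTop (nhds L.det) :=
        (continuous_det.tendsto L).comp hlim
      have htrS : Tendsto (fun n => ((K n) * Sg).trace) atTop (nhds ((L * Sg).trace)) :=
        ((continuous_traceMul Sg).tendsto L).comp hlim
      have herm : L.IsHermitian := by
        show Lᴴ = L
        ext i j
        rw [Matrix.conjTranspose_apply, star_trivial]
        have heach : (fun n => K n j i) = fun n => K n i j := by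
          funext n
          have := (hKn n).1.1.1.apply i j
          simpa using this
        refine tendsto_nhds_unique ?_ (hent i j)
        rw [← heach]
        exact hent j i
      have hsupp : ∀ i j : Fin m, i ≠ j → ¬ G.Adj i j → L i j = 0 := by
        intro i j hij hnadj
        have heach : (fun n => K n i j) = fun _ => (0:ℝ) :=
          funext fun n => (hKn n).1.2 i j hij hnadj
        refine tendsto_nhds_unique (hent i j) ?_
        rw [heach]
        exact tendsto_const_nhds
      have hpsd : L.PosSemidef := by
        refine Matrix.PosSemidef.of_dotProduct_mulVec_nonneg herm fun x => ?_
        rw [star_vec]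
        have hq : Tendsto (fun n => x ⬝ᵥ (K n).mulVec x) atTop (nhds (x ⬝ᵥ L.mulVec x)) :=
          ((continuous_quad x).tendsto L).comp hlim
        refine ge_of_tendsto' hq fun n => ?_
        have := (hKn n).1.1.posSemidef.dotProduct_mulVec_nonneg x
        rwa [star_vec] at this
      have htr_nonneg : ∀ n, 0 ≤ ((K n) * Sg).trace := fun n =>
        trace_psd_mul_nonneg (hKn n).1.1.posSemidef hSg.posSemidef
      have hlogdet_lb : ∀ n, c₀ ≤ Real.log (K n).det := by
        intro n
        have h1 : c₀ ≤ Real.log (K n).det - ((K n) * Sg).trace := (hKn n).2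
        linarith [htr_nonneg n]
      have hdetpos : 0 < L.det := by
        have hnonneg : 0 ≤ L.det := ge_of_tendsto' hdet fun n => (hKn n).1.1.det_pos.le
        rcases hnonneg.lt_or_eq with h | h
        · exact h
        · exfalso
          have h1 : Tendsto (fun n => (K n).det) atTop (nhdsWithin 0 (Set.Ioi 0)) := by
            rw [tendsto_nhdsWithin_iff]
            exact ⟨h ▸ hdet, Filter.Eventually.of_forall fun n => (hKn n).1.1.det_pos⟩
          have h2 : Tendsto (fun n => Real.log (K n).det) atTop atBot :=
            Real.tendsto_log_nhdsGT_zero.comp h1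
          obtain ⟨n, hn⟩ := (h2.eventually (eventually_lt_atBot c₀)).exists
          exact absurd (hlogdet_lb n) (not_le.mpr hn)
      have hLpd : L.PosDef := posdef_of_psd_det hpsd hdetpos.ne'
      have hFlim : Tendsto (fun n => logLik Sg (K n)) atTop (nhds (logLik Sg L)) := by
        have hlog : Tendsto (fun n => Real.log (K n).det) atTop (nhds (Real.log L.det)) :=
          ((Real.continuousAt_log hdetpos.ne').tendsto).comp hdet
        exact hlog.sub htrS
      have hFL : c₀ ≤ logLik Sg L := ge_of_tendsto' hFlim fun n => (hKn n).2
      exact ⟨⟨hLpd, hsupp⟩, hFL⟩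
    haveI : SequentialSpace (Matrix (Fin m) (Fin m) ℝ) :=
      inferInstanceAs (SequentialSpace (Fin m → Fin m → ℝ))
    have hTclosed : IsClosed T := hTseq.isClosed
    have hTcompact : IsCompact T := hQcompact.of_isClosed_subset hTclosed hTsub
    have hTne : T.Nonempty := ⟨1, one_mem_cone G, le_refl _⟩
    have hcont : ContinuousOn (logLik Sg) T := by
      intro K hKT
      have hdetK : K.det ≠ 0 := hKT.1.1.det_pos.ne'
      have : ContinuousAt (logLik Sg) K := by
        have h1 : ContinuousAt (fun K : Matrix (Fin m) (Fin m) ℝ => Real.log K.det) K :=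
          (Real.continuousAt_log hdetK).comp continuous_det.continuousAt
        exact h1.sub (continuous_traceMul Sg).continuousAt
      exact this.continuousWithinAt
    obtain ⟨Khat, hKhatT, hKhatmax⟩ := hTcompact.exists_isMaxOn hTne hcont
    refine ⟨Khat, hKhatT.1, fun K hK => ?_⟩
    rw [logLik_eq_of_mem hdiag hadj hK, logLik_eq_of_mem hdiag hadj hKhatT.1]
    by_cases hKT : K ∈ T
    · exact hKhatmax hKT
    · have hlt : logLik Sg K < c₀ := by
        by_contra hge
        exact hKT ⟨hK, not_lt.mp hge⟩
      have h1 : c₀ ≤ logLik Sg Khat := hKhatT.2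
      linarith


end GGM

theorem loglik_attains_sup_iff_pd_completion {m : ℕ} (G : SimpleGraph (Fin m))
    (S : Matrix (Fin m) (Fin m) ℝ) (hS : S.PosSemidef) :
    ((∃ Khat ∈ concentrationCone G,
        ∀ K ∈ concentrationCone G, logLik S K ≤ logLik S Khat) ↔
      (∃ Sigma : Matrix (Fin m) (Fin m) ℝ, Sigma.PosDef ∧
        (∀ i : Fin m, Sigma i i = S i i) ∧
        (∀ i j : Fin m, G.Adj i j → Sigma i j = S i j))) ∧
    (∀ Khat ∈ concentrationCone G,
      (∀ K ∈ concentrationCone G, logLik S K ≤ logLik S Khat) →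
        (∀ i : Fin m, Khat⁻¹ i i = S i i) ∧
        (∀ i j : Fin m, G.Adj i j → Khat⁻¹ i j = S i j)) := by
  refine ⟨⟨?_, ?_⟩, ?_⟩
  · rintro ⟨Khat, hKmem, hmax⟩
    exact ⟨Khat⁻¹, hKmem.1.inv,
      fun i => GGM.stationarity hS hKmem hmax i i (Or.inl rfl),
      fun i j h => GGM.stationarity hS hKmem hmax i j (Or.inr h)⟩
  · rintro ⟨Sg, hSg, hdiag, hadj⟩
    exact GGM.exists_max hS Sg hSg hdiag hadj
  · intro Khat hKmem hmax
    exact ⟨fun i => GGM.stationarity hS hKmem hmax i i (Or.inl rfl),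
      fun i j h => GGM.stationarity hS hKmem hmax i j (Or.inr h)⟩
end

section
/- Let G be a chordal graph on {1,…,m} with edge set E. Then every G-partial matrix all of whose submatrices corresponding to cliques of G are positive definite has a positive definite completion. Precisely: if M is a real symmetric m×m matrix such that for every clique C of G the principal submatrix M_{C×C} is positive definite, then there exists a positive definite matrix Σ with Σ_{ij} = M_{ij} for all (i,j) ∈ E. -/
/-!
Grone–Johnson–Sá–Wolkowicz theorem (chordal direction): if `G` is a chordal graph and
`M` is a symmetric real matrix whose principal submatrices indexed by the cliques of `G`
are all positive definite, then the `G`-partial matrix `M_G` has a positive definite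
completion.
-/

/-- A graph is chordal if it has no chordless (induced) cycle of length greater
than 3, i.e. no induced subgraph which is a cycle on `n ≥ 4` vertices. -/
def SimpleGraph.IsChordal {V : Type*} (G : SimpleGraph V) : Prop :=
  ¬ ∃ (n : ℕ) (v : Fin n → V), 4 ≤ n ∧ Function.Injective v ∧
    ∀ i j : Fin n, G.Adj (v i) (v j) ↔
      ((i.val + 1) % n = j.val ∨ (j.val + 1) % n = i.val)

open Matrix SimpleGraph

section MatrixLemmas

lemma posDef_submatrix_inj {ι V : Type} [Fintype ι] [Fintype V] [DecidableEq ι] [DecidableEq V]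
    {M : Matrix V V ℝ} (hM : M.PosDef) (f : ι → V) (hf : Function.Injective f) :
    (M.submatrix f f).PosDef := by
  classical
  set E : Matrix V ι ℝ := Matrix.of (fun v i => if f i = v then (1:ℝ) else 0) with hE
  have hEM : Eᴴ * M * E = M.submatrix f f := by
    ext i j
    simp only [Matrix.mul_apply, conjTranspose_apply, hE, Matrix.of_apply, submatrix_apply,
      star_trivial]
    simp [Finset.sum_mul, mul_ite, ite_mul, Finset.sum_ite_eq', Finset.sum_ite_eq]
  refine PosDef.of_dotProduct_mulVec_pos ?_ ?_
  · ext i j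
    simp only [conjTranspose_apply, submatrix_apply, star_trivial]
    exact congrFun (congrFun hM.1 (f i)) (f j)
  · intro x hx
    have hy : E *ᵥ x ≠ 0 := by
      obtain ⟨i₀, hi₀⟩ := Function.ne_iff.mp hx
      intro h
      apply hi₀
      have := congrFun h (f i₀)
      simpa [mulVec, dotProduct, hE, Finset.sum_eq_single i₀, hf.eq_iff,
        Finset.sum_ite_eq] using this
    have h2 := hM.dotProduct_mulVec_pos hy
    convert h2 using 1
    rw [← hEM]
    rw [← Matrix.mulVec_mulVec, ← Matrix.mulVec_mulVec, Matrix.dotProduct_mulVec,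
      ← Matrix.star_mulVec]

lemma markov_core {P S Q : Type} [Fintype P] [Fintype S] [Fintype Q]
    [DecidableEq P] [DecidableEq S] [DecidableEq Q]
    (A : Matrix (P ⊕ S) (P ⊕ S) ℝ) (hA : A.PosDef)
    (B : Matrix (S ⊕ Q) (S ⊕ Q) ℝ) (hB : B.PosDef)
    (hAB : ∀ i j : S, A (.inr i) (.inr j) = B (.inl i) (.inl j)) :
    ∃ Sig : Matrix ((P ⊕ S) ⊕ Q) ((P ⊕ S) ⊕ Q) ℝ, Sig.PosDef ∧
      (∀ i j : P ⊕ S, Sig (.inl i) (.inl j) = A i j) ∧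
      (∀ i j : S ⊕ Q,
        Sig (Sum.elim (fun s => Sum.inl (Sum.inr s)) Sum.inr i)
            (Sum.elim (fun s => Sum.inl (Sum.inr s)) Sum.inr j) = B i j) := by
  classical
  set S₀ : Matrix S S ℝ := B.submatrix Sum.inl Sum.inl with hS₀def
  set B₁₂ : Matrix S Q ℝ := B.submatrix Sum.inl Sum.inr with hB₁₂def
  set D : Matrix Q Q ℝ := B.submatrix Sum.inr Sum.inr with hDdef
  have hS₀ : S₀.PosDef := posDef_submatrix_inj hB Sum.inl Sum.inl_injective
  have hD : D.PosDef := posDef_submatrix_inj hB Sum.inr Sum.inr_injective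
  have : Invertible S₀ := hS₀.isUnit.invertible
  have : Invertible A := hA.isUnit.invertible
  set W : Matrix S Q ℝ := S₀⁻¹ * B₁₂ with hWdef
  set T : Matrix (P ⊕ S) Q ℝ :=
    Matrix.of (fun x q => Sum.elim (fun _ : P => (0:ℝ)) (fun s => W s q) x) with hTdef
  set C : Matrix (P ⊕ S) Q ℝ := A * T with hCdef
  -- B is the block matrix of its blocks
  have hBblocks : B = fromBlocks S₀ B₁₂ B₁₂ᴴ D := by
    ext i j
    cases i with
    | inl s => cases j with
      | inl t => rfl
      | inr q => rfl
    | inr q => cases j with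
      | inl t =>
          have := congrFun (congrFun hB.1 (Sum.inr q)) (Sum.inl t)
          simpa [fromBlocks, conjTranspose_apply, hB₁₂def] using this.symm
      | inr q' => rfl
  -- C on the S-rows equals B₁₂
  have hCS : ∀ (s : S) (q : Q), C (Sum.inr s) q = B₁₂ s q := by
    intro s q
    have : C (Sum.inr s) q = ∑ y : P ⊕ S, A (Sum.inr s) y * T y q := by
      simp [hCdef, Matrix.mul_apply]
    rw [this, Fintype.sum_sum_type]
    simp only [hTdef, Matrix.of_apply, Sum.elim_inl, Sum.elim_inr, mul_zero,
      Finset.sum_const_zero, zero_add]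
    have : ∑ t : S, A (Sum.inr s) (Sum.inr t) * W t q = (S₀ * W) s q := by
      rw [Matrix.mul_apply]
      refine Finset.sum_congr rfl fun t _ => ?_
      rw [hAB s t]
      rfl
    rw [this, hWdef, Matrix.mul_inv_cancel_left_of_invertible]
  -- the key Schur computation
  have hTAT : Cᴴ * A⁻¹ * C = B₁₂ᴴ * S₀⁻¹ * B₁₂ := by
    have h1 : Cᴴ * A⁻¹ * C = Tᴴ * A * T := by
      rw [hCdef, conjTranspose_mul, hA.1.eq, Matrix.mul_assoc, Matrix.mul_assoc,
        Matrix.inv_mul_cancel_left_of_invertible]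
      rw [← Matrix.mul_assoc]
    have h2 : Tᴴ * A * T = Wᴴ * S₀ * W := by
      ext q q'
      simp only [Matrix.mul_apply, conjTranspose_apply, hTdef, Matrix.of_apply,
        Fintype.sum_sum_type, Sum.elim_inl, Sum.elim_inr, star_zero, zero_mul, mul_zero,
        Finset.sum_const_zero, zero_add, add_zero]
      refine Finset.sum_congr rfl fun s _ => ?_
      refine congrArg₂ _ ?_ rfl
      refine Finset.sum_congr rfl fun t _ => ?_
      rw [hAB t s]
      rfl
    have h3 : Wᴴ * S₀ * W = B₁₂ᴴ * S₀⁻¹ * B₁₂ := by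
      rw [hWdef, conjTranspose_mul, hS₀.1.inv.eq, Matrix.mul_assoc, Matrix.mul_assoc,
        Matrix.mul_inv_cancel_left_of_invertible, ← Matrix.mul_assoc]
    rw [h1, h2, h3]
  -- the Schur complement of the S block of B is positive definite
  have hN : (D - B₁₂ᴴ * S₀⁻¹ * B₁₂).PosDef := by
    refine PosDef.of_dotProduct_mulVec_pos ?_ ?_
    · exact hD.1.sub (isHermitian_conjTranspose_mul_mul B₁₂ hS₀.1.inv)
    · intro z hz
      have key := schur_complement_eq₁₁ (A := S₀) B₁₂ D (-((S₀⁻¹ * B₁₂) *ᵥ z)) z hS₀.1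
      rw [neg_add_cancel] at key
      simp only [star_zero, zero_dotProduct, Matrix.vecMul_zero, zero_add] at key
      have hw : (-((S₀⁻¹ * B₁₂) *ᵥ z) ⊕ᵥ z) ≠ 0 := by
        intro h
        apply hz
        ext q
        exact congrFun h (Sum.inr q)
      have hpos := hB.dotProduct_mulVec_pos hw
      rw [hBblocks, Matrix.dotProduct_mulVec, key] at hpos
      simp only [Matrix.zero_vecMul, zero_dotProduct, zero_add] at hpos
      rw [Matrix.dotProduct_mulVec]
      exact hpos
  refine ⟨fromBlocks A C Cᴴ D, PosDef.of_dotProduct_mulVec_pos ?_ ?_, ?_, ?_⟩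
  · -- Hermitian
    rw [Matrix.IsHermitian, Matrix.fromBlocks_conjTranspose, conjTranspose_conjTranspose,
      hA.1.eq, hD.1.eq]
  · -- strict positivity
    intro x hx
    have hdecomp : x = (x ∘ Sum.inl) ⊕ᵥ (x ∘ Sum.inr) := (Sum.elim_comp_inl_inr x).symm
    have key := schur_complement_eq₁₁ (A := A) C D (x ∘ Sum.inl) (x ∘ Sum.inr) hA.1
    rw [Matrix.dotProduct_mulVec, hdecomp, key, hTAT]
    have ha : (0:ℝ) ≤ star ((x ∘ Sum.inl) + (A⁻¹ * C) *ᵥ (x ∘ Sum.inr)) ᵥ* A ⬝ᵥ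
        ((x ∘ Sum.inl) + (A⁻¹ * C) *ᵥ (x ∘ Sum.inr)) := by
      rw [← Matrix.dotProduct_mulVec]
      exact hA.posSemidef.dotProduct_mulVec_nonneg _
    have hb : (0:ℝ) ≤ star (x ∘ Sum.inr) ᵥ* (D - B₁₂ᴴ * S₀⁻¹ * B₁₂) ⬝ᵥ (x ∘ Sum.inr) := by
      rw [← Matrix.dotProduct_mulVec]
      exact hN.posSemidef.dotProduct_mulVec_nonneg _
    rcases eq_or_ne (x ∘ Sum.inr) 0 with hz | hz
    · have hu : x ∘ Sum.inl ≠ 0 := by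
        intro hu
        apply hx
        ext i
        cases i with
        | inl p => exact congrFun hu p
        | inr q => exact congrFun hz q
      have : (0:ℝ) < star ((x ∘ Sum.inl) + (A⁻¹ * C) *ᵥ (x ∘ Sum.inr)) ᵥ* A ⬝ᵥ
          ((x ∘ Sum.inl) + (A⁻¹ * C) *ᵥ (x ∘ Sum.inr)) := by
        rw [← Matrix.dotProduct_mulVec]
        apply hA.dotProduct_mulVec_pos
        rw [hz]
        simpa using hu
      linarith
    · have : (0:ℝ) < star (x ∘ Sum.inr) ᵥ* (D - B₁₂ᴴ * S₀⁻¹ * B₁₂) ⬝ᵥ (x ∘ Sum.inr) := by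
        rw [← Matrix.dotProduct_mulVec]
        exact hN.dotProduct_mulVec_pos hz
      linarith
  · intro i j
    rfl
  · intro i j
    cases i with
    | inl s => cases j with
      | inl t => exact hAB s t
      | inr q => exact hCS s q
    | inr q => cases j with
      | inl t =>
          show Cᴴ q (Sum.inr t) = B (Sum.inr q) (Sum.inl t)
          rw [conjTranspose_apply, hCS t q, star_trivial]
          have := congrFun (congrFun hB.1 (Sum.inr q)) (Sum.inl t)
          rw [conjTranspose_apply, star_trivial] at this
          exact this
      | inr q' => rfl

lemma markovV {V : Type} [Fintype V] [DecidableEq V] (A B : Finset V)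
    (hU : A ∪ B = Finset.univ)
    (SA : Matrix {x // x ∈ A} {x // x ∈ A} ℝ) (hA : SA.PosDef)
    (SB : Matrix {x // x ∈ B} {x // x ∈ B} ℝ) (hB : SB.PosDef)
    (hagree : ∀ (x y : V) (hxA : x ∈ A) (hyA : y ∈ A) (hxB : x ∈ B) (hyB : y ∈ B),
      SA ⟨x,hxA⟩ ⟨y,hyA⟩ = SB ⟨x,hxB⟩ ⟨y,hyB⟩) :
    ∃ Sig : Matrix V V ℝ, Sig.PosDef ∧
      (∀ (x y : V) (hx : x ∈ A) (hy : y ∈ A), Sig x y = SA ⟨x,hx⟩ ⟨y,hy⟩) ∧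
      (∀ (x y : V) (hx : x ∈ B) (hy : y ∈ B), Sig x y = SB ⟨x,hx⟩ ⟨y,hy⟩) := by
  classical
  set P : Finset V := A \ B with hP
  set S : Finset V := A ∩ B with hS
  set Q : Finset V := B \ A with hQ
  set eA : {x // x ∈ P} ⊕ {x // x ∈ S} → {x // x ∈ A} :=
    Sum.elim (fun p => ⟨p.1, (Finset.mem_sdiff.mp p.2).1⟩)
      (fun s => ⟨s.1, (Finset.mem_inter.mp s.2).1⟩) with heA
  set eB : {x // x ∈ S} ⊕ {x // x ∈ Q} → {x // x ∈ B} :=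
    Sum.elim (fun s => ⟨s.1, (Finset.mem_inter.mp s.2).2⟩)
      (fun q => ⟨q.1, (Finset.mem_sdiff.mp q.2).1⟩) with heB
  have heAinj : Function.Injective eA := by
    rintro (p | s) (p' | s') h <;>
      simp only [heA, Sum.elim_inl, Sum.elim_inr, Subtype.mk.injEq] at h
    · exact congrArg Sum.inl (Subtype.ext h)
    · exfalso
      have hs : (p : V) ∈ S := h ▸ s'.2
      exact (Finset.mem_sdiff.mp p.2).2 (Finset.mem_inter.mp hs).2
    · exfalso
      have hs : (p' : V) ∈ S := h ▸ s.2
      exact (Finset.mem_sdiff.mp p'.2).2 (Finset.mem_inter.mp hs).2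
    · exact congrArg Sum.inr (Subtype.ext h)
  have heBinj : Function.Injective eB := by
    rintro (s | q) (s' | q') h <;>
      simp only [heB, Sum.elim_inl, Sum.elim_inr, Subtype.mk.injEq] at h
    · exact congrArg Sum.inl (Subtype.ext h)
    · exfalso
      have hs : (q' : V) ∈ S := h ▸ s.2
      exact (Finset.mem_sdiff.mp q'.2).2 (Finset.mem_inter.mp hs).1
    · exfalso
      have hs : (q : V) ∈ S := h ▸ s'.2
      exact (Finset.mem_sdiff.mp q.2).2 (Finset.mem_inter.mp hs).1
    · exact congrArg Sum.inr (Subtype.ext h)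
  obtain ⟨Sc, hSc, hScA, hScB⟩ := markov_core
    (SA.submatrix eA eA) (posDef_submatrix_inj hA eA heAinj)
    (SB.submatrix eB eB) (posDef_submatrix_inj hB eB heBinj)
    (by
      intro i j
      simp only [submatrix_apply, heA, heB, Sum.elim_inl, Sum.elim_inr]
      exact hagree i.1 j.1 _ _ _ _)
  set e : V → ({x // x ∈ P} ⊕ {x // x ∈ S}) ⊕ {x // x ∈ Q} := fun v =>
    if h : v ∈ A then
      (if h2 : v ∈ B then Sum.inl (Sum.inr ⟨v, Finset.mem_inter.mpr ⟨h, h2⟩⟩)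
        else Sum.inl (Sum.inl ⟨v, Finset.mem_sdiff.mpr ⟨h, h2⟩⟩))
    else Sum.inr ⟨v, Finset.mem_sdiff.mpr ⟨by
      have : v ∈ A ∪ B := hU ▸ Finset.mem_univ v
      exact (Finset.mem_union.mp this).resolve_left h, h⟩⟩ with he
  have heinj : Function.Injective e := by
    have hleft : ∀ v, (Sum.elim (Sum.elim (Subtype.val) (Subtype.val)) (Subtype.val)) (e v) = v := by
      intro v
      simp only [he]
      split_ifs <;> rfl
    intro x y h
    rw [← hleft x, ← hleft y, h]
  have hAcase : ∀ (x : V) (hx : x ∈ A), ∃ w, e x = Sum.inl w ∧ eA w = ⟨x, hx⟩ := by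
    intro x hx
    simp only [he]
    rw [dif_pos hx]
    by_cases h2 : x ∈ B
    · exact ⟨Sum.inr ⟨x, Finset.mem_inter.mpr ⟨hx, h2⟩⟩, by rw [dif_pos h2], rfl⟩
    · exact ⟨Sum.inl ⟨x, Finset.mem_sdiff.mpr ⟨hx, h2⟩⟩, by rw [dif_neg h2], rfl⟩
  have hBcase : ∀ (x : V) (hx : x ∈ B), ∃ w,
      e x = Sum.elim (fun s => Sum.inl (Sum.inr s)) Sum.inr w ∧ eB w = ⟨x, hx⟩ := by
    intro x hx
    simp only [he]
    by_cases h : x ∈ A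
    · exact ⟨Sum.inl ⟨x, Finset.mem_inter.mpr ⟨h, hx⟩⟩, by rw [dif_pos h, dif_pos hx]; rfl, rfl⟩
    · exact ⟨Sum.inr ⟨x, Finset.mem_sdiff.mpr ⟨hx, h⟩⟩, by rw [dif_neg h]; rfl, rfl⟩
  refine ⟨Sc.submatrix e e, posDef_submatrix_inj hSc e heinj, ?_, ?_⟩
  · intro x y hx hy
    obtain ⟨w, hw1, hw2⟩ := hAcase x hx
    obtain ⟨w', hw1', hw2'⟩ := hAcase y hy
    rw [submatrix_apply, hw1, hw1', hScA w w', submatrix_apply, hw2, hw2']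
  · intro x y hx hy
    obtain ⟨w, hw1, hw2⟩ := hBcase x hx
    obtain ⟨w', hw1', hw2'⟩ := hBcase y hy
    rw [submatrix_apply, hw1, hw1', hScB w w', submatrix_apply, hw2, hw2']

end MatrixLemmas

section GraphLemmas

variable {V : Type} {G : SimpleGraph V}

lemma walk_take {u v : V} (w : G.Walk u v) (n : ℕ) (hn : n ≤ w.length) :
    ∃ (x : V) (w' : G.Walk u x), x = w.getVert n ∧ w'.length = n ∧
      ∀ y ∈ w'.support, y ∈ w.support := by
  induction w generalizing n with
  | nil =>
      simp only [SimpleGraph.Walk.length_nil, Nat.le_zero] at hn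
      subst hn
      exact ⟨_, SimpleGraph.Walk.nil, rfl, by simp, by simp⟩
  | @cons a b c h q ih =>
      cases n with
      | zero => exact ⟨a, SimpleGraph.Walk.nil, rfl, by simp, by simp⟩
      | succ n =>
          obtain ⟨x, q', hx, hq1, hq2⟩ := ih n (by simpa using hn)
          refine ⟨x, SimpleGraph.Walk.cons h q', by rw [hx]; rfl, by simp [hq1], ?_⟩
          intro y hy
          simp only [SimpleGraph.Walk.support_cons, List.mem_cons] at hy ⊢
          rcases hy with rfl | hy
          · exact Or.inl rfl
          · exact Or.inr (hq2 y hy)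

lemma walk_drop {u v : V} (w : G.Walk u v) (n : ℕ) :
    ∃ (x : V) (w' : G.Walk x v), x = w.getVert n ∧ w'.length = w.length - n ∧
      ∀ y ∈ w'.support, y ∈ w.support := by
  induction w generalizing n with
  | nil => exact ⟨_, SimpleGraph.Walk.nil, rfl, by simp, by simp⟩
  | @cons a b c h q ih =>
      cases n with
      | zero => exact ⟨a, SimpleGraph.Walk.cons h q, rfl, by simp, by simp⟩
      | succ n =>
          obtain ⟨x, q', hx, hq1, hq2⟩ := ih n
          refine ⟨x, q', by rw [hx]; rfl, by simp [hq1], ?_⟩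
          intro y hy
          simp only [SimpleGraph.Walk.support_cons, List.mem_cons]
          exact Or.inr (hq2 y hy)

lemma exists_min_path (RR : V → Prop) (s t : V) (hst : s ≠ t) (hadjst : ¬ G.Adj s t)
    (hs : ¬ RR s) (ht : ¬ RR t)
    (hnb_s : ∃ x, RR x ∧ G.Adj s x) (hnb_t : ∃ y, RR y ∧ G.Adj t y)
    (hconn : ∀ x y, RR x → RR y → ∃ w : G.Walk x y, ∀ z ∈ w.support, RR z) :
    ∃ P : G.Walk s t, 2 ≤ P.length ∧
      (∀ i j, i < j → j ≤ P.length → P.getVert i ≠ P.getVert j) ∧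
      (∀ i j, i + 1 < j → j ≤ P.length → ¬ G.Adj (P.getVert i) (P.getVert j)) ∧
      (∀ i, 0 < i → i < P.length → RR (P.getVert i)) := by
  classical
  set Pred : G.Walk s t → Prop := fun w => ∀ z ∈ w.support, z = s ∨ z = t ∨ RR z with hPred
  have hne : ∃ n, ∃ w : G.Walk s t, Pred w ∧ w.length = n := by
    obtain ⟨x, hx, hsx⟩ := hnb_s
    obtain ⟨y, hy, hty⟩ := hnb_t
    obtain ⟨wxy, hwxy⟩ := hconn x y hx hy
    refine ⟨_, SimpleGraph.Walk.cons hsx (wxy.concat hty.symm), fun z hz => ?_, rfl⟩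
    simp only [SimpleGraph.Walk.support_cons, List.mem_cons,
      SimpleGraph.Walk.support_concat, List.concat_eq_append, List.mem_append,
      List.mem_singleton] at hz
    rcases hz with rfl | hz | hz
    · exact Or.inl rfl
    · exact Or.inr (Or.inr (hwxy z hz))
    · rcases hz with rfl | hz
      · exact Or.inr (Or.inl rfl)
      · simp at hz
  obtain ⟨P, hPpred, hPlen⟩ := Nat.find_spec hne
  have hmin : ∀ w : G.Walk s t, Pred w → P.length ≤ w.length := by
    intro w hw
    rw [hPlen]
    exact Nat.find_le ⟨w, hw, rfl⟩
  clear hPlen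
  have hk2 : 2 ≤ P.length := by
    rcases Nat.lt_or_ge P.length 2 with h | h
    · interval_cases h' : P.length
      · exact absurd (SimpleGraph.Walk.eq_of_length_eq_zero h') hst
      · exfalso
        have := P.adj_getVert_succ (i := 0) (by omega)
        rw [SimpleGraph.Walk.getVert_zero] at this
        have h1 : P.getVert 1 = t := by
          have := P.getVert_length
          rw [h'] at this
          exact this
        exact hadjst (h1 ▸ this)
    · exact h
  have hinj : ∀ i j, i < j → j ≤ P.length → P.getVert i ≠ P.getVert j := by
    intro i j hij hjk heq
    obtain ⟨x1, w1, hx1, hl1, hs1⟩ := walk_take P i (by omega)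
    obtain ⟨x2, w2, hx2, hl2, hs2⟩ := walk_drop P j
    have hx12 : x2 = x1 := by rw [hx1, hx2, heq]
    set glue := w1.append (w2.copy hx12 rfl) with hglue
    have hgluelen : glue.length = i + (P.length - j) := by
      simp [hglue, SimpleGraph.Walk.length_append, hl1, hl2]
    have hgluepred : Pred glue := by
      intro z hz
      rw [hglue, SimpleGraph.Walk.mem_support_append_iff] at hz
      rcases hz with hz | hz
      · exact hPpred z (hs1 z hz)
      · exact hPpred z (hs2 z (by simpa using hz))
    have := hmin glue hgluepred
    omega
  have hchord : ∀ i j, i + 1 < j → j ≤ P.length →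
      ¬ G.Adj (P.getVert i) (P.getVert j) := by
    intro i j hij hjk hadj
    obtain ⟨x1, w1, hx1, hl1, hs1⟩ := walk_take P i (by omega)
    obtain ⟨x2, w2, hx2, hl2, hs2⟩ := walk_drop P j
    have hadj2 : G.Adj x1 x2 := by rw [hx1, hx2]; exact hadj
    set glue := w1.append (SimpleGraph.Walk.cons hadj2 w2) with hglue
    have hgluelen : glue.length = i + (1 + (P.length - j)) := by
      simp [hglue, SimpleGraph.Walk.length_append, hl1, hl2]
      omega
    have hgluepred : Pred glue := by
      intro z hz
      rw [hglue, SimpleGraph.Walk.mem_support_append_iff] at hz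
      rcases hz with hz | hz
      · exact hPpred z (hs1 z hz)
      · rw [SimpleGraph.Walk.support_cons, List.mem_cons] at hz
        rcases hz with rfl | hz
        · exact hPpred z (hs1 z (hx1 ▸ w1.end_mem_support))
        · exact hPpred z (hs2 z hz)
    have := hmin glue hgluepred
    omega
  refine ⟨P, hk2, hinj, hchord, ?_⟩
  intro i h0 hik
  have hmem : P.getVert i ∈ P.support :=
    SimpleGraph.Walk.mem_support_iff_exists_getVert.mpr ⟨i, rfl, by omega⟩
  rcases hPpred _ hmem with h | h | h
  · exact absurd h.symm (by simpa using hinj 0 i h0 (by omega))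
  · exfalso
    have := hinj i P.length hik le_rfl
    rw [P.getVert_length] at this
    exact this h
  · exact h

lemma cycle_contradiction (hch : G.IsChordal) {s t : V} (hst : s ≠ t)
    (hadjst : ¬ G.Adj s t) (R R' : V → Prop)
    (hdisj : ∀ x y, R x → R' y → x ≠ y ∧ ¬ G.Adj x y)
    (P : G.Walk s t) (hk2 : 2 ≤ P.length)
    (hPinj : ∀ i j, i < j → j ≤ P.length → P.getVert i ≠ P.getVert j)
    (hPchord : ∀ i j, i + 1 < j → j ≤ P.length → ¬ G.Adj (P.getVert i) (P.getVert j))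
    (hPint : ∀ i, 0 < i → i < P.length → R (P.getVert i))
    (Q : G.Walk s t) (hl2 : 2 ≤ Q.length)
    (hQinj : ∀ i j, i < j → j ≤ Q.length → Q.getVert i ≠ Q.getVert j)
    (hQchord : ∀ i j, i + 1 < j → j ≤ Q.length → ¬ G.Adj (Q.getVert i) (Q.getVert j))
    (hQint : ∀ i, 0 < i → i < Q.length → R' (Q.getVert i)) : False := by
  set k := P.length with hk
  set l := Q.length with hl
  set n := k + l with hn
  set v : Fin n → V := fun i => if (i : ℕ) ≤ k then P.getVert i else Q.getVert (n - i) with hv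
  have hn4 : 4 ≤ n := by omega
  have hvP : ∀ i : Fin n, (i : ℕ) ≤ k → v i = P.getVert i := fun i h => if_pos h
  have hvQ : ∀ i : Fin n, k ≤ (i : ℕ) → v i = Q.getVert (n - i) := by
    intro i h
    by_cases h2 : (i : ℕ) ≤ k
    · have he : (i : ℕ) = k := le_antisymm h2 h
      rw [hv]
      simp only [if_pos h2, he]
      rw [hk, P.getVert_length]
      have : n - k = l := by omega
      rw [this, hl, Q.getVert_length]
      simp
    · exact if_neg h2
  have hQ0 : Q.getVert 0 = s := Q.getVert_zero
  have hP0 : P.getVert 0 = s := P.getVert_zero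
  -- non-adjacency and distinctness for i < j
  have auxne : ∀ i j : Fin n, (i : ℕ) < (j : ℕ) → v i ≠ v j := by
    intro i j hij
    have hjn : (j : ℕ) < n := j.isLt
    by_cases hjk : (j : ℕ) ≤ k
    · rw [hvP i (by omega), hvP j hjk]
      exact hPinj i j hij hjk
    · push_neg at hjk
      have hp1 : 1 ≤ n - (j : ℕ) := by omega
      have hpl : n - (j : ℕ) ≤ l - 1 := by omega
      by_cases hik : k ≤ (i : ℕ)
      · rw [hvQ i hik, hvQ j (by omega)]
        exact (hQinj (n - j) (n - i) (by omega) (by omega)).symm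
      · push_neg at hik
        rw [hvP i (by omega), hvQ j (by omega)]
        rcases Nat.eq_zero_or_pos (i : ℕ) with hi0 | hi0
        · rw [hi0, hP0]
          have h6 := hQinj 0 (n - j) (by omega) (by omega)
          rw [hQ0] at h6
          exact h6
        · exact (hdisj _ _ (hPint i hi0 hik) (hQint (n - j) (by omega) (by omega))).1
  have aux : ∀ i j : Fin n, (i : ℕ) < (j : ℕ) →
      (G.Adj (v i) (v j) ↔ ((j : ℕ) = (i : ℕ) + 1 ∨ ((i : ℕ) = 0 ∧ (j : ℕ) = n - 1))) := by
    intro i j hij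
    have hjn : (j : ℕ) < n := j.isLt
    by_cases hjk : (j : ℕ) ≤ k
    · rw [hvP i (by omega), hvP j hjk]
      constructor
      · intro hadj
        by_contra hcon
        push_neg at hcon
        rcases Nat.lt_or_ge ((i : ℕ) + 1) (j : ℕ) with h | h
        · exact hPchord i j h hjk hadj
        · exact hcon.1 (by omega)
      · rintro (h1 | ⟨h1, h2⟩)
        · rw [h1]
          exact P.adj_getVert_succ (by omega)
        · omega
    · push_neg at hjk
      have hp1 : 1 ≤ n - (j : ℕ) := by omega
      have hpl : n - (j : ℕ) ≤ l - 1 := by omega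
      by_cases hik : k ≤ (i : ℕ)
      · rw [hvQ i hik, hvQ j (by omega)]
        have hq : n - (j : ℕ) < n - (i : ℕ) := by omega
        have hql : n - (i : ℕ) ≤ l := by omega
        constructor
        · intro hadj
          by_contra hcon
          push_neg at hcon
          rcases Nat.lt_or_ge (n - (j : ℕ) + 1) (n - (i : ℕ)) with h | h
          · exact hQchord (n - j) (n - i) h hql hadj.symm
          · exact hcon.1 (by omega)
        · rintro (h1 | ⟨h1, h2⟩)
          · have : n - (j : ℕ) + 1 = n - (i : ℕ) := by omega
            rw [← this]
            exact (Q.adj_getVert_succ (by omega)).symm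
          · omega
      · push_neg at hik
        rw [hvP i (by omega), hvQ j (by omega)]
        rcases Nat.eq_zero_or_pos (i : ℕ) with hi0 | hi0
        · rw [hi0, hP0]
          constructor
          · intro hadj
            by_contra hcon
            push_neg at hcon
            have hne1 : (j : ℕ) ≠ n - 1 := fun h => (hcon.2 (by omega)) h
            have h7 : 0 + 1 < n - (j : ℕ) := by omega
            have h8 := hQchord 0 (n - j) h7 (by omega)
            rw [hQ0] at h8
            exact h8 hadj
          · rintro (h1 | ⟨h1, h2⟩)
            · omega
            · have h9 : n - (j : ℕ) = 1 := by omega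
              have h4 := Q.adj_getVert_succ (i := 0) (by omega)
              rw [hQ0] at h4
              rw [h9]
              exact h4
        · constructor
          · intro hadj
            exact absurd hadj
              (hdisj _ _ (hPint i hi0 hik) (hQint (n - j) (by omega) (by omega))).2
          · rintro (h1 | ⟨h1, h2⟩)
            · omega
            · omega
  apply hch
  refine ⟨n, v, hn4, ?_, ?_⟩
  · intro i j heq
    by_contra hne
    have hne2 : (i : ℕ) ≠ (j : ℕ) := fun h => hne (Fin.ext h)
    rcases Nat.lt_or_ge (i : ℕ) (j : ℕ) with h | h
    · exact auxne i j h heq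
    · exact auxne j i (by omega) heq.symm
  · intro i j
    have hin : (i : ℕ) < n := i.isLt
    have hjn : (j : ℕ) < n := j.isLt
    rcases lt_trichotomy (i : ℕ) (j : ℕ) with h | h | h
    · rw [aux i j h]
      constructor
      · rintro (h1 | ⟨h1, h2⟩)
        · left
          rw [Nat.mod_eq_of_lt (by omega)]
          omega
        · right
          have : (j : ℕ) + 1 = n := by omega
          rw [this, Nat.mod_self]
          omega
      · rintro (h1 | h1)
        · left
          rw [Nat.mod_eq_of_lt (by omega)] at h1
          omega
        · rcases Nat.lt_or_ge ((j : ℕ) + 1) n with h2 | h2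
          · rw [Nat.mod_eq_of_lt h2] at h1
            omega
          · have : (j : ℕ) + 1 = n := by omega
            rw [this, Nat.mod_self] at h1
            right
            omega
    · have : i = j := Fin.ext h
      subst this
      constructor
      · intro hadj
        exact absurd hadj (G.irrefl)
      · rintro (h1 | h1) <;>
        · rcases Nat.lt_or_ge ((i : ℕ) + 1) n with h2 | h2
          · rw [Nat.mod_eq_of_lt h2] at h1
            omega
          · have h3 : (i : ℕ) + 1 = n := by omega
            rw [h3, Nat.mod_self] at h1
            omega
    · rw [G.adj_comm, aux j i h]
      constructor
      · rintro (h1 | ⟨h1, h2⟩)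
        · right
          rw [Nat.mod_eq_of_lt (by omega)]
          omega
        · left
          have : (i : ℕ) + 1 = n := by omega
          rw [this, Nat.mod_self]
          omega
      · rintro (h1 | h1)
        · rcases Nat.lt_or_ge ((i : ℕ) + 1) n with h2 | h2
          · rw [Nat.mod_eq_of_lt h2] at h1
            omega
          · have h3 : (i : ℕ) + 1 = n := by omega
            rw [h3, Nat.mod_self] at h1
            right
            omega
        · left
          rw [Nat.mod_eq_of_lt (by omega)] at h1
          omega

lemma chordal_separation [Fintype V] [DecidableEq V]
    (hch : G.IsChordal) {a b : V} (hab : a ≠ b) (hnadj : ¬ G.Adj a b) :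
    ∃ A B : Finset V, A ∪ B = Finset.univ ∧ a ∉ B ∧ b ∉ A ∧
      G.IsClique ((A ∩ B : Finset V) : Set V) ∧
      (∀ x y, x ∈ A → y ∈ B → x ∉ B → y ∉ A → ¬ G.Adj x y) := by
  classical
  set Sep : Finset V → Prop :=
    fun s => a ∉ s ∧ b ∉ s ∧ ∀ w : G.Walk a b, ∃ x ∈ w.support, x ∈ s with hSep
  have hsep0 : Sep (Finset.univ \ {a, b}) := by
    refine ⟨by simp, by simp, fun w => ?_⟩
    by_contra hcon
    push_neg at hcon
    have hsupp : ∀ x ∈ w.support, x = a ∨ x = b := by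
      intro x hx
      have := hcon x hx
      simp only [Finset.mem_sdiff, Finset.mem_univ, true_and, Finset.mem_insert,
        Finset.mem_singleton, not_not] at this
      exact this
    cases w with
    | nil => exact hab rfl
    | @cons _ x _ h q =>
        have hx : x ∈ (SimpleGraph.Walk.cons h q).support := by
          simp [SimpleGraph.Walk.support_cons]
        rcases hsupp x hx with rfl | rfl
        · exact G.irrefl h
        · exact hnadj h
  obtain ⟨S, hSmem, hSmin⟩ := Finset.exists_min_image
    ((Finset.univ : Finset (Finset V)).filter Sep) Finset.card
    ⟨_, Finset.mem_filter.mpr ⟨Finset.mem_univ _, hsep0⟩⟩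
  have hSsep : Sep S := (Finset.mem_filter.mp hSmem).2
  obtain ⟨haS, hbS, hhit⟩ := hSsep
  set R : V → Prop := fun x => ∃ w : G.Walk a x, ∀ y ∈ w.support, y ∉ S with hR
  set R' : V → Prop := fun x => ∃ w : G.Walk b x, ∀ y ∈ w.support, y ∉ S with hR'
  have hRa : R a := ⟨SimpleGraph.Walk.nil, by simpa using haS⟩
  have hR'b : R' b := ⟨SimpleGraph.Walk.nil, by simpa using hbS⟩
  have hRS : ∀ x, R x → x ∉ S := fun x ⟨w, hw⟩ => hw x w.end_mem_support
  have hR'S : ∀ x, R' x → x ∉ S := fun x ⟨w, hw⟩ => hw x w.end_mem_support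
  -- no connection between the two sides
  have hcross : ∀ x y, R x → R' y → x = y ∨ G.Adj x y → False := by
    rintro x y ⟨wx, hwx⟩ ⟨wy, hwy⟩ hcon
    have : ∃ w : G.Walk a b, ∀ z ∈ w.support, z ∉ S := by
      rcases hcon with rfl | hadj
      · refine ⟨wx.append wy.reverse, fun z hz => ?_⟩
        rw [SimpleGraph.Walk.mem_support_append_iff] at hz
        rcases hz with hz | hz
        · exact hwx z hz
        · exact hwy z (by simpa [SimpleGraph.Walk.support_reverse] using hz)
      · refine ⟨wx.append (SimpleGraph.Walk.cons hadj wy.reverse), fun z hz => ?_⟩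
        rw [SimpleGraph.Walk.mem_support_append_iff] at hz
        rcases hz with hz | hz
        · exact hwx z hz
        · simp only [SimpleGraph.Walk.support_cons, List.mem_cons,
            SimpleGraph.Walk.support_reverse, List.mem_reverse] at hz
          rcases hz with rfl | hz
          · exact hwx z wx.end_mem_support
          · exact hwy z hz
    obtain ⟨w, hw⟩ := this
    obtain ⟨x', hx', hx'S⟩ := hhit w
    exact hw x' hx' hx'S
  -- extending along S-avoiding walks
  have hext : ∀ (x z : V), R x → ∀ w : G.Walk x z, (∀ y ∈ w.support, y ∉ S) →
      ∀ y ∈ w.support, R y := by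
    rintro x z ⟨wa, hwa⟩ w hw y hy
    refine ⟨wa.append (w.takeUntil y hy), fun u hu => ?_⟩
    rw [SimpleGraph.Walk.mem_support_append_iff] at hu
    rcases hu with hu | hu
    · exact hwa u hu
    · exact hw u (SimpleGraph.Walk.support_takeUntil_subset w hy hu)
  have hext' : ∀ (x z : V), R' x → ∀ w : G.Walk x z, (∀ y ∈ w.support, y ∉ S) →
      ∀ y ∈ w.support, R' y := by
    rintro x z ⟨wa, hwa⟩ w hw y hy
    refine ⟨wa.append (w.takeUntil y hy), fun u hu => ?_⟩
    rw [SimpleGraph.Walk.mem_support_append_iff] at hu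
    rcases hu with hu | hu
    · exact hwa u hu
    · exact hw u (SimpleGraph.Walk.support_takeUntil_subset w hy hu)
  -- every vertex of S has neighbours on both sides
  have haux : ∀ (c d : V) (w : G.Walk c d) (s : V), s ∈ w.support → c ≠ s →
      (∀ x ∈ w.support, x ∉ S.erase s) →
      ∃ x, G.Adj s x ∧ ∃ w' : G.Walk c x, ∀ y ∈ w'.support, y ∉ S := by
    intro c d w s hs hcs hmiss
    set w1 := w.takeUntil s hs with hw1
    have hcount : List.count s w1.support = 1 := w.count_support_takeUntil_eq_one hs
    have hw1sub := SimpleGraph.Walk.support_takeUntil_subset w hs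
    cases hrev : w1.reverse with
    | nil =>
        exfalso
        have : w1.length = 0 := by
          have := congrArg SimpleGraph.Walk.length hrev
          simpa using this
        exact hcs (SimpleGraph.Walk.eq_of_length_eq_zero this)
    | @cons _ x _ h q =>
        refine ⟨x, h, q.reverse, fun y hy => ?_⟩
        have hysup : y ∈ q.support := by
          simpa [SimpleGraph.Walk.support_reverse] using hy
        have hyw1 : y ∈ w1.support := by
          have : y ∈ w1.reverse.support := by
            rw [hrev, SimpleGraph.Walk.support_cons]
            exact List.mem_cons_of_mem _ hysup
          simpa [SimpleGraph.Walk.support_reverse] using this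
        have hyS : y ∉ S.erase s := hmiss y (hw1sub hyw1)
        have hys : y ≠ s := by
          rintro rfl
          have hcount2 : List.count y w1.reverse.support = 1 := by
            rw [SimpleGraph.Walk.support_reverse, List.count_reverse]
            exact hcount
          rw [hrev, SimpleGraph.Walk.support_cons, List.count_cons_self] at hcount2
          have : List.count y q.support = 0 := by omega
          exact (List.count_eq_zero.mp this) hysup
        intro hyS2
        exact hyS (Finset.mem_erase.mpr ⟨hys, hyS2⟩)
  have hneigh : ∀ s ∈ S, (∃ x, R x ∧ G.Adj s x) ∧ (∃ y, R' y ∧ G.Adj s y) := by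
    intro s hsS
    have hnotsep : ¬ Sep (S.erase s) := by
      intro hcon
      have hmem : S.erase s ∈ (Finset.univ : Finset (Finset V)).filter Sep :=
        Finset.mem_filter.mpr ⟨Finset.mem_univ _, hcon⟩
      have := hSmin _ hmem
      have hlt : (S.erase s).card < S.card := Finset.card_erase_lt_of_mem hsS
      omega
    have h3 : ¬ ∀ w : G.Walk a b, ∃ x ∈ w.support, x ∈ S.erase s := fun h =>
      hnotsep ⟨fun hc => haS (Finset.mem_of_mem_erase hc),
        fun hc => hbS (Finset.mem_of_mem_erase hc), h⟩
    push_neg at h3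
    obtain ⟨w, hw⟩ := h3
    have hsw : s ∈ w.support := by
      obtain ⟨x, hx1, hx2⟩ := hhit w
      have := hw x hx1
      rcases eq_or_ne x s with rfl | hxs
      · exact hx1
      · exact absurd (Finset.mem_erase.mpr ⟨hxs, hx2⟩) this
    constructor
    · obtain ⟨x, hadj, w', hw'⟩ := haux a b w s hsw (fun h => haS (h ▸ hsS)) hw
      exact ⟨x, ⟨w', hw'⟩, hadj⟩
    · have hsw' : s ∈ w.reverse.support := by
        rw [SimpleGraph.Walk.support_reverse]; simpa using hsw
      obtain ⟨x, hadj, w', hw'⟩ := haux b a w.reverse s hsw'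
        (fun h => hbS (h ▸ hsS))
        (fun x hx => hw x (by simpa [SimpleGraph.Walk.support_reverse] using hx))
      exact ⟨x, ⟨w', hw'⟩, hadj⟩
  -- connectivity inside each side
  have hconn : ∀ x y, R x → R y → ∃ w : G.Walk x y, ∀ z ∈ w.support, R z := by
    rintro x y hx hy
    obtain ⟨wx, hwx⟩ := hx
    obtain ⟨wy, hwy⟩ := hy
    refine ⟨wx.reverse.append wy, fun z hz => ?_⟩
    rw [SimpleGraph.Walk.mem_support_append_iff] at hz
    rcases hz with hz | hz
    · rw [SimpleGraph.Walk.support_reverse, List.mem_reverse] at hz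
      exact ⟨wx.takeUntil z hz, fun u hu => hwx u (SimpleGraph.Walk.support_takeUntil_subset wx hz hu)⟩
    · exact ⟨wy.takeUntil z hz, fun u hu => hwy u (SimpleGraph.Walk.support_takeUntil_subset wy hz hu)⟩
  have hconn' : ∀ x y, R' x → R' y → ∃ w : G.Walk x y, ∀ z ∈ w.support, R' z := by
    rintro x y hx hy
    obtain ⟨wx, hwx⟩ := hx
    obtain ⟨wy, hwy⟩ := hy
    refine ⟨wx.reverse.append wy, fun z hz => ?_⟩
    rw [SimpleGraph.Walk.mem_support_append_iff] at hz
    rcases hz with hz | hz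
    · rw [SimpleGraph.Walk.support_reverse, List.mem_reverse] at hz
      exact ⟨wx.takeUntil z hz, fun u hu => hwx u (SimpleGraph.Walk.support_takeUntil_subset wx hz hu)⟩
    · exact ⟨wy.takeUntil z hz, fun u hu => hwy u (SimpleGraph.Walk.support_takeUntil_subset wy hz hu)⟩
  -- S is a clique
  have hclique : ∀ s t, s ∈ S → t ∈ S → s ≠ t → G.Adj s t := by
    intro s t hsS htS hst
    by_contra hadjst
    obtain ⟨⟨xs, hxs, hsxs⟩, ⟨ys, hys, hsys⟩⟩ := hneigh s hsS
    obtain ⟨⟨xt, hxt, htxt⟩, ⟨yt, hyt, htyt⟩⟩ := hneigh t htS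
    obtain ⟨P, hPk, hPinj, hPchord, hPint⟩ := exists_min_path R s t hst hadjst
      (fun h => hRS s h hsS) (fun h => hRS t h htS)
      ⟨xs, hxs, hsxs⟩ ⟨xt, hxt, htxt⟩ hconn
    obtain ⟨Q, hQl, hQinj, hQchord, hQint⟩ := exists_min_path R' s t hst hadjst
      (fun h => hR'S s h hsS) (fun h => hR'S t h htS)
      ⟨ys, hys, hsys⟩ ⟨yt, hyt, htyt⟩ hconn'
    exact cycle_contradiction hch hst hadjst R R'
      (fun x y hx hy => ⟨fun heq => hcross x y hx hy (Or.inl heq),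
        fun hadj => hcross x y hx hy (Or.inr hadj)⟩)
      P hPk hPinj hPchord hPint Q hQl hQinj hQchord hQint
  -- assemble the two sides
  refine ⟨S ∪ Finset.univ.filter (fun x => R x), Finset.univ.filter (fun x => ¬ R x),
    ?_, ?_, ?_, ?_, ?_⟩
  · apply Finset.eq_univ_of_forall
    intro x
    rw [Finset.mem_union]
    by_cases h : R x
    · exact Or.inl (Finset.mem_union.mpr (Or.inr (Finset.mem_filter.mpr ⟨Finset.mem_univ x, h⟩)))
    · exact Or.inr (Finset.mem_filter.mpr ⟨Finset.mem_univ x, h⟩)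
  · simp only [Finset.mem_filter, Finset.mem_univ, true_and, not_not]
    exact hRa
  · simp only [Finset.mem_union, Finset.mem_filter, Finset.mem_univ, true_and]
    rintro (h | h)
    · exact hbS h
    · exact hcross b b h hR'b (Or.inl rfl)
  · have hSeq : (S ∪ Finset.univ.filter (fun x => R x)) ∩
        Finset.univ.filter (fun x => ¬ R x) = S := by
      ext x
      simp only [Finset.mem_inter, Finset.mem_union, Finset.mem_filter, Finset.mem_univ, true_and]
      constructor
      · rintro ⟨h1 | h1, h2⟩
        · exact h1
        · exact absurd h1 h2
      · intro h
        exact ⟨Or.inl h, fun hc => hRS x hc h⟩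
    rw [hSeq]
    intro x hx y hy hxy
    exact hclique x y (by simpa using hx) (by simpa using hy) hxy
  · intro x y hx hy hxB hyA
    simp only [Finset.mem_filter, Finset.mem_univ, true_and, not_not] at hxB
    simp only [Finset.mem_union, Finset.mem_filter, Finset.mem_univ, true_and, not_or] at hyA
    intro hadj
    have hyS : y ∉ S := hyA.1
    have hRy : R y := by
      obtain ⟨wx, hwx⟩ := hxB
      refine ⟨wx.concat hadj, fun u hu => ?_⟩
      rw [SimpleGraph.Walk.support_concat, List.mem_append,
        List.mem_singleton] at hu
      rcases hu with hu | rfl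
      · exact hwx u hu
      · exact hyS
    exact hyA.2 hRy

lemma IsChordal.comap_val {W : Type} (hch : G.IsChordal) (f : W → V)
    (hf : Function.Injective f) : (G.comap f).IsChordal := by
  rintro ⟨n, v, h4, hinj, hiff⟩
  exact hch ⟨n, f ∘ v, h4, hf.comp hinj, fun i j => hiff i j⟩

end GraphLemmas

theorem completion_aux (n : ℕ) : ∀ (V : Type) [Fintype V] [DecidableEq V]
    (G : SimpleGraph V), Fintype.card V ≤ n → G.IsChordal →
    ∀ M : Matrix V V ℝ,
    (∀ C : Finset V, G.IsClique (C : Set V) →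
      (M.submatrix (fun i : C => (i : V)) (fun i : C => (i : V))).PosDef) →
    ∃ Sig : Matrix V V ℝ, Sig.PosDef ∧
      (∀ i, Sig i i = M i i) ∧ (∀ i j, G.Adj i j → Sig i j = M i j) := by
  induction n with
  | zero =>
      intro V _ _ G hcard _ M _
      have hVempty : IsEmpty V := by
        rw [← Fintype.card_eq_zero_iff]
        omega
      refine ⟨M, PosDef.of_dotProduct_mulVec_pos ?_ ?_, fun i => rfl, fun i j _ => rfl⟩
      · ext i j
        exact isEmptyElim i
      · intro x hx
        exact absurd (funext fun i => isEmptyElim i) hx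
  | succ n ih =>
      intro V _ _ G hcard hch M hcliques
      by_cases hcomp : ∀ x y : V, x ≠ y → G.Adj x y
      · -- complete graph: M itself is positive definite
        have hclu : G.IsClique ((Finset.univ : Finset V) : Set V) := by
          intro x _ y _ hxy
          exact hcomp x y hxy
        have hpd := hcliques Finset.univ hclu
        set e : V → {x // x ∈ (Finset.univ : Finset V)} :=
          fun x => ⟨x, Finset.mem_univ x⟩ with he
        have heinj : Function.Injective e := fun x y h => congrArg Subtype.val h
        have := posDef_submatrix_inj hpd e heinj
        refine ⟨M, ?_, fun i => rfl, fun i j _ => rfl⟩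
        exact this
      · push_neg at hcomp
        obtain ⟨aa, bb, hab, hnadj⟩ := hcomp
        obtain ⟨A, B, hU, haB, hbA, hclq, hcross⟩ := chordal_separation hch hab hnadj
        have haA : aa ∈ A := by
          have : aa ∈ A ∪ B := hU ▸ Finset.mem_univ aa
          exact (Finset.mem_union.mp this).resolve_right haB
        have hbB : bb ∈ B := by
          have : bb ∈ A ∪ B := hU ▸ Finset.mem_univ bb
          exact (Finset.mem_union.mp this).resolve_left hbA
        -- a generic step: solve the problem on an induced proper subset
        have hrec : ∀ D : Finset V, D ≠ Finset.univ →
            ∃ SD : Matrix {x // x ∈ D} {x // x ∈ D} ℝ, SD.PosDef ∧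
              (∀ i : {x // x ∈ D}, SD i i = M i.1 i.1) ∧
              (∀ i j : {x // x ∈ D}, G.Adj i.1 j.1 → SD i j = M i.1 j.1) := by
          intro D hD
          have hcardD : Fintype.card {x // x ∈ D} ≤ n := by
            have h1 : D.card < Fintype.card V := by
              have := Finset.card_lt_card (Finset.ssubset_univ_iff.mpr hD)
              simpa using this
            rw [Fintype.card_coe]
            omega
          have hchD : (G.comap (Subtype.val : {x // x ∈ D} → V)).IsChordal :=
            IsChordal.comap_val hch _ Subtype.val_injective
          obtain ⟨SD, h1, h2, h3⟩ := ih {x // x ∈ D} (G.comap Subtype.val) hcardD hchD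
            (M.submatrix Subtype.val Subtype.val)
            (by
              intro C hC
              set Dimg : Finset V := C.image Subtype.val with hDimg
              have hDclique : G.IsClique (Dimg : Set V) := by
                intro x hx y hy hxy
                simp only [hDimg, Finset.coe_image, Set.mem_image, Finset.mem_coe] at hx hy
                obtain ⟨x', hx', rfl⟩ := hx
                obtain ⟨y', hy', rfl⟩ := hy
                exact hC hx' hy' (fun h => hxy (congrArg Subtype.val h))
              have hpd := hcliques Dimg hDclique
              have hg : ∀ i : C, (i : {x // x ∈ D}).1 ∈ Dimg := by
                intro i
                simp only [hDimg, Finset.mem_image]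
                exact ⟨i.1, i.2, rfl⟩
              set g : C → Dimg := fun i => ⟨(i : {x // x ∈ D}).1, hg i⟩ with hgdef
              have hginj : Function.Injective g := by
                intro i j h
                have h2 : (g i).1 = (g j).1 := congrArg Subtype.val h
                simp only [hgdef] at h2
                exact Subtype.ext (Subtype.ext h2)
              have := posDef_submatrix_inj hpd g hginj
              exact this)
          exact ⟨SD, h1, h2, fun i j hadj => h3 i j hadj⟩
        obtain ⟨SA, hSA, hSAd, hSAe⟩ := hrec A (fun h => hbA (h ▸ Finset.mem_univ bb))
        obtain ⟨SB, hSB, hSBd, hSBe⟩ := hrec B (fun h => haB (h ▸ Finset.mem_univ aa))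
        obtain ⟨Sig, hSig, hSigA, hSigB⟩ := markovV A B hU SA hSA SB hSB
          (by
            intro x y hxA hyA hxB hyB
            rcases eq_or_ne x y with rfl | hxy
            · rw [hSAd ⟨x, hxA⟩, hSBd ⟨x, hxB⟩]
            · have hadj : G.Adj x y := hclq
                (by rw [Finset.coe_inter]; exact ⟨hxA, hxB⟩)
                (by rw [Finset.coe_inter]; exact ⟨hyA, hyB⟩) hxy
              rw [hSAe ⟨x, hxA⟩ ⟨y, hyA⟩ hadj, hSBe ⟨x, hxB⟩ ⟨y, hyB⟩ hadj])
        refine ⟨Sig, hSig, ?_, ?_⟩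
        · intro i
          have : i ∈ A ∪ B := hU ▸ Finset.mem_univ i
          rcases Finset.mem_union.mp this with h | h
          · rw [hSigA i i h h, hSAd ⟨i, h⟩]
          · rw [hSigB i i h h, hSBd ⟨i, h⟩]
        · intro i j hadj
          by_cases hiA : i ∈ A <;> by_cases hjA : j ∈ A
          · rw [hSigA i j hiA hjA, hSAe ⟨i, hiA⟩ ⟨j, hjA⟩ hadj]
          · have hjB : j ∈ B := by
              have : j ∈ A ∪ B := hU ▸ Finset.mem_univ j
              exact (Finset.mem_union.mp this).resolve_left hjA
            by_cases hiB : i ∈ B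
            · rw [hSigB i j hiB hjB, hSBe ⟨i, hiB⟩ ⟨j, hjB⟩ hadj]
            · exact absurd hadj (hcross i j hiA hjB hiB hjA)
          · have hiB : i ∈ B := by
              have : i ∈ A ∪ B := hU ▸ Finset.mem_univ i
              exact (Finset.mem_union.mp this).resolve_left hiA
            by_cases hjB : j ∈ B
            · rw [hSigB i j hiB hjB, hSBe ⟨i, hiB⟩ ⟨j, hjB⟩ hadj]
            · exact absurd hadj.symm (hcross j i hjA hiB hjB hiA)
          · have hiB : i ∈ B := by
              have : i ∈ A ∪ B := hU ▸ Finset.mem_univ i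
              exact (Finset.mem_union.mp this).resolve_left hiA
            have hjB : j ∈ B := by
              have : j ∈ A ∪ B := hU ▸ Finset.mem_univ j
              exact (Finset.mem_union.mp this).resolve_left hjA
            rw [hSigB i j hiB hjB, hSBe ⟨i, hiB⟩ ⟨j, hjB⟩ hadj]

theorem chordal_pd_completion {m : ℕ} (G : SimpleGraph (Fin m))
    (hchordal : G.IsChordal)
    (M : Matrix (Fin m) (Fin m) ℝ) (hM : M.IsSymm)
    (hcliques : ∀ C : Finset (Fin m), G.IsClique (C : Set (Fin m)) →
      (M.submatrix (fun i : C => (i : Fin m)) (fun i : C => (i : Fin m))).PosDef) :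
    ∃ Sigma : Matrix (Fin m) (Fin m) ℝ, Sigma.PosDef ∧
      (∀ i : Fin m, Sigma i i = M i i) ∧
      (∀ i j : Fin m, G.Adj i j → Sigma i j = M i j) := by
  obtain ⟨Sig, h1, h2, h3⟩ := completion_aux (Fintype.card (Fin m)) (Fin m) G le_rfl
    hchordal M hcliques
  exact ⟨Sig, h1, h2, h3⟩
end

section
/- Let α, β, γ ∈ (0, π). The 3×3 real symmetric matrix with unit diagonal and off-diagonal entries cos(α), cos(β), cos(γ), namely [[1, cos α, cos β], [cos α, 1, cos γ], [cos β, cos γ, 1]], is positive definite if and only if α < β + γ, β < α + γ, γ < α + β, and α + β + γ < 2π. -/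
open Real

/-- cos comparison on `[0, π]`. -/
private lemma cos_lt_cos_iff' {a b : ℝ} (ha : a ∈ Set.Icc 0 π) (hb : b ∈ Set.Icc 0 π) :
    cos b < cos a ↔ a < b :=
  Real.strictAntiOn_cos.lt_iff_gt hb ha


private lemma quad_pos (ca cb cc x0 x1 x2 : ℝ) (he : ca ^ 2 < 1)
    (hD : 0 < 1 + 2*ca*cb*cc - ca^2 - cb^2 - cc^2)
    (hx : x0 ≠ 0 ∨ x1 ≠ 0 ∨ x2 ≠ 0) :
    0 < x0^2 + x1^2 + x2^2 + 2*ca*x0*x1 + 2*cb*x0*x2 + 2*cc*x1*x2 := by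
  have hepos : 0 < 1 - ca^2 := by linarith
  have key : (1-ca^2)^2 * (x0^2 + x1^2 + x2^2 + 2*ca*x0*x1 + 2*cb*x0*x2 + 2*cc*x1*x2)
      = (1-ca^2)^2 * (x0 + ca*x1 + cb*x2)^2
        + (1-ca^2) * ((1-ca^2)*x1 + (cc - ca*cb)*x2)^2
        + (1-ca^2) * (1 + 2*ca*cb*cc - ca^2 - cb^2 - cc^2) * x2^2 := by ring
  have hbig : 0 < (1-ca^2)^2
      * (x0^2 + x1^2 + x2^2 + 2*ca*x0*x1 + 2*cb*x0*x2 + 2*cc*x1*x2) := by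
    rw [key]
    have t1 : 0 ≤ (1-ca^2)^2 * (x0 + ca*x1 + cb*x2)^2 := by positivity
    have t2 : 0 ≤ (1-ca^2) * ((1-ca^2)*x1 + (cc - ca*cb)*x2)^2 := by positivity
    rcases eq_or_ne x2 0 with rfl | h2
    · rcases eq_or_ne x1 0 with rfl | h1
      · rcases hx with h | h | h
        · nlinarith [mul_pos (mul_pos hepos hepos) (sq_pos_of_ne_zero h)]
        · exact absurd rfl h
        · exact absurd rfl h
      · nlinarith [mul_pos hepos (mul_pos (mul_pos hepos hepos) (sq_pos_of_ne_zero h1))]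
    · have t3 : 0 < (1-ca^2) * (1 + 2*ca*cb*cc - ca^2 - cb^2 - cc^2) * x2^2 :=
        mul_pos (mul_pos hepos hD) (sq_pos_of_ne_zero h2)
      linarith
  nlinarith [hbig, mul_pos hepos hepos]

theorem cos_matrix_posDef_iff (α β γ : ℝ)
    (hα : α ∈ Set.Ioo 0 π) (hβ : β ∈ Set.Ioo 0 π) (hγ : γ ∈ Set.Ioo 0 π) :
    (!![1, cos α, cos β;
        cos α, 1, cos γ;
        cos β, cos γ, 1] : Matrix (Fin 3) (Fin 3) ℝ).PosDef ↔
      (α < β + γ ∧ β < α + γ ∧ γ < α + β ∧ α + β + γ < 2 * π) := by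
  obtain ⟨hα0, hαπ⟩ := hα
  obtain ⟨hβ0, hβπ⟩ := hβ
  obtain ⟨hγ0, hγπ⟩ := hγ
  have hπ : (0:ℝ) < π := pi_pos
  set M : Matrix (Fin 3) (Fin 3) ℝ :=
    !![1, cos α, cos β; cos α, 1, cos γ; cos β, cos γ, 1] with hM
  have hdet : M.det = 1 + 2*cos α*cos β*cos γ - cos α^2 - cos β^2 - cos γ^2 := by
    simp [hM, Matrix.det_fin_three]; ring
  have hfac : 1 + 2*cos α*cos β*cos γ - cos α^2 - cos β^2 - cos γ^2
      = (cos α - cos (β+γ)) * (cos (γ-β) - cos α) := by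
    rw [cos_add, cos_sub]
    linear_combination (-(sin γ^2)) * sin_sq_add_cos_sq β - (1 - cos β^2) * sin_sq_add_cos_sq γ
  have hαIcc : α ∈ Set.Icc 0 π := ⟨hα0.le, hαπ.le⟩
  -- first factor
  have hF1 : 0 < cos α - cos (β+γ) ↔ (α < β + γ ∧ α + β + γ < 2 * π) := by
    rcases le_or_gt (β+γ) π with h | h
    · rw [sub_pos, cos_lt_cos_iff' hαIcc ⟨by linarith, h⟩]
      constructor
      · exact fun h' => ⟨h', by linarith⟩
      · exact fun h' => h'.1
    · have h2 : cos (β+γ) = cos (2*π - (β+γ)) := (cos_two_pi_sub _).symm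
      rw [sub_pos, h2, cos_lt_cos_iff' hαIcc ⟨by linarith, by linarith⟩]
      constructor
      · exact fun h' => ⟨by linarith, by linarith⟩
      · exact fun h' => by linarith [h'.2]
  -- second factor
  have hF2 : 0 < cos (γ-β) - cos α ↔ (β < α + γ ∧ γ < α + β) := by
    rcases le_or_gt β γ with h | h
    · rw [sub_pos, cos_lt_cos_iff' ⟨by linarith, by linarith⟩ hαIcc]
      constructor
      · exact fun h' => ⟨by linarith, by linarith⟩
      · exact fun h' => by linarith [h'.2]
    · have h2 : cos (γ-β) = cos (β-γ) := by rw [← cos_neg]; ring_nf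
      rw [sub_pos, h2, cos_lt_cos_iff' ⟨by linarith, by linarith⟩ hαIcc]
      constructor
      · exact fun h' => ⟨by linarith, by linarith⟩
      · exact fun h' => by linarith [h'.1]
  -- determinant positivity is equivalent to the four conditions
  have hdet_iff : 0 < M.det ↔ (α < β + γ ∧ β < α + γ ∧ γ < α + β ∧ α + β + γ < 2 * π) := by
    rw [hdet, hfac]
    constructor
    · intro hpos
      rcases mul_pos_iff.mp hpos with ⟨h1, h2⟩ | ⟨h1, h2⟩
      · obtain ⟨ha, hs⟩ := hF1.mp h1
        obtain ⟨hb, hc⟩ := hF2.mp h2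
        exact ⟨ha, hb, hc, hs⟩
      · exfalso
        -- h2 : cos (γ-β) - cos α < 0, so α < |γ-β|
        have key : γ - β > α ∨ β - γ > α := by
          rcases le_or_gt β γ with h | h
          · left
            exact (cos_lt_cos_iff' hαIcc ⟨by linarith, by linarith⟩).mp (by linarith)
          · right
            have h3 : cos (γ-β) = cos (β-γ) := by rw [← cos_neg]; ring_nf
            rw [h3] at h2
            exact (cos_lt_cos_iff' hαIcc ⟨by linarith, by linarith⟩).mp (by linarith)
        have : 0 < cos α - cos (β+γ) := by
          apply hF1.mpr
          rcases key with h | h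
          · exact ⟨by linarith, by linarith⟩
          · exact ⟨by linarith, by linarith⟩
        linarith
    · rintro ⟨ha, hb, hc, hs⟩
      exact mul_pos (hF1.mpr ⟨ha, hs⟩) (hF2.mpr ⟨hb, hc⟩)
  rw [← hdet_iff]
  constructor
  · exact fun h => h.det_pos
  · intro hd
    refine Matrix.PosDef.of_dotProduct_mulVec_pos ?_ ?_
    · ext i j
      fin_cases i <;> fin_cases j <;> simp [hM, Matrix.conjTranspose_apply]
    · intro x hx
      have hexp : dotProduct (star x) (M.mulVec x)
          = x 0^2 + x 1^2 + x 2^2 + 2*cos α*(x 0)*(x 1) + 2*cos β*(x 0)*(x 2)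
            + 2*cos γ*(x 1)*(x 2) := by
        simp [hM, dotProduct, Matrix.mulVec, Fin.sum_univ_three]
        ring
      rw [hexp]
      have hsα : 0 < sin α := sin_pos_of_pos_of_lt_pi hα0 hαπ
      have he : cos α ^ 2 < 1 := by nlinarith [sin_sq_add_cos_sq α]
      have hD : 0 < 1 + 2*cos α*cos β*cos γ - cos α^2 - cos β^2 - cos γ^2 := by
        rw [← hdet]; exact hd
      have hx' : x 0 ≠ 0 ∨ x 1 ≠ 0 ∨ x 2 ≠ 0 := by
        by_contra hcon
        push_neg at hcon
        obtain ⟨h0, h1, h2⟩ := hcon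
        apply hx
        ext i
        fin_cases i <;> assumption
      exact quad_pos (cos α) (cos β) (cos γ) (x 0) (x 1) (x 2) he hD hx'
end

section
/- Let m ≥ 1 and let K_{2,m} be the complete bipartite graph with parts {1,2} and {3,…,m+2}, so that its edges are exactly the pairs (a,i) with a ∈ {1,2} and i ∈ {3,…,m+2}. Let x₁,…,x_{m+2} ∈ ℝ² be pairwise linearly independent nonzero vectors and let S be the Gram matrix S_{kl} = ⟨x_k, x_l⟩. Write φ_k ∈ [0,π) for the angle of the line spanned by x_k. Then the K_{2,m}-partial matrix S_{K_{2,m}} has a positive definite completion if and only if either φ_i lies strictly between min(φ₁,φ₂) and max(φ₁,φ₂) for every i ∈ {3,…,m+2}, or φ_i lies strictly between min(φ₁,φ₂) and max(φ₁,φ₂) for no i ∈ {3,…,m+2}; equivalently, if and only if one of the two open arcs of the circle of lines determined by the lines spanned by x₁ and x₂ contains none of the lines spanned by x₃,…,x_{m+2} (i.e., the lines of x₁ and x₂ are direct neighbors). -/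
open Real Matrix

/-- Auxiliary: a `Fin (n+2)` with value `< 2` is `0` or `1`. -/
lemma K2m_aux_finValLt2 {n : ℕ} (k : Fin (n+2)) (h : k.val < 2) : k = 0 ∨ k = 1 := by
  interval_cases h' : k.val
  · left; exact Fin.ext (by simpa using h')
  · right; exact Fin.ext (by simpa using h')

lemma K2m_aux_sum_ite3 {n : ℕ} (i0 i1 i2 : Fin n) (h01 : i0 ≠ i1) (h02 : i0 ≠ i2) (h12 : i1 ≠ i2)
    (f : Fin n → ℝ) (α β γ : ℝ) :
    (∑ k, (if k = i0 then α else if k = i1 then β else if k = i2 then γ else 0) * f k)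
      = α * f i0 + β * f i1 + γ * f i2 := by
  rw [← Finset.sum_subset (Finset.subset_univ ({i0, i1, i2} : Finset (Fin n)))]
  · rw [Finset.sum_insert (by simp [h01, h02]), Finset.sum_pair h12]
    simp [h01.symm, h02.symm, h12.symm, h01, h02, h12]; ring
  · intro k _ hk
    simp only [Finset.mem_insert, Finset.mem_singleton, not_or] at hk
    simp [hk.1, hk.2.1, hk.2.2]

/-- Quadratic form of a matrix at a vector supported on three indices. -/
lemma K2m_aux_quad3 {n : ℕ} (M : Matrix (Fin n) (Fin n) ℝ) (i0 i1 i2 : Fin n)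
    (h01 : i0 ≠ i1) (h02 : i0 ≠ i2) (h12 : i1 ≠ i2) (α β γ : ℝ) :
    (fun k => if k = i0 then α else if k = i1 then β else if k = i2 then γ else 0) ⬝ᵥ
      (M *ᵥ (fun k => if k = i0 then α else if k = i1 then β else if k = i2 then γ else 0)) =
    α * (α * M i0 i0 + β * M i0 i1 + γ * M i0 i2)
      + β * (α * M i1 i0 + β * M i1 i1 + γ * M i1 i2)
      + γ * (α * M i2 i0 + β * M i2 i1 + γ * M i2 i2) := by
  set v : Fin n → ℝ := fun k => if k = i0 then α else if k = i1 then β else if k = i2 then γ else 0 with hv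
  have inner : ∀ k, (M *ᵥ v) k = α * M k i0 + β * M k i1 + γ * M k i2 := by
    intro k
    show (∑ l, M k l * v l) = _
    rw [show (∑ l, M k l * v l) = ∑ l, v l * M k l from Finset.sum_congr rfl (fun l _ => by ring)]
    exact K2m_aux_sum_ite3 i0 i1 i2 h01 h02 h12 (M k) α β γ
  show (∑ k, v k * (M *ᵥ v) k) = _
  rw [K2m_aux_sum_ite3 i0 i1 i2 h01 h02 h12 (M *ᵥ v) α β γ, inner, inner, inner]

lemma K2m_aux_sin_pos_iff {z : ℝ} (h1 : -π < z) (h2 : z < π) : 0 < Real.sin z ↔ 0 < z := by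
  constructor
  · intro h
    by_contra hz
    push_neg at hz
    rcases eq_or_lt_of_le hz with rfl | hz'
    · simp at h
    · have : 0 < Real.sin (-z) := Real.sin_pos_of_pos_of_lt_pi (by linarith) (by linarith)
      rw [Real.sin_neg] at this; linarith
  · intro h; exact Real.sin_pos_of_pos_of_lt_pi h h2

lemma K2m_aux_sin_neg_iff {z : ℝ} (h1 : -π < z) (h2 : z < π) : Real.sin z < 0 ↔ z < 0 := by
  have h := K2m_aux_sin_pos_iff (by linarith : -π < -z) (by linarith : -z < π)
  rw [Real.sin_neg] at h
  constructor
  · intro hs; linarith [h.mp (by linarith)]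
  · intro hz; linarith [h.mpr (by linarith)]

lemma K2m_aux_sin_prod_neg_iff {p q t : ℝ} (hp : p ∈ Set.Ico 0 π) (hq : q ∈ Set.Ico 0 π)
    (ht : t ∈ Set.Ico 0 π) (hpt : p ≠ t) (hqt : q ≠ t) :
    Real.sin (p - t) * Real.sin (q - t) < 0 ↔ (min p q < t ∧ t < max p q) := by
  obtain ⟨hp0, hp1⟩ := hp; obtain ⟨hq0, hq1⟩ := hq; obtain ⟨ht0, ht1⟩ := ht
  have hb1 : -π < p - t := by linarith
  have hb2 : p - t < π := by linarith
  have hb3 : -π < q - t := by linarith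
  have hb4 : q - t < π := by linarith
  have hP := K2m_aux_sin_pos_iff hb1 hb2
  have hN := K2m_aux_sin_neg_iff hb1 hb2
  have hP' := K2m_aux_sin_pos_iff hb3 hb4
  have hN' := K2m_aux_sin_neg_iff hb3 hb4
  rcases lt_or_gt_of_ne hpt with h1 | h1 <;> rcases lt_or_gt_of_ne hqt with h2 | h2
  · apply iff_of_false
    · nlinarith [hN.mpr (by linarith : p - t < 0), hN'.mpr (by linarith : q - t < 0)]
    · rintro ⟨-, hB⟩
      rcases lt_max_iff.mp hB with h | h <;> linarith
  · apply iff_of_true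
    · nlinarith [hN.mpr (by linarith : p - t < 0), hP'.mpr (by linarith : 0 < q - t)]
    · exact ⟨lt_of_le_of_lt (min_le_left _ _) h1, lt_max_iff.mpr (Or.inr h2)⟩
  · apply iff_of_true
    · nlinarith [hP.mpr (by linarith : 0 < p - t), hN'.mpr (by linarith : q - t < 0)]
    · exact ⟨lt_of_le_of_lt (min_le_right _ _) h2, lt_max_iff.mpr (Or.inl h1)⟩
  · apply iff_of_false
    · nlinarith [hP.mpr (by linarith : 0 < p - t), hP'.mpr (by linarith : 0 < q - t)]
    · rintro ⟨hA, -⟩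
      rcases min_lt_iff.mp hA with h | h <;> linarith

lemma K2m_aux_gram_quad {n : ℕ} (y : Fin n → Fin 2 → ℝ) (v : Fin n → ℝ) :
    (∑ k, ∑ l, v k * v l * (y k ⬝ᵥ y l)) = ∑ j : Fin 2, (∑ k, v k * y k j)^2 := by
  have h1 : ∀ k l, v k * v l * (y k ⬝ᵥ y l) = ∑ j : Fin 2, (v k * y k j) * (v l * y l j) := by
    intro k l
    rw [dotProduct, Finset.mul_sum]
    exact Finset.sum_congr rfl fun j _ => by ring
  calc (∑ k, ∑ l, v k * v l * (y k ⬝ᵥ y l))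
      = ∑ k, ∑ l, ∑ j : Fin 2, (v k * y k j) * (v l * y l j) :=
        Finset.sum_congr rfl fun k _ => Finset.sum_congr rfl fun l _ => h1 k l
    _ = ∑ k, ∑ j : Fin 2, ∑ l, (v k * y k j) * (v l * y l j) :=
        Finset.sum_congr rfl fun k _ => Finset.sum_comm
    _ = ∑ j : Fin 2, ∑ k, ∑ l, (v k * y k j) * (v l * y l j) := Finset.sum_comm
    _ = ∑ j : Fin 2, (∑ k, v k * y k j)^2 := Finset.sum_congr rfl fun j _ => by
        rw [sq, Finset.sum_mul_sum]

lemma K2m_aux_quad_gram_diag {n : ℕ} (y : Fin n → Fin 2 → ℝ) (e : Fin n → ℝ) (v : Fin n → ℝ) :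
    v ⬝ᵥ ((Matrix.of fun k l => y k ⬝ᵥ y l + if k = l then e k else 0) *ᵥ v)
      = (∑ j : Fin 2, (∑ k, v k * y k j)^2) + ∑ k, e k * (v k)^2 := by
  have inner : ∀ k, ((Matrix.of fun k l => y k ⬝ᵥ y l + if k = l then e k else 0) *ᵥ v) k
      = (∑ l, (y k ⬝ᵥ y l) * v l) + e k * v k := by
    intro k
    show (∑ l, (y k ⬝ᵥ y l + if k = l then e k else 0) * v l) = _
    rw [Finset.sum_congr rfl (fun l _ => add_mul (y k ⬝ᵥ y l) _ (v l)), Finset.sum_add_distrib]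
    congr 1
    rw [Finset.sum_congr rfl (fun l (_ : l ∈ Finset.univ) => by
      rw [ite_mul, zero_mul] : ∀ l ∈ Finset.univ,
        (if k = l then e k else 0) * v l = if k = l then e k * v l else 0)]
    simp
  show (∑ k, v k * _) = _
  simp only [inner]
  rw [Finset.sum_congr rfl (fun k _ => mul_add (v k) _ _), Finset.sum_add_distrib]
  congr 1
  · rw [← K2m_aux_gram_quad]
    refine Finset.sum_congr rfl (fun k _ => ?_)
    rw [Finset.mul_sum]
    exact Finset.sum_congr rfl (fun l _ => by ring)
  · exact Finset.sum_congr rfl (fun k _ => by ring)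

lemma K2m_aux_posdef_gram_diag {n : ℕ} (y : Fin (n+2) → Fin 2 → ℝ) (e : Fin (n+2) → ℝ)
    (he0 : ∀ k, 0 ≤ e k) (he : ∀ k : Fin (n+2), 2 ≤ k.val → 0 < e k)
    (hy01 : y 0 1 = 0) (hy00 : y 0 0 ≠ 0) (hy11 : y 1 1 ≠ 0) :
    (Matrix.of fun k l => y k ⬝ᵥ y l + if k = l then e k else 0).PosDef := by
  rw [Matrix.posDef_iff_dotProduct_mulVec]
  constructor
  · show _ = _
    ext k l
    simp only [Matrix.conjTranspose_apply, Matrix.of_apply, star_trivial]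
    rw [dotProduct_comm]
    congr 1
    rcases eq_or_ne k l with rfl | hkl
    · simp
    · simp [hkl, Ne.symm hkl]
  · intro v hv
    have hsv : star v = v := by funext k; simp
    rw [hsv, K2m_aux_quad_gram_diag]
    have hgram : 0 ≤ ∑ j : Fin 2, (∑ k, v k * y k j)^2 :=
      Finset.sum_nonneg (fun j _ => sq_nonneg _)
    have hdiag : 0 ≤ ∑ k, e k * (v k)^2 :=
      Finset.sum_nonneg (fun k _ => mul_nonneg (he0 k) (sq_nonneg _))
    by_cases hsupp : ∃ k : Fin (n+2), 2 ≤ k.val ∧ v k ≠ 0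
    · obtain ⟨k, hk2, hvk⟩ := hsupp
      have hterm : 0 < e k * (v k)^2 := mul_pos (he k hk2) (by positivity)
      have : 0 < ∑ k, e k * (v k)^2 :=
        Finset.sum_pos' (fun k _ => mul_nonneg (he0 k) (sq_nonneg _)) ⟨k, Finset.mem_univ k, hterm⟩
      linarith
    · push_neg at hsupp
      have h01 : (0 : Fin (n+2)) ≠ 1 := by
        intro h
        have := congrArg Fin.val h
        simp at this
      have hsum : ∀ j, (∑ k, v k * y k j) = v 0 * y 0 j + v 1 * y 1 j := by
        intro j
        rw [← Finset.sum_subset (Finset.subset_univ ({0, 1} : Finset (Fin (n+2))))]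
        · rw [Finset.sum_pair h01]
        · intro k _ hk
          simp only [Finset.mem_insert, Finset.mem_singleton, not_or] at hk
          have : 2 ≤ k.val := by
            by_contra h
            push_neg at h
            rcases K2m_aux_finValLt2 k h with rfl | rfl
            · exact hk.1 rfl
            · exact hk.2 rfl
          rw [hsupp k this, zero_mul]
      obtain ⟨k0, hk0⟩ := Function.ne_iff.mp hv
      simp only [Pi.zero_apply] at hk0
      have hk0' : k0 = 0 ∨ k0 = 1 := by
        apply K2m_aux_finValLt2
        by_contra h
        push_neg at h
        exact hk0 (hsupp k0 h)
      have hgrampos : 0 < ∑ j : Fin 2, (∑ k, v k * y k j)^2 := by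
        rw [Fin.sum_univ_two, hsum 0, hsum 1, hy01]
        by_cases hv1 : v 1 = 0
        · have hv0 : v 0 ≠ 0 := by
            rcases hk0' with rfl | rfl
            · exact hk0
            · exact absurd hv1 hk0
          have h2 : (v 0 * y 0 0 + v 1 * y 1 0)^2 > 0 := by
            rw [hv1]; ring_nf; positivity
          nlinarith [sq_nonneg (v 0 * 0 + v 1 * y 1 1)]
        · have h2 : (v 0 * 0 + v 1 * y 1 1)^2 > 0 := by
            simp only [mul_zero, zero_add]; positivity
          nlinarith [sq_nonneg (v 0 * y 0 0 + v 1 * y 1 0)]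
      linarith

-- algebra lemmas
lemma K2m_aux_stepA {c0 c1 s u v w z zz : ℝ} (hc0 : c0 ≠ 0)
    (hQ : 0 < s * (s * (c0*c0) + -(c0*c0) * s + 0 * u)
        + (-(c0*c0)) * (s * s + -(c0*c0) * (c1*c1) + 0 * v)
        + 0 * (s * w + -(c0*c0) * z + 0 * zz)) :
    s^2 < (c0*c1)^2 := by
  nlinarith [mul_self_pos.mpr hc0, hQ]

lemma K2m_aux_keystep {c0 c1 ci r A B : ℝ} (hc0 : c0 ≠ 0) (hc1 : c1 ≠ 0) (hci : ci ≠ 0)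
    (h1r : 0 < 1 - r^2)
    (hQ : 0 < (r*B - A)/c0 * ((r*B - A)/c0 * (c0 * c0) + (r*A - B)/c1 * (r * (c0 * c1)) + (1 - r^2)/ci * (c0 * ci * A))
          + (r*A - B)/c1 * ((r*B - A)/c0 * (r * (c0 * c1)) + (r*A - B)/c1 * (c1 * c1) + (1 - r^2)/ci * (c1 * ci * B))
          + (1 - r^2)/ci * ((r*B - A)/c0 * (c0 * ci * A) + (r*A - B)/c1 * (c1 * ci * B) + (1 - r^2)/ci * (ci * ci))) :
    0 < 1 + 2*r*A*B - r^2 - A^2 - B^2 := by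
  have hQeq : (r*B - A)/c0 * ((r*B - A)/c0 * (c0 * c0) + (r*A - B)/c1 * (r * (c0 * c1)) + (1 - r^2)/ci * (c0 * ci * A))
          + (r*A - B)/c1 * ((r*B - A)/c0 * (r * (c0 * c1)) + (r*A - B)/c1 * (c1 * c1) + (1 - r^2)/ci * (c1 * ci * B))
          + (1 - r^2)/ci * ((r*B - A)/c0 * (c0 * ci * A) + (r*A - B)/c1 * (c1 * ci * B) + (1 - r^2)/ci * (ci * ci))
      = (1 - r^2) * (1 + 2*r*A*B - r^2 - A^2 - B^2) := by
    field_simp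
    ring
  rw [hQeq] at hQ
  rcases mul_pos_iff.mp hQ with ⟨_, h⟩ | ⟨h, _⟩
  · exact h
  · linarith

lemma K2m_aux_interval {r A B s0 s1 : ℝ}
    (hf : 0 < 1 + 2*r*A*B - r^2 - A^2 - B^2)
    (hsq : (s0*s1)^2 = (1 - A^2) * (1 - B^2)) :
    (0 < s0*s1 → r < A*B + s0*s1) ∧ (s0*s1 < 0 → A*B + s0*s1 < r) := by
  constructor
  · intro hp
    nlinarith [hf, hp, hsq]
  · intro hp
    nlinarith [hf, hp, hsq]
theorem K2m_mle_exists_iff_neighbors {m : ℕ} (hm : 1 ≤ m)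
    (x : Fin (m + 2) → Fin 2 → ℝ) (φ : Fin (m + 2) → ℝ)
    (hx : ∀ k l : Fin (m + 2), k ≠ l → LinearIndependent ℝ ![x k, x l])
    (hφmem : ∀ k, φ k ∈ Set.Ico 0 π)
    (hangle : ∀ k, ∃ c : ℝ, c ≠ 0 ∧ x k = c • ![cos (φ k), sin (φ k)]) :
    (∃ Sigma : Matrix (Fin (m + 2)) (Fin (m + 2)) ℝ, Sigma.PosDef ∧
      (∀ k : Fin (m + 2), Sigma k k = x k ⬝ᵥ x k) ∧
      (∀ k l : Fin (m + 2),
        ((k.val < 2 ∧ 2 ≤ l.val) ∨ (l.val < 2 ∧ 2 ≤ k.val)) →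
          Sigma k l = x k ⬝ᵥ x l)) ↔
    ((∀ i : Fin (m + 2), 2 ≤ i.val →
        min (φ 0) (φ 1) < φ i ∧ φ i < max (φ 0) (φ 1)) ∨
     (∀ i : Fin (m + 2), 2 ≤ i.val →
        ¬ (min (φ 0) (φ 1) < φ i ∧ φ i < max (φ 0) (φ 1)))) := by
  choose c hc hxc using hangle
  have hdot : ∀ k l, x k ⬝ᵥ x l = c k * c l * Real.cos (φ k - φ l) := by
    intro k l
    rw [hxc k, hxc l, Real.cos_sub]
    simp [dotProduct, Fin.sum_univ_two]
    ring
  have h01 : (0 : Fin (m+2)) ≠ 1 := by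
    intro h; have := congrArg Fin.val h; simp at this
  have hne0 : ∀ i : Fin (m+2), 2 ≤ i.val → i ≠ 0 := by
    intro i hi h; subst h; simp at hi
  have hne1 : ∀ i : Fin (m+2), 2 ≤ i.val → i ≠ 1 := by
    intro i hi h; subst h; simp at hi
  have hφne : ∀ k l, k ≠ l → φ k ≠ φ l := by
    intro k l hkl heq
    have h := (linearIndependent_fin2.mp (hx k l hkl)).2 (c k / c l)
    simp only [Matrix.cons_val_one, Matrix.head_cons, Matrix.cons_val_zero] at h
    apply h
    rw [hxc l, hxc k, heq, smul_smul, div_mul_cancel₀ _ (hc l)]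
  have hsinne : ∀ k l, k ≠ l → Real.sin (φ k - φ l) ≠ 0 := by
    intro k l hkl
    obtain ⟨hk0, hk1⟩ := hφmem k
    obtain ⟨hl0, hl1⟩ := hφmem l
    rcases lt_or_gt_of_ne (hφne k l hkl) with h | h
    · exact ne_of_lt ((K2m_aux_sin_neg_iff (by linarith) (by linarith)).mpr (by linarith))
    · exact ne_of_gt ((K2m_aux_sin_pos_iff (by linarith) (by linarith)).mpr (by linarith))
  have hsq : ∀ i : Fin (m+2),
      (Real.sin (φ 0 - φ i) * Real.sin (φ 1 - φ i))^2
        = (1 - Real.cos (φ 0 - φ i)^2) * (1 - Real.cos (φ 1 - φ i)^2) := by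
    intro i
    have t0 : Real.sin (φ 0 - φ i)^2 = 1 - Real.cos (φ 0 - φ i)^2 := by
      nlinarith [Real.sin_sq_add_cos_sq (φ 0 - φ i)]
    have t1 : Real.sin (φ 1 - φ i)^2 = 1 - Real.cos (φ 1 - φ i)^2 := by
      nlinarith [Real.sin_sq_add_cos_sq (φ 1 - φ i)]
    rw [mul_pow, t0, t1]
  have hcos01 : ∀ i : Fin (m+2), Real.cos (φ 0 - φ 1)
      = Real.cos (φ 0 - φ i)*Real.cos (φ 1 - φ i)
        + Real.sin (φ 0 - φ i)*Real.sin (φ 1 - φ i) := by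
    intro i
    rw [show φ 0 - φ 1 = (φ 0 - φ i) - (φ 1 - φ i) by ring, Real.cos_sub]
  constructor
  · rintro ⟨S, hPD, hdiagS, hedgeS⟩
    by_contra hcon
    push_neg at hcon
    obtain ⟨⟨i, hi2, hiNB'⟩, j, hj2, hjB⟩ := hcon
    have hi0 : i ≠ 0 := hne0 i hi2
    have hi1 : i ≠ 1 := hne1 i hi2
    have hj0 : j ≠ 0 := hne0 j hj2
    have hj1 : j ≠ 1 := hne1 j hj2
    have hiNB : ¬ (min (φ 0) (φ 1) < φ i ∧ φ i < max (φ 0) (φ 1)) := by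
      rintro ⟨ha, hb⟩
      exact absurd (hiNB' ha) (not_le.mpr hb)
    have hv0lt : ((0 : Fin (m+2))).val < 2 := by simp
    have hv1lt : ((1 : Fin (m+2))).val < 2 := by norm_num
    have hSdiag : ∀ k : Fin (m+2), S k k = c k * c k := by
      intro k; rw [hdiagS k, hdot]; simp
    have hsym : S 1 0 = S 0 1 := by
      have := congrFun (congrFun hPD.1 0) 1
      simpa [Matrix.conjTranspose_apply] using this
    have hE : ∀ i : Fin (m+2), 2 ≤ i.val →
        S 0 i = c 0 * c i * Real.cos (φ 0 - φ i) ∧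
        S i 0 = c 0 * c i * Real.cos (φ 0 - φ i) ∧
        S 1 i = c 1 * c i * Real.cos (φ 1 - φ i) ∧
        S i 1 = c 1 * c i * Real.cos (φ 1 - φ i) := by
      intro i hi
      refine ⟨?_, ?_, ?_, ?_⟩
      · rw [hedgeS 0 i (Or.inl ⟨hv0lt, hi⟩), hdot]
      · rw [hedgeS i 0 (Or.inr ⟨hv0lt, hi⟩), hdot,
          show φ i - φ 0 = -(φ 0 - φ i) by ring, Real.cos_neg]; ring
      · rw [hedgeS 1 i (Or.inl ⟨hv1lt, hi⟩), hdot]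
      · rw [hedgeS i 1 (Or.inr ⟨hv1lt, hi⟩), hdot,
          show φ i - φ 1 = -(φ 1 - φ i) by ring, Real.cos_neg]; ring
    have hcc : c 0 * c 1 ≠ 0 := mul_ne_zero (hc 0) (hc 1)
    -- step A : (S 0 1)^2 < (c 0 * c 1)^2
    have hr2 : (S 0 1)^2 < (c 0 * c 1)^2 := by
      have hvne : (fun k : Fin (m+2) => if k = 0 then S 0 1 else if k = 1 then -(c 0 * c 0)
          else if k = i then (0:ℝ) else 0) ≠ 0 := by
        apply Function.ne_iff.mpr
        refine ⟨1, ?_⟩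
        show (if (1:Fin (m+2)) = 0 then S 0 1 else if (1:Fin (m+2)) = 1 then -(c 0 * c 0)
          else if (1:Fin (m+2)) = i then (0:ℝ) else 0) ≠ 0
        rw [if_neg (Ne.symm h01), if_pos rfl]
        intro hh
        exact mul_ne_zero (hc 0) (hc 0) (by linarith)
      have hQ := hPD.dotProduct_mulVec_pos hvne
      have hstar : star (fun k : Fin (m+2) => if k = 0 then S 0 1 else if k = 1 then -(c 0 * c 0)
          else if k = i then (0:ℝ) else 0) = (fun k : Fin (m+2) => if k = 0 then S 0 1
          else if k = 1 then -(c 0 * c 0) else if k = i then (0:ℝ) else 0) := rfl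
      rw [hstar, K2m_aux_quad3 S 0 1 i h01 (Ne.symm hi0) (Ne.symm hi1)] at hQ
      rw [hSdiag 0, hSdiag 1, hsym] at hQ
      exact K2m_aux_stepA (hc 0) hQ
    obtain ⟨r, hrdef⟩ : ∃ r : ℝ, r = S 0 1 / (c 0 * c 1) := ⟨_, rfl⟩
    have hs : S 0 1 = r * (c 0 * c 1) := by
      rw [hrdef, div_mul_cancel₀ _ hcc]
    have hr1 : r^2 < 1 := by
      rw [hrdef, div_pow, div_lt_one (by positivity)]
      exact hr2
    have h1r : 0 < 1 - r^2 := by linarith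
    -- step B : key inequality per index
    have key : ∀ i : Fin (m+2), 2 ≤ i.val →
        0 < 1 + 2*r*Real.cos (φ 0 - φ i)*Real.cos (φ 1 - φ i)
          - r^2 - Real.cos (φ 0 - φ i)^2 - Real.cos (φ 1 - φ i)^2 := by
      intro i hi
      obtain ⟨hE0, hE0', hE1, hE1'⟩ := hE i hi
      have hi0 : i ≠ 0 := hne0 i hi
      have hi1 : i ≠ 1 := hne1 i hi
      have hγ : (1 - r^2)/(c i) ≠ 0 := div_ne_zero (by linarith) (hc i)
      have hvne : (fun k : Fin (m+2) => if k = 0 then (r*Real.cos (φ 1 - φ i) - Real.cos (φ 0 - φ i))/c 0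
          else if k = 1 then (r*Real.cos (φ 0 - φ i) - Real.cos (φ 1 - φ i))/c 1
          else if k = i then (1 - r^2)/c i else 0) ≠ 0 := by
        apply Function.ne_iff.mpr
        refine ⟨i, ?_⟩
        show (if i = 0 then (r*Real.cos (φ 1 - φ i) - Real.cos (φ 0 - φ i))/c 0
          else if i = 1 then (r*Real.cos (φ 0 - φ i) - Real.cos (φ 1 - φ i))/c 1
          else if i = i then (1 - r^2)/c i else 0) ≠ 0
        rw [if_neg hi0, if_neg hi1, if_pos rfl]
        exact hγ
      have hQ := hPD.dotProduct_mulVec_pos hvne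
      rw [show star (fun k : Fin (m+2) => if k = 0 then (r*Real.cos (φ 1 - φ i) - Real.cos (φ 0 - φ i))/c 0
          else if k = 1 then (r*Real.cos (φ 0 - φ i) - Real.cos (φ 1 - φ i))/c 1
          else if k = i then (1 - r^2)/c i else 0) = (fun k : Fin (m+2) => if k = 0 then (r*Real.cos (φ 1 - φ i) - Real.cos (φ 0 - φ i))/c 0
          else if k = 1 then (r*Real.cos (φ 0 - φ i) - Real.cos (φ 1 - φ i))/c 1
          else if k = i then (1 - r^2)/c i else 0) from rfl,
        K2m_aux_quad3 S 0 1 i h01 (Ne.symm hi0) (Ne.symm hi1)] at hQ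
      rw [hSdiag 0, hSdiag 1, hSdiag i, hsym, hE0, hE0', hE1, hE1', hs] at hQ
      exact K2m_aux_keystep (hc 0) (hc 1) (hc i) h1r hQ
    -- step C : contradiction
    have h0i : (0 : Fin (m+2)) ≠ i := Ne.symm hi0
    have h1i : (1 : Fin (m+2)) ≠ i := Ne.symm hi1
    have hprodi : 0 < Real.sin (φ 0 - φ i) * Real.sin (φ 1 - φ i) := by
      have hne : Real.sin (φ 0 - φ i) * Real.sin (φ 1 - φ i) ≠ 0 :=
        mul_ne_zero (hsinne 0 i h0i) (hsinne 1 i h1i)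
      rcases hne.lt_or_gt with h | h
      · exact absurd ((K2m_aux_sin_prod_neg_iff (hφmem 0) (hφmem 1) (hφmem i)
          (hφne 0 i h0i) (hφne 1 i h1i)).mp h) hiNB
      · exact h
    have hprodj : Real.sin (φ 0 - φ j) * Real.sin (φ 1 - φ j) < 0 :=
      (K2m_aux_sin_prod_neg_iff (hφmem 0) (hφmem 1) (hφmem j)
        (hφne 0 j (Ne.symm hj0)) (hφne 1 j (Ne.symm hj1))).mpr hjB
    have hlt1 := (K2m_aux_interval (key i hi2) (hsq i)).1 hprodi
    have hlt2 := (K2m_aux_interval (key j hj2) (hsq j)).2 hprodj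
    rw [← hcos01 i] at hlt1
    rw [← hcos01 j] at hlt2
    linarith
  · intro h
    -- Backward direction
    classical
    -- Step 1: find r with r^2 < 1 and all f_i(r) > 0
    have hu2 : (Real.cos (φ 0 - φ 1))^2 < 1 := by
      have hs01 : Real.sin (φ 0 - φ 1) ≠ 0 := hsinne 0 1 h01
      have : 0 < Real.sin (φ 0 - φ 1)^2 := by positivity
      nlinarith [Real.sin_sq_add_cos_sq (φ 0 - φ 1)]
    have hu1a : -1 < Real.cos (φ 0 - φ 1) := by nlinarith [hu2]
    have hu1b : Real.cos (φ 0 - φ 1) < 1 := by nlinarith [hu2]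
    have hVbd : ∀ i : Fin (m+2),
        -1 ≤ Real.cos (φ 0 - φ i)*Real.cos (φ 1 - φ i) - Real.sin (φ 0 - φ i)*Real.sin (φ 1 - φ i) ∧
        Real.cos (φ 0 - φ i)*Real.cos (φ 1 - φ i) - Real.sin (φ 0 - φ i)*Real.sin (φ 1 - φ i) ≤ 1 := by
      intro i
      rw [← Real.cos_add]
      exact ⟨Real.neg_one_le_cos _, Real.cos_le_one _⟩
    obtain ⟨r, hr1, hf⟩ : ∃ r : ℝ, r^2 < 1 ∧ ∀ i : Fin (m+2), 2 ≤ i.val →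
        0 < 1 + 2*r*Real.cos (φ 0 - φ i)*Real.cos (φ 1 - φ i) - r^2
          - Real.cos (φ 0 - φ i)^2 - Real.cos (φ 1 - φ i)^2 := by
      set T : Finset (Fin (m+2)) := Finset.univ.filter (fun i => 2 ≤ i.val) with hT
      have hTne : T.Nonempty := ⟨⟨2, by omega⟩, by simp [hT]⟩
      set V : Fin (m+2) → ℝ := fun i => Real.cos (φ 0 - φ i)*Real.cos (φ 1 - φ i)
        - Real.sin (φ 0 - φ i)*Real.sin (φ 1 - φ i) with hV
      rcases h with hall | hnone
      · -- all between : products negative, u < V i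
        have hlt : ∀ i ∈ T, Real.cos (φ 0 - φ 1) < V i := by
          intro i hiT
          have hi2 : 2 ≤ i.val := by simpa [hT] using hiT
          have hprod := (K2m_aux_sin_prod_neg_iff (hφmem 0) (hφmem 1) (hφmem i)
            (hφne 0 i (Ne.symm (hne0 i hi2))) (hφne 1 i (Ne.symm (hne1 i hi2)))).mpr (hall i hi2)
          have := hcos01 i
          simp only [hV]
          linarith
        have h1 : Real.cos (φ 0 - φ 1) < T.inf' hTne V := (Finset.lt_inf'_iff hTne).mpr hlt
        obtain ⟨i0, hi0T⟩ := id hTne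
        have h2 : T.inf' hTne V ≤ 1 := le_trans (Finset.inf'_le V hi0T) (hVbd i0).2
        have hs1 : (Real.cos (φ 0 - φ 1) + T.inf' hTne V)/2 < 1 := by linarith
        have hs2 : -1 < (Real.cos (φ 0 - φ 1) + T.inf' hTne V)/2 := by linarith
        refine ⟨(Real.cos (φ 0 - φ 1) + T.inf' hTne V)/2, by nlinarith [hs1, hs2], ?_⟩
        intro i hi2
        have hiT : i ∈ T := by simp [hT, hi2]
        have hprod := (K2m_aux_sin_prod_neg_iff (hφmem 0) (hφmem 1) (hφmem i)
          (hφne 0 i (Ne.symm (hne0 i hi2))) (hφne 1 i (Ne.symm (hne1 i hi2)))).mpr (hall i hi2)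
        have hrlt : (Real.cos (φ 0 - φ 1) + T.inf' hTne V)/2 < V i :=
          lt_of_lt_of_le (by linarith) (Finset.inf'_le V hiT)
        have hVi : V i = Real.cos (φ 0 - φ i)*Real.cos (φ 1 - φ i)
          - Real.sin (φ 0 - φ i)*Real.sin (φ 1 - φ i) := rfl
        rw [hVi] at hrlt
        have hrgt : Real.cos (φ 0 - φ i)*Real.cos (φ 1 - φ i)
            + Real.sin (φ 0 - φ i)*Real.sin (φ 1 - φ i)
            < (Real.cos (φ 0 - φ 1) + T.inf' hTne V)/2 := by
          linarith [hcos01 i]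
        nlinarith [hsq i, hrlt, hrgt]
      · -- none between : products positive, V i < u
        have hlt : ∀ i ∈ T, V i < Real.cos (φ 0 - φ 1) := by
          intro i hiT
          have hi2 : 2 ≤ i.val := by simpa [hT] using hiT
          have hne : Real.sin (φ 0 - φ i) * Real.sin (φ 1 - φ i) ≠ 0 :=
            mul_ne_zero (hsinne 0 i (Ne.symm (hne0 i hi2))) (hsinne 1 i (Ne.symm (hne1 i hi2)))
          have hprod : 0 < Real.sin (φ 0 - φ i) * Real.sin (φ 1 - φ i) := by
            rcases hne.lt_or_gt with hlt' | hlt'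
            · exact absurd ((K2m_aux_sin_prod_neg_iff (hφmem 0) (hφmem 1) (hφmem i)
                (hφne 0 i (Ne.symm (hne0 i hi2))) (hφne 1 i (Ne.symm (hne1 i hi2)))).mp hlt')
                (hnone i hi2)
            · exact hlt'
          have := hcos01 i
          simp only [hV]
          linarith
        have h1 : T.sup' hTne V < Real.cos (φ 0 - φ 1) := (Finset.sup'_lt_iff hTne).mpr hlt
        obtain ⟨i0, hi0T⟩ := id hTne
        have h2 : -1 ≤ T.sup' hTne V := le_trans (hVbd i0).1 (Finset.le_sup' V hi0T)
        have hs1 : (Real.cos (φ 0 - φ 1) + T.sup' hTne V)/2 < 1 := by linarith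
        have hs2 : -1 < (Real.cos (φ 0 - φ 1) + T.sup' hTne V)/2 := by linarith
        refine ⟨(Real.cos (φ 0 - φ 1) + T.sup' hTne V)/2, by nlinarith [hs1, hs2], ?_⟩
        intro i hi2
        have hiT : i ∈ T := by simp [hT, hi2]
        have hne : Real.sin (φ 0 - φ i) * Real.sin (φ 1 - φ i) ≠ 0 :=
          mul_ne_zero (hsinne 0 i (Ne.symm (hne0 i hi2))) (hsinne 1 i (Ne.symm (hne1 i hi2)))
        have hprod : 0 < Real.sin (φ 0 - φ i) * Real.sin (φ 1 - φ i) := by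
          rcases hne.lt_or_gt with hlt' | hlt'
          · exact absurd ((K2m_aux_sin_prod_neg_iff (hφmem 0) (hφmem 1) (hφmem i)
              (hφne 0 i (Ne.symm (hne0 i hi2))) (hφne 1 i (Ne.symm (hne1 i hi2)))).mp hlt')
              (hnone i hi2)
          · exact hlt'
        have hrgt : V i < (Real.cos (φ 0 - φ 1) + T.sup' hTne V)/2 :=
          lt_of_le_of_lt (Finset.le_sup' V hiT) (by linarith)
        have hVi : V i = Real.cos (φ 0 - φ i)*Real.cos (φ 1 - φ i)
          - Real.sin (φ 0 - φ i)*Real.sin (φ 1 - φ i) := rfl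
        rw [hVi] at hrgt
        have hrlt : (Real.cos (φ 0 - φ 1) + T.sup' hTne V)/2
            < Real.cos (φ 0 - φ i)*Real.cos (φ 1 - φ i)
            + Real.sin (φ 0 - φ i)*Real.sin (φ 1 - φ i) := by
          linarith [hcos01 i]
        nlinarith [hsq i, hrlt, hrgt]
    -- Step 2: the construction
    have h1r : 0 < 1 - r^2 := by nlinarith
    set q : ℝ := Real.sqrt (1 - r^2) with hqdef
    have hq : 0 < q := Real.sqrt_pos.mpr h1r
    have hq2 : q^2 = 1 - r^2 := Real.sq_sqrt (le_of_lt h1r)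
    set y : Fin (m+2) → Fin 2 → ℝ := fun k =>
      if k = 0 then ![c 0, 0] else if k = 1 then ![c 1 * r, c 1 * q]
      else ![c k * Real.cos (φ 0 - φ k), c k * ((Real.cos (φ 1 - φ k) - Real.cos (φ 0 - φ k) * r)/q)] with hy
    set e : Fin (m+2) → ℝ := fun k =>
      if 2 ≤ k.val then
        c k^2 * (1 - Real.cos (φ 0 - φ k)^2 - ((Real.cos (φ 1 - φ k) - Real.cos (φ 0 - φ k) * r)/q)^2)
      else 0 with he
    have hepos : ∀ k : Fin (m+2), 2 ≤ k.val →
        0 < c k^2 * (1 - Real.cos (φ 0 - φ k)^2 - ((Real.cos (φ 1 - φ k) - Real.cos (φ 0 - φ k) * r)/q)^2) := by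
      intro k hk
      have hw : ((Real.cos (φ 1 - φ k) - Real.cos (φ 0 - φ k) * r)/q)^2
          = (Real.cos (φ 1 - φ k) - Real.cos (φ 0 - φ k) * r)^2 / (1 - r^2) := by
        rw [div_pow, hq2]
      have hltq : (Real.cos (φ 1 - φ k) - Real.cos (φ 0 - φ k) * r)^2 / (1 - r^2)
          < 1 - Real.cos (φ 0 - φ k)^2 := by
        rw [div_lt_iff₀ h1r]
        nlinarith [hf k hk]
      have hpos : 0 < 1 - Real.cos (φ 0 - φ k)^2
          - ((Real.cos (φ 1 - φ k) - Real.cos (φ 0 - φ k) * r)/q)^2 := by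
        rw [hw]; linarith
      have hck := hc k
      have hc2 : 0 < c k^2 := by positivity
      exact mul_pos hc2 hpos
    refine ⟨Matrix.of (fun k l => y k ⬝ᵥ y l + if k = l then e k else 0), ?_, ?_, ?_⟩
    · apply K2m_aux_posdef_gram_diag
      · intro k
        by_cases hk : 2 ≤ k.val
        · simp only [he, if_pos hk]
          exact le_of_lt (hepos k hk)
        · simp only [he, if_neg hk]
          exact le_refl 0
      · intro k hk
        simp only [he, if_pos hk]
        exact hepos k hk
      · show (if (0:Fin (m+2)) = 0 then ![c 0, 0] else _) 1 = 0
        rw [if_pos rfl]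
        simp
      · show (if (0:Fin (m+2)) = 0 then ![c 0, 0] else _) 0 ≠ 0
        rw [if_pos rfl]
        simpa using hc 0
      · show (if (1:Fin (m+2)) = 0 then ![c 0, 0] else if (1:Fin (m+2)) = 1 then ![c 1 * r, c 1 * q] else _) 1 ≠ 0
        rw [if_neg (Ne.symm h01), if_pos rfl]
        simpa using mul_ne_zero (hc 1) (ne_of_gt hq)
    · intro k
      simp only [Matrix.of_apply, if_pos rfl]
      rw [hdot]
      simp only [sub_self, Real.cos_zero, mul_one]
      by_cases hk0 : k = 0
      · subst hk0
        have he0 : e 0 = 0 := by simp [he]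
        have hy0 : y 0 = ![c 0, 0] := by simp [hy]
        rw [he0, hy0]
        simp [dotProduct, Fin.sum_univ_two]
      · by_cases hk1 : k = 1
        · subst hk1
          have he1 : e 1 = 0 := by simp [he]
          have hy1 : y 1 = ![c 1 * r, c 1 * q] := by simp [hy, Ne.symm h01]
          rw [he1, hy1]
          simp [dotProduct, Fin.sum_univ_two]
          linear_combination (c 1)^2 * hq2
        · have hk2 : 2 ≤ k.val := by
            by_contra hcon
            push_neg at hcon
            rcases K2m_aux_finValLt2 k hcon with h' | h'
            · exact hk0 h'
            · exact hk1 h'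
          have hek : e k = c k^2 * (1 - Real.cos (φ 0 - φ k)^2
              - ((Real.cos (φ 1 - φ k) - Real.cos (φ 0 - φ k) * r)/q)^2) := by
            simp [he, hk2]
          have hyk : y k = ![c k * Real.cos (φ 0 - φ k),
              c k * ((Real.cos (φ 1 - φ k) - Real.cos (φ 0 - φ k) * r)/q)] := by
            simp [hy, hk0, hk1]
          rw [hek, hyk]
          simp [dotProduct, Fin.sum_univ_two]
          ring
    · -- edge entries
      have hmain : ∀ l : Fin (m+2), 2 ≤ l.val →
          y 0 ⬝ᵥ y l = x 0 ⬝ᵥ x l ∧ y 1 ⬝ᵥ y l = x 1 ⬝ᵥ x l := by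
        intro l hl
        have hl0 : l ≠ 0 := hne0 l hl
        have hl1 : l ≠ 1 := hne1 l hl
        have hy0 : y 0 = ![c 0, 0] := by simp [hy]
        have hy1 : y 1 = ![c 1 * r, c 1 * q] := by simp [hy, Ne.symm h01]
        have hyl : y l = ![c l * Real.cos (φ 0 - φ l),
            c l * ((Real.cos (φ 1 - φ l) - Real.cos (φ 0 - φ l) * r)/q)] := by
          simp [hy, hl0, hl1]
        constructor
        · rw [hdot, hy0, hyl]
          simp [dotProduct, Fin.sum_univ_two]
          ring
        · rw [hdot, hy1, hyl]
          simp only [dotProduct, Fin.sum_univ_two, Matrix.cons_val_zero, Matrix.cons_val_one,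
            Matrix.head_cons]
          field_simp
          ring
      intro k l hkl
      simp only [Matrix.of_apply]
      rcases hkl with ⟨hk, hl⟩ | ⟨hl, hk⟩
      · have hkl' : k ≠ l := by
          intro hh; subst hh; omega
        rw [if_neg hkl']
        rw [add_zero]
        rcases K2m_aux_finValLt2 k hk with rfl | rfl
        · exact (hmain l hl).1
        · exact (hmain l hl).2
      · have hkl' : k ≠ l := by
          intro hh; subst hh; omega
        rw [if_neg hkl']
        rw [add_zero, dotProduct_comm]
        rw [show x k ⬝ᵥ x l = x l ⬝ᵥ x k from dotProduct_comm _ _]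
        rcases K2m_aux_finValLt2 l hl with rfl | rfl
        · exact (hmain k hk).1
        · exact (hmain k hk).2
end

section
/- Let m ≥ 1 and let θ_{1i}, θ_{2i} ∈ (0, π) for each i ∈ {3,…,m+2}. There exists ρ ∈ (0, π) such that for every i ∈ {3,…,m+2} the 3×3 matrix [[1, cos ρ, cos θ_{1i}], [cos ρ, 1, cos θ_{2i}], [cos θ_{1i}, cos θ_{2i}, 1]] is positive definite, if and only if for all a ∈ {1,2} and all i, j ∈ {3,…,m+2} one has 2θ_{ai} < θ_{1i} + θ_{2i} + θ_{1j} + θ_{2j} < 2π + 2θ_{ai}. -/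
open Real

/-!
Key inequality characterization in the proof for `K_{2,m}`: given angles
`θ a i ∈ (0, π)` for `a ∈ {0,1}` (corresponding to the two distinguished vertices)
and `i` ranging over the `m` other vertices, there is a single `ρ ∈ (0, π)` making
all matrices `[[1, cos ρ, cos (θ 0 i)], [cos ρ, 1, cos (θ 1 i)],
[cos (θ 0 i), cos (θ 1 i), 1]]` positive definite if and only if
`2·θ a i < θ 0 i + θ 1 i + θ 0 j + θ 1 j < 2π + 2·θ a i` for all `a, i, j`.
-/

lemma myPosDef_iff (p a b : ℝ) (hp : p^2 < 1) :
    (!![1,p,a; p,1,b; a,b,1] : Matrix (Fin 3) (Fin 3) ℝ).PosDef ↔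
      0 < 1 + 2*p*a*b - p^2 - a^2 - b^2 := by
  constructor
  · intro h
    have hd := h.det_pos
    rw [Matrix.det_fin_three] at hd
    norm_num [Matrix.cons_val_zero, Matrix.cons_val_one, Matrix.head_cons,
      Matrix.cons_val_two, Matrix.tail_cons] at hd
    nlinarith [hd]
  · intro hD
    refine Matrix.PosDef.of_dotProduct_mulVec_pos ?_ ?_
    · ext i j
      fin_cases i <;> fin_cases j <;>
        simp [Matrix.conjTranspose_apply]
    · intro x hx
      have hexp : dotProduct (star x) ((!![1,p,a; p,1,b; a,b,1] : Matrix (Fin 3) (Fin 3) ℝ).mulVec x)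
          = x 0 ^ 2 + x 1 ^ 2 + x 2 ^ 2 + 2*p*(x 0)*(x 1) + 2*a*(x 0)*(x 2) + 2*b*(x 1)*(x 2) := by
        simp [dotProduct, Matrix.mulVec, Fin.sum_univ_three]
        ring
      rw [hexp]
      have h1 : (0:ℝ) < 1 - p^2 := by linarith
      by_cases h2 : x 2 = 0
      · by_cases h3 : x 1 = 0
        · have h4 : x 0 ≠ 0 := by
            intro h0
            apply hx
            funext k
            fin_cases k <;> simp [h0, h3, h2]
          rw [h2, h3]
          have : (0:ℝ) < x 0 ^ 2 := by positivity
          nlinarith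
        · rw [h2]
          have : (0:ℝ) < x 1 ^ 2 := by positivity
          nlinarith [sq_nonneg (x 0 + p * x 1), mul_pos h1 this, sq_nonneg p]
      · have h5 : (0:ℝ) < x 2 ^ 2 := by positivity
        nlinarith [sq_nonneg (x 0 + p * x 1 + a * x 2),
          sq_nonneg ((1 - p^2) * x 1 + (b - p*a) * x 2), mul_pos hD h5, h1,
          mul_pos h1 (mul_pos hD h5)]

lemma my_cos_lt_cos_iff {x y : ℝ} (hx : x ∈ Set.Icc 0 π) (hy : y ∈ Set.Icc 0 π) :
    cos x < cos y ↔ y < x :=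
  Real.strictAntiOn_cos.lt_iff_gt hx hy

lemma my_cos_gt_iff {ρ s : ℝ} (hρ : ρ ∈ Set.Ioo 0 π) (hs0 : 0 < s) (hs2 : s < 2*π) :
    cos s < cos ρ ↔ ρ < s ∧ ρ < 2*π - s := by
  have hπ := pi_pos
  rcases le_or_gt s π with h | h
  · rw [my_cos_lt_cos_iff ⟨hs0.le, h⟩ ⟨hρ.1.le, hρ.2.le⟩]
    constructor
    · intro h'; exact ⟨h', by linarith [hρ.2]⟩
    · intro h'; exact h'.1
  · have : cos s = cos (2*π - s) := by
      rw [Real.cos_two_pi_sub]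
    rw [this, my_cos_lt_cos_iff ⟨by linarith, by linarith⟩ ⟨hρ.1.le, hρ.2.le⟩]
    constructor
    · intro h'; exact ⟨by linarith [hρ.2], h'⟩
    · intro h'; exact h'.2

lemma posDef_angle_iff (α β ρ : ℝ) (hα : α ∈ Set.Ioo 0 π) (hβ : β ∈ Set.Ioo 0 π)
    (hρ : ρ ∈ Set.Ioo 0 π) :
    (!![1, cos ρ, cos α; cos ρ, 1, cos β; cos α, cos β, 1] : Matrix (Fin 3) (Fin 3) ℝ).PosDef ↔
      |α - β| < ρ ∧ ρ < α + β ∧ ρ < 2*π - (α + β) := by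
  have hπ := pi_pos
  obtain ⟨hα1, hα2⟩ := hα
  obtain ⟨hβ1, hβ2⟩ := hβ
  have hsρ : 0 < sin ρ := sin_pos_of_pos_of_lt_pi hρ.1 hρ.2
  have hsα : 0 < sin α := sin_pos_of_pos_of_lt_pi hα1 hα2
  have hsβ : 0 < sin β := sin_pos_of_pos_of_lt_pi hβ1 hβ2
  have hp : cos ρ ^ 2 < 1 := by nlinarith [sin_sq_add_cos_sq ρ]
  rw [myPosDef_iff _ _ _ hp]
  have hfact : 1 + 2*(cos ρ)*(cos α)*(cos β) - cos ρ^2 - cos α^2 - cos β^2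
      = (cos (α - β) - cos ρ) * (cos ρ - cos (α + β)) := by
    rw [cos_sub, cos_add]
    linear_combination (cos β ^ 2 - 1) * sin_sq_add_cos_sq α - sin α ^ 2 * sin_sq_add_cos_sq β
  have hsep : cos (α + β) < cos (α - β) := by
    rw [cos_sub, cos_add]; nlinarith [mul_pos hsα hsβ]
  have habs : cos (α - β) = cos |α - β| := (Real.cos_abs _).symm
  have habs_mem : |α - β| ∈ Set.Icc 0 π := by
    constructor
    · exact abs_nonneg _
    · rw [abs_le]; exact ⟨by linarith, by linarith⟩
  have hiff1 : cos ρ < cos (α - β) ↔ |α - β| < ρ := by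
    rw [habs, my_cos_lt_cos_iff ⟨hρ.1.le, hρ.2.le⟩ habs_mem]
  have hiff2 : cos (α + β) < cos ρ ↔ ρ < α + β ∧ ρ < 2*π - (α + β) :=
    my_cos_gt_iff hρ (by linarith) (by linarith)
  constructor
  · intro h
    rw [hfact] at h
    have hpos1 : 0 < cos (α - β) - cos ρ := by nlinarith
    have hpos2 : 0 < cos ρ - cos (α + β) := by nlinarith
    obtain ⟨h2a, h2b⟩ := hiff2.mp (by linarith)
    exact ⟨hiff1.mp (by linarith), h2a, h2b⟩
  · rintro ⟨h1, h2, h3⟩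
    rw [hfact]
    have hpos1 : cos ρ < cos (α - β) := hiff1.mpr h1
    have hpos2 : cos (α + β) < cos ρ := hiff2.mpr ⟨h2, h3⟩
    nlinarith

theorem exists_rho_posDef_iff {m : ℕ} (hm : 1 ≤ m) (θ : Fin 2 → Fin m → ℝ)
    (hθ : ∀ (a : Fin 2) (i : Fin m), θ a i ∈ Set.Ioo 0 π) :
    (∃ ρ ∈ Set.Ioo (0 : ℝ) π, ∀ i : Fin m,
      (!![1, cos ρ, cos (θ 0 i);
          cos ρ, 1, cos (θ 1 i);
          cos (θ 0 i), cos (θ 1 i), 1] : Matrix (Fin 3) (Fin 3) ℝ).PosDef) ↔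
    (∀ (a : Fin 2) (i j : Fin m),
      2 * θ a i < θ 0 i + θ 1 i + θ 0 j + θ 1 j ∧
      θ 0 i + θ 1 i + θ 0 j + θ 1 j < 2 * π + 2 * θ a i) := by
  have hπ := pi_pos
  set S : Fin m → ℝ := fun i => θ 0 i + θ 1 i with hS
  set Δ : Fin m → ℝ := fun i => |θ 0 i - θ 1 i| with hΔ
  constructor
  · rintro ⟨ρ, hρ, h⟩ a i j
    obtain ⟨hi1, hi2, hi3⟩ := (posDef_angle_iff _ _ _ (hθ 0 i) (hθ 1 i) hρ).mp (h i)
    obtain ⟨hj1, hj2, hj3⟩ := (posDef_angle_iff _ _ _ (hθ 0 j) (hθ 1 j) hρ).mp (h j)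
    have hi1' := abs_lt.mp hi1
    fin_cases a <;> constructor <;>
      simp only [Fin.isValue, Fin.mk_zero, Fin.mk_one] <;> linarith [hi1'.1, hi1'.2]
  · intro h
    have hΔS : ∀ i j, Δ i < S j ∧ Δ i < 2*π - S j := by
      intro i j
      have h0 := h 0 i j
      have h1 := h 1 i j
      simp only [hΔ, hS]
      constructor
      · rw [abs_lt]
        exact ⟨by linarith [h1.1], by linarith [h0.1]⟩
      · rw [abs_lt]
        exact ⟨by linarith [h0.2], by linarith [h1.2]⟩
    haveI : Nonempty (Fin m) := ⟨⟨0, hm⟩⟩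
    have hne : (Finset.univ : Finset (Fin m)).Nonempty := Finset.univ_nonempty
    set L := Finset.univ.sup' hne Δ with hL
    set U := Finset.univ.inf' hne (fun i => min (S i) (2*π - S i)) with hU
    obtain ⟨i0, _, hLe⟩ := Finset.exists_mem_eq_sup' hne Δ
    obtain ⟨j0, _, hUe⟩ := Finset.exists_mem_eq_inf' hne (fun i => min (S i) (2*π - S i))
    have hLe' : L = Δ i0 := hLe
    have hUe' : U = min (S j0) (2*π - S j0) := hUe
    have hLU : L < U := by
      rw [hLe', hUe']
      exact lt_min (hΔS i0 j0).1 (hΔS i0 j0).2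
    have hL0 : 0 ≤ L := le_trans (abs_nonneg _) (Finset.le_sup' Δ (Finset.mem_univ i0))
    have hUπ : U ≤ π := by
      refine le_trans (Finset.inf'_le _ (Finset.mem_univ j0)) ?_
      rcases le_total (S j0) π with h' | h'
      · exact le_trans (min_le_left _ _) h'
      · exact le_trans (min_le_right _ _) (by linarith)
    refine ⟨(L + U) / 2, ⟨by linarith, by linarith⟩, fun i => ?_⟩
    rw [posDef_angle_iff _ _ _ (hθ 0 i) (hθ 1 i) ⟨by linarith, by linarith⟩]
    have h1 : Δ i ≤ L := Finset.le_sup' Δ (Finset.mem_univ i)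
    have h1' : |θ 0 i - θ 1 i| ≤ L := h1
    have h2 : U ≤ min (S i) (2*π - S i) := Finset.inf'_le _ (Finset.mem_univ i)
    obtain ⟨h2a, h2b⟩ := le_min_iff.mp h2
    have h2a' : U ≤ θ 0 i + θ 1 i := h2a
    have h2b' : U ≤ 2*π - (θ 0 i + θ 1 i) := h2b
    exact ⟨by linarith, by linarith, by linarith⟩
end

section
/- Let m ≥ 1, let A = {1,2} and B = {3,…,m+2}, and let Σ be a positive definite real (m+2)×(m+2) matrix with Σ₁₁ = Σ₂₂ = 1 and Σ₁₂ = y (so y² < 1). Suppose the inverse K = Σ⁻¹ satisfies K_{ij} = 0 for all i ≠ j with i, j ∈ B (i.e., the B×B block of K is diagonal). Then for all i ≠ j in B, Σ_{ij} = (Σ_{1i}Σ_{1j} + Σ_{2i}Σ_{2j} − y(Σ_{1i}Σ_{2j} + Σ_{1j}Σ_{2i}))/(1 − y²). -/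
/-!
Key computation in the ML-degree result for `K_{2,m}`: let `A = {0, 1}` and
`B = {2, …, m+1}`.  If `Sigma` is positive definite with `Sigma 0 0 = Sigma 1 1 = 1`
and `y = Sigma 0 1`, and its inverse `K = Sigma⁻¹` has diagonal `B × B` block
(`K i j = 0` for distinct `i, j ∈ B`), then for all distinct `i, j ∈ B`:
`Sigma i j = (Sigma 0 i * Sigma 0 j + Sigma 1 i * Sigma 1 j
  − y * (Sigma 0 i * Sigma 1 j + Sigma 0 j * Sigma 1 i)) / (1 − y²)`.
-/

theorem schur_diag_entries {m : ℕ} (hm : 1 ≤ m)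
    (Sigma : Matrix (Fin (m + 2)) (Fin (m + 2)) ℝ) (hpd : Sigma.PosDef)
    (h00 : Sigma 0 0 = 1) (h11 : Sigma 1 1 = 1)
    (hK : ∀ i j : Fin (m + 2), 2 ≤ i.val → 2 ≤ j.val → i ≠ j → Sigma⁻¹ i j = 0) :
    ∀ i j : Fin (m + 2), 2 ≤ i.val → 2 ≤ j.val → i ≠ j →
      Sigma i j =
        (Sigma 0 i * Sigma 0 j + Sigma 1 i * Sigma 1 j -
          Sigma 0 1 * (Sigma 0 i * Sigma 1 j + Sigma 0 j * Sigma 1 i)) /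
        (1 - Sigma 0 1 ^ 2) := by
  intro i j hi hj hij
  have hsym : ∀ a b : Fin (m + 2), Sigma a b = Sigma b a := fun a b => by
    simpa using hpd.isHermitian.apply b a
  set y := Sigma 0 1 with hy
  -- `1 - y ^ 2 > 0` from the quadratic form on `e₀ - y e₁`
  have h01 : (0 : Fin (m + 2)) ≠ 1 := by simp [Fin.ext_iff]
  have h0j : (0 : Fin (m + 2)) ≠ j := by simp [Fin.ext_iff]; omega
  have h1j : (1 : Fin (m + 2)) ≠ j := by simp [Fin.ext_iff]; omega
  have h1y : (0 : ℝ) < 1 - y ^ 2 := by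
    classical
    set v : Fin (m + 2) → ℝ := fun k => if k = 0 then 1 else if k = 1 then -y else 0 with hv
    have hvne : v ≠ 0 := by
      intro h
      have : v 0 = 0 := by rw [h]; rfl
      simp [hv] at this
    have hq := hpd.dotProduct_mulVec_pos hvne
    have hmv : ∀ a : Fin (m + 2), (Sigma.mulVec v) a = Sigma a 0 - y * Sigma a 1 := by
      intro a
      have : ∀ k : Fin (m + 2), k ∉ ({0, 1} : Finset (Fin (m + 2))) → Sigma a k * v k = 0 := by
        intro k hk
        simp only [Finset.mem_insert, Finset.mem_singleton, not_or] at hk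
        simp [hv, hk.1, hk.2]
      calc (Sigma.mulVec v) a = ∑ k : Fin (m + 2), Sigma a k * v k := rfl
        _ = ∑ k ∈ ({0, 1} : Finset (Fin (m + 2))), Sigma a k * v k :=
            (Finset.sum_subset (Finset.subset_univ _) (fun x _ hx => this x hx)).symm
        _ = Sigma a 0 * v 0 + Sigma a 1 * v 1 := Finset.sum_pair h01
        _ = Sigma a 0 - y * Sigma a 1 := by simp [hv, h01.symm]; ring
    have hd : dotProduct (star v) (Sigma.mulVec v)
        = v 0 * (Sigma 0 0 - y * Sigma 0 1) + v 1 * (Sigma 1 0 - y * Sigma 1 1) := by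
      have : ∀ k : Fin (m + 2), k ∉ ({0, 1} : Finset (Fin (m + 2))) →
          v k * (Sigma.mulVec v) k = 0 := by
        intro k hk
        simp only [Finset.mem_insert, Finset.mem_singleton, not_or] at hk
        simp [hv, hk.1, hk.2]
      calc dotProduct (star v) (Sigma.mulVec v)
          = ∑ k : Fin (m + 2), v k * (Sigma.mulVec v) k := by
            simp [dotProduct]
        _ = ∑ k ∈ ({0, 1} : Finset (Fin (m + 2))), v k * (Sigma.mulVec v) k :=
            (Finset.sum_subset (Finset.subset_univ _) (fun x _ hx => this x hx)).symm
        _ = v 0 * (Sigma.mulVec v) 0 + v 1 * (Sigma.mulVec v) 1 := Finset.sum_pair h01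
        _ = _ := by rw [hmv 0, hmv 1]
    rw [hd] at hq
    have hv0 : v 0 = 1 := by simp [hv]
    have hv1 : v 1 = -y := by simp [hv, h01.symm]
    rw [hv0, hv1, h00, h11, ← hy, hsym 1 0, ← hy] at hq
    nlinarith [hq]
  -- diagonal entry of the inverse is positive
  have hKjj : 0 < Sigma⁻¹ j j := by
    have h := hpd.inv.dotProduct_mulVec_pos (x := Pi.single j 1) (by simp [Function.ne_iff])
    simpa [Matrix.mulVec_single, dotProduct, Pi.single_apply] using h
  -- row equations from `Sigma * Sigma⁻¹ = 1`
  have hmul : Sigma * Sigma⁻¹ = 1 := Matrix.mul_nonsing_inv _ hpd.det_pos.ne'.isUnit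
  have hrow : ∀ a : Fin (m + 2), a ≠ j →
      Sigma a 0 * Sigma⁻¹ 0 j + Sigma a 1 * Sigma⁻¹ 1 j + Sigma a j * Sigma⁻¹ j j = 0 := by
    intro a ha
    have h1 : (Sigma * Sigma⁻¹) a j = (1 : Matrix (Fin (m + 2)) (Fin (m + 2)) ℝ) a j := by
      rw [hmul]
    rw [Matrix.mul_apply, Matrix.one_apply_ne ha] at h1
    have hz : ∀ k : Fin (m + 2), k ∉ ({0, 1, j} : Finset (Fin (m + 2))) →
        Sigma a k * Sigma⁻¹ k j = 0 := by
      intro k hk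
      simp only [Finset.mem_insert, Finset.mem_singleton, not_or] at hk
      have hk2 : 2 ≤ k.val := by
        have hk0 : k.val ≠ 0 := fun h => hk.1 (Fin.ext (by simpa using h))
        have hk1 : k.val ≠ 1 := fun h => hk.2.1 (Fin.ext (by simpa using h))
        omega
      rw [hK k j hk2 hj hk.2.2, mul_zero]
    have hsum : ∑ k : Fin (m + 2), Sigma a k * Sigma⁻¹ k j
        = ∑ k ∈ ({0, 1, j} : Finset (Fin (m + 2))), Sigma a k * Sigma⁻¹ k j :=
      (Finset.sum_subset (Finset.subset_univ _) (fun x _ hx => hz x hx)).symm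
    rw [hsum] at h1
    rw [Finset.sum_insert (by simp [h01, h0j]), Finset.sum_insert (by simp [h1j]),
      Finset.sum_singleton] at h1
    linarith [h1]
  have hij' : i ≠ j := hij
  have e0 := hrow 0 h0j
  have e1 := hrow 1 h1j
  have ei := hrow i hij'
  rw [h00, ← hy] at e0
  rw [hsym 1 0, ← hy, h11] at e1
  rw [hsym i 0, hsym i 1] at ei
  rw [eq_div_iff (ne_of_gt h1y)]
  apply mul_right_cancel₀ (ne_of_gt hKjj)
  linear_combination (1 - y ^ 2) * ei - Sigma 0 i * e0 + y * Sigma 0 i * e1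
    - Sigma 1 i * e1 + y * Sigma 1 i * e0
end

section
/- Let X₁, X₂, X₃, X₄ be independent real Gaussian random variables with mean zero, where X₁ and X₂ have common variance σ² > 0 and X₃ and X₄ have common variance τ² > 0. Then the probability of the event { (|X₁| > |X₂| and |X₃| > |X₄|) or (|X₁| < |X₂| and |X₃| < |X₄|) } equals 1/2. (Hence, in the Frets's heads colored Gaussian graphical model, if the true covariance matrix Σ is diagonal, the MLE exists with probability exactly 0.5 for one observation.) -/
open MeasureTheory ProbabilityTheory

/-- Auxiliary: in a product of four probability measures on `ℝ` all of whose
singletons are null, the set where coordinate `i` equals `f` of coordinate `j`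
(for `i ≠ j`) is null. -/
lemma pi_null_eval_eq (ν : Fin 4 → Measure ℝ) [∀ i, IsProbabilityMeasure (ν i)]
    (hν : ∀ i a, ν i {a} = 0) (i j : Fin 4) (hij : j ≠ i) (f : ℝ → ℝ)
    (hf : Measurable f) :
    Measure.pi ν {x : Fin 4 → ℝ | x i = f (x j)} = 0 := by
  obtain ⟨k, hk⟩ := Fin.exists_succAbove_eq hij
  set s : Set (ℝ × (Fin 3 → ℝ)) := {p | p.1 = f (p.2 k)} with hs_def
  have hs : MeasurableSet s :=
    measurableSet_eq_fun measurable_fst (hf.comp ((measurable_pi_apply k).comp measurable_snd))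
  have hpre : (MeasurableEquiv.piFinSuccAbove (fun _ => ℝ) i) ⁻¹' s
      = {x : Fin 4 → ℝ | x i = f (x j)} := by
    ext x
    show x i = f (Fin.removeNth i x k) ↔ x i = f (x j)
    simp [s, MeasurableEquiv.piFinSuccAbove, Fin.removeNth, hk]
  have mp := measurePreserving_piFinSuccAbove ν i
  calc Measure.pi ν {x : Fin 4 → ℝ | x i = f (x j)}
      = ((ν i).prod (Measure.pi fun m => ν (i.succAbove m))) s := by
        rw [← hpre]; exact mp.measure_preimage hs.nullMeasurableSet
    _ = ∫⁻ y, (ν i) ((fun a => (a, y)) ⁻¹' s) ∂(Measure.pi fun m => ν (i.succAbove m)) :=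
        Measure.prod_apply_symm hs
    _ = 0 := by
        have : ∀ y : Fin 3 → ℝ, (ν i) ((fun a => (a, y)) ⁻¹' s) = 0 := by
          intro y
          have : ((fun a => (a, y)) ⁻¹' s) = {f (y k)} := by
            ext a; simp [s]
          rw [this]; exact hν i _
        simp [this]

theorem frets_heads_diagonal_probability (v₁ v₂ : NNReal)
    (hv₁ : 0 < v₁) (hv₂ : 0 < v₂) :
    (Measure.pi fun i : Fin 4 =>
        gaussianReal 0 (if i.val < 2 then v₁ else v₂))
      {x : Fin 4 → ℝ |
        (|x 0| > |x 1| ∧ |x 2| > |x 3|) ∨ (|x 0| < |x 1| ∧ |x 2| < |x 3|)} =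
    1 / 2 := by
  set ν : Fin 4 → Measure ℝ :=
    fun i => gaussianReal 0 (if i.val < 2 then v₁ else v₂) with hν_def
  set μ : Measure (Fin 4 → ℝ) := Measure.pi ν with hμ_def
  have hprob : ∀ i, IsProbabilityMeasure (ν i) := fun i => by
    simp only [hν_def]; infer_instance
  have hatom : ∀ i (a : ℝ), ν i {a} = 0 := by
    intro i a
    have hv : (if i.val < 2 then v₁ else v₂) ≠ 0 := by
      split <;> [exact hv₁.ne' ; exact hv₂.ne']
    exact gaussianReal_absolutelyContinuous 0 hv Real.volume_singleton
  set E : Set (Fin 4 → ℝ) :=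
    {x | (|x 0| > |x 1| ∧ |x 2| > |x 3|) ∨ (|x 0| < |x 1| ∧ |x 2| < |x 3|)} with hE_def
  set F : Set (Fin 4 → ℝ) :=
    {x | (|x 1| > |x 0| ∧ |x 2| > |x 3|) ∨ (|x 1| < |x 0| ∧ |x 2| < |x 3|)} with hF_def
  have habs : Measurable fun x : Fin 4 → ℝ => |x 0| := (measurable_pi_apply 0).abs
  have hE : MeasurableSet E := by
    apply MeasurableSet.union <;> apply MeasurableSet.inter <;>
      exact measurableSet_lt ((measurable_pi_apply _).abs) ((measurable_pi_apply _).abs)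
  have hF : MeasurableSet F := by
    apply MeasurableSet.union <;> apply MeasurableSet.inter <;>
      exact measurableSet_lt ((measurable_pi_apply _).abs) ((measurable_pi_apply _).abs)
  -- the swap of coordinates 0 and 1 is measure preserving and maps E onto F
  have hνswap : (fun i => ν (Equiv.swap (0 : Fin 4) 1 i)) = ν := by
    funext i
    fin_cases i <;> simp [hν_def, Equiv.swap_apply_of_ne_of_ne]
  have mp : MeasurePreserving
      (MeasurableEquiv.piCongrLeft (fun _ : Fin 4 => ℝ) (Equiv.swap (0 : Fin 4) 1)) μ μ := by
    have := measurePreserving_piCongrLeft (μ := ν) (Equiv.swap (0 : Fin 4) 1)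
    rwa [hνswap] at this
  have hpre : (MeasurableEquiv.piCongrLeft (fun _ : Fin 4 => ℝ) (Equiv.swap (0 : Fin 4) 1))
      ⁻¹' F = E := by
    ext x
    have h0 : (Equiv.piCongrLeft (fun _ : Fin 4 => ℝ) (Equiv.swap (0 : Fin 4) 1)) x 0 = x 1 := by
      have := Equiv.piCongrLeft_apply_apply (P := fun _ : Fin 4 => ℝ)
        (e := Equiv.swap (0 : Fin 4) 1) x 1
      simpa using this
    have h1 : (Equiv.piCongrLeft (fun _ : Fin 4 => ℝ) (Equiv.swap (0 : Fin 4) 1)) x 1 = x 0 := by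
      have := Equiv.piCongrLeft_apply_apply (P := fun _ : Fin 4 => ℝ)
        (e := Equiv.swap (0 : Fin 4) 1) x 0
      simpa using this
    have h2 : (Equiv.piCongrLeft (fun _ : Fin 4 => ℝ) (Equiv.swap (0 : Fin 4) 1)) x 2 = x 2 := by
      have := Equiv.piCongrLeft_apply_apply (P := fun _ : Fin 4 => ℝ)
        (e := Equiv.swap (0 : Fin 4) 1) x 2
      simpa [Equiv.swap_apply_of_ne_of_ne] using this
    have h3 : (Equiv.piCongrLeft (fun _ : Fin 4 => ℝ) (Equiv.swap (0 : Fin 4) 1)) x 3 = x 3 := by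
      have := Equiv.piCongrLeft_apply_apply (P := fun _ : Fin 4 => ℝ)
        (e := Equiv.swap (0 : Fin 4) 1) x 3
      simpa [Equiv.swap_apply_of_ne_of_ne] using this
    simp only [hE_def, hF_def, Set.mem_preimage, Set.mem_setOf_eq,
      MeasurableEquiv.coe_piCongrLeft, h0, h1, h2, h3]
  have hEF : μ E = μ F := by
    rw [← hpre]; exact mp.measure_preimage hF.nullMeasurableSet
  -- the complement of E ∪ F is null
  have hN : μ (E ∪ F)ᶜ = 0 := by
    have hsub : (E ∪ F)ᶜ ⊆ ({x : Fin 4 → ℝ | x 0 = x 1} ∪ {x | x 0 = -x 1}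
        ∪ ({x | x 2 = x 3} ∪ {x | x 2 = -x 3})) := by
      intro x hx
      simp only [hE_def, hF_def, Set.mem_compl_iff, Set.mem_union, Set.mem_setOf_eq] at hx ⊢
      have key : |x 0| = |x 1| ∨ |x 2| = |x 3| := by
        by_contra hc
        push_neg at hc
        obtain ⟨hc1, hc2⟩ := hc
        rcases hc1.lt_or_gt with h | h <;> rcases hc2.lt_or_gt with h' | h'
        · exact hx (Or.inl (Or.inr ⟨h, h'⟩))
        · exact hx (Or.inr (Or.inl ⟨h, h'⟩))
        · exact hx (Or.inr (Or.inr ⟨h, h'⟩))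
        · exact hx (Or.inl (Or.inl ⟨h, h'⟩))
      rcases key with h | h
      · left
        rcases abs_eq_abs.mp h with h'' | h''
        exacts [Or.inl h'', Or.inr h'']
      · right
        rcases abs_eq_abs.mp h with h'' | h''
        exacts [Or.inl h'', Or.inr h'']
    refine measure_mono_null hsub ?_
    haveI := hprob
    refine measure_union_null (measure_union_null ?_ ?_) (measure_union_null ?_ ?_)
    · exact pi_null_eval_eq ν hatom 0 1 (by decide) id measurable_id
    · exact pi_null_eval_eq ν hatom 0 1 (by decide) (fun a => -a) measurable_neg
    · exact pi_null_eval_eq ν hatom 2 3 (by decide) id measurable_id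
    · exact pi_null_eval_eq ν hatom 2 3 (by decide) (fun a => -a) measurable_neg
  have hdisj : Disjoint E F := by
    rw [Set.disjoint_left]
    intro x hx hx'
    simp only [hE_def, hF_def, Set.mem_setOf_eq] at hx hx'
    rcases hx with ⟨h1, h2⟩ | ⟨h1, h2⟩ <;> rcases hx' with ⟨h1', h2'⟩ | ⟨h1', h2'⟩
    · exact absurd h1' (lt_asymm h1)
    · exact absurd h2' (lt_asymm h2)
    · exact absurd h2' (lt_asymm h2)
    · exact absurd h1' (lt_asymm h1)
  haveI : IsProbabilityMeasure μ := by
    haveI := hprob; exact MeasureTheory.Measure.pi.instIsProbabilityMeasure ν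
  have hunion : μ E + μ F = 1 := by
    rw [← measure_union hdisj hF]
    have := measure_add_measure_compl (μ := μ) (hE.union hF)
    rw [hN, add_zero, measure_univ] at this
    exact this
  rw [hEF] at hunion
  have h2 : (2 : ENNReal) * μ F = 1 := by rw [two_mul]; exact hunion
  have : μ F = 1 / 2 := by
    rw [ENNReal.eq_div_iff (by norm_num) (by norm_num)]
    exact h2
  rw [hEF]
  exact this
end
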